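/- arXiv:1211.0997 — 10 statements merged into one kernel-verified Lean document; each statement's English description precedes it below -/
import Mathlib

section
/- If p is a real polynomial in n variables (n ≥ 2) such that p(x)·(x₁+⋯+xₙ) has only nonnegative coefficients, and p has at least one negative coefficient, then p has at least n positive coefficients (i.e., at least n monomials appear in p with positive coefficient). -/
open MvPolynomial

theorem stmt0 (n : ℕ) (hn : 2 ≤ n) (p : MvPolynomial (Fin n) ℝ)
    (hS : ∀ m : Fin n →₀ ℕ, 0 ≤ (p * ∑ i, X i).coeff m)
    (hneg : ∃ β : Fin n →₀ ℕ, p.coeff β < 0) :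
    n ≤ (p.support.filter fun m => 0 < p.coeff m).card := by
  obtain ⟨β, hβ⟩ := hneg
  have hcoeff : ∀ α : Fin n →₀ ℕ, (p * ∑ i, X i).coeff α
      = ∑ k : Fin n, if α k ≠ 0 then p.coeff (α - Finsupp.single k 1) else 0 := by
    intro α
    rw [Finset.mul_sum, coeff_sum]
    refine Finset.sum_congr rfl fun k _ => ?_
    rw [coeff_mul_X']
    simp [Finsupp.mem_support_iff]
  have key : ∀ i : Fin n, ∃ k : Fin n, k ≠ i ∧
      0 < (if (β + Finsupp.single i 1 : Fin n →₀ ℕ) k ≠ 0 then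
        p.coeff (β + Finsupp.single i 1 - Finsupp.single k 1) else 0) := by
    intro i
    by_contra h
    push_neg at h
    set α := β + Finsupp.single i 1 with hα
    have h0 := hS α
    rw [hcoeff] at h0
    rw [← Finset.add_sum_erase _ _ (Finset.mem_univ i)] at h0
    have hterm : (if α i ≠ 0 then p.coeff (α - Finsupp.single i 1) else 0) = p.coeff β := by
      have h1 : α i ≠ 0 := by simp [hα, Finsupp.add_apply, Finsupp.single_apply]
      rw [if_pos h1]
      congr 1
      simp [hα]
    have h2 : ∑ k ∈ Finset.univ.erase i,
        (if α k ≠ 0 then p.coeff (α - Finsupp.single k 1) else 0) ≤ 0 := by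
      refine Finset.sum_nonpos fun k hk => ?_
      exact h k (Finset.ne_of_mem_erase hk)
    rw [hterm] at h0
    linarith
  choose j hji hjpos using key
  have hnej : ∀ i, 0 < p.coeff (β + Finsupp.single i 1 - Finsupp.single (j i) 1) := by
    intro i
    have := hjpos i
    by_cases hc : (β + Finsupp.single i 1 : Fin n →₀ ℕ) (j i) ≠ 0
    · rwa [if_pos hc] at this
    · rw [if_neg hc] at this; exact absurd this (lt_irrefl 0)
  set f : Fin n → (Fin n →₀ ℕ) := fun i => β + Finsupp.single i 1 - Finsupp.single (j i) 1 with hf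
  have hself : ∀ i, (f i) i = β i + 1 := by
    intro i
    simp [hf, Finsupp.sub_apply, Finsupp.add_apply, Finsupp.single_apply, hji i]
  have hother : ∀ i i', i' ≠ i → (f i') i ≤ β i := by
    intro i i' hne
    simp only [hf, Finsupp.tsub_apply, Finsupp.add_apply, Finsupp.single_apply]
    rw [if_neg (by exact fun h => hne h)]
    omega
  have hinj : Set.InjOn f ↑(Finset.univ : Finset (Fin n)) := by
    intro a _ b _ hab
    by_contra hne
    have h1 := hself a
    have h2 := hother a b (fun h => hne h.symm)
    rw [hab] at h1
    omega
  have hmem : ∀ i ∈ (Finset.univ : Finset (Fin n)),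
      f i ∈ p.support.filter fun m => 0 < p.coeff m := by
    intro i _
    rw [Finset.mem_filter, mem_support_iff]
    exact ⟨ne_of_gt (hnej i), hnej i⟩
  have := Finset.card_le_card_of_injOn f hmem hinj
  simpa using this
end

section
/- If p is a real polynomial in n variables (n ≥ 2) such that p(x)·(x₁+⋯+xₙ) has only nonnegative coefficients, then N₋ ≤ (n−1)·N₊, where N₊ and N₋ are the numbers of positive and negative coefficients of p respectively. -/
open MvPolynomial

theorem stmt1 (n : ℕ) (hn : 2 ≤ n) (p : MvPolynomial (Fin n) ℝ)
    (hS : ∀ m : Fin n →₀ ℕ, 0 ≤ (p * ∑ i, X i).coeff m) :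
    (p.support.filter fun m => p.coeff m < 0).card ≤
      (n - 1) * (p.support.filter fun m => 0 < p.coeff m).card := by
  classical
  haveI : NeZero n := ⟨by omega⟩
  have key : ∀ m, p.coeff m < 0 → ∃ j : Fin n, j ≠ 0 ∧
      Finsupp.single j 1 ≤ m + Finsupp.single 0 1 ∧
      0 < p.coeff (m + Finsupp.single 0 1 - Finsupp.single j 1) := by
    intro m hm
    set d := m + Finsupp.single (0 : Fin n) 1 with hd
    have hcoeff : (p * ∑ i, X i).coeff d
        = ∑ i : Fin n, if i ∈ d.support then p.coeff (d - Finsupp.single i 1) else 0 := by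
      rw [Finset.mul_sum, MvPolynomial.coeff_sum]
      exact Finset.sum_congr rfl fun i _ => MvPolynomial.coeff_mul_X' d i p
    have h0 : (0:ℝ) ≤ ∑ i : Fin n,
        if i ∈ d.support then p.coeff (d - Finsupp.single i 1) else 0 := by
      rw [← hcoeff]; exact hS d
    by_contra hcon
    push_neg at hcon
    have hle : ∀ i : Fin n, (if i ∈ d.support then p.coeff (d - Finsupp.single i 1) else 0) ≤
        if i = 0 then p.coeff m else 0 := by
      intro i
      by_cases hi : i = 0
      · subst hi
        have h0mem : (0 : Fin n) ∈ d.support := by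
          simp [hd, Finsupp.single_apply]
        have hdm : d - Finsupp.single (0 : Fin n) 1 = m := by
          simp [hd]
        simp [h0mem, hdm]
      · simp only [hi, if_false]
        by_cases hmem : i ∈ d.support
        · have hle' : Finsupp.single i 1 ≤ d := by
            rw [Finsupp.single_le_iff]
            have := Finsupp.mem_support_iff.mp hmem
            omega
          simpa [hmem] using hcon i hi hle'
        · simp [hmem]
    have hsum : ∑ i : Fin n, (if i ∈ d.support then p.coeff (d - Finsupp.single i 1) else 0)
        ≤ ∑ i : Fin n, if i = 0 then p.coeff m else 0 :=
      Finset.sum_le_sum fun i _ => hle i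
    rw [Finset.sum_ite_eq' Finset.univ (0 : Fin n) (fun _ => p.coeff m)] at hsum
    simp only [Finset.mem_univ, if_true] at hsum
    linarith
  set F : (Fin n →₀ ℕ) → (Fin n →₀ ℕ) × Fin n := fun m =>
    if h : p.coeff m < 0 then
      ⟨m + Finsupp.single 0 1 - Finsupp.single (key m h).choose 1, (key m h).choose⟩
    else (0, 0) with hF
  have hcard := Finset.card_le_card_of_injOn
    (s := p.support.filter fun m => p.coeff m < 0)
    (t := (p.support.filter fun m => 0 < p.coeff m) ×ˢ (Finset.univ.erase (0 : Fin n))) F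
    (by
      intro m hm
      rw [Finset.mem_coe, Finset.mem_filter] at hm
      have h := hm.2
      obtain ⟨hj0, hjle, hjpos⟩ := (key m h).choose_spec
      simp only [hF, dif_pos h]
      rw [Finset.mem_coe, Finset.mem_product]
      constructor
      · rw [Finset.mem_filter]
        exact ⟨MvPolynomial.mem_support_iff.mpr (ne_of_gt hjpos), hjpos⟩
      · exact Finset.mem_erase.mpr ⟨hj0, Finset.mem_univ _⟩)
    (by
      intro m1 hm1 m2 hm2 heq
      simp only [Finset.mem_coe, Finset.mem_filter] at hm1 hm2
      have h1 := hm1.2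
      have h2 := hm2.2
      obtain ⟨hj01, hjle1, _⟩ := (key m1 h1).choose_spec
      obtain ⟨hj02, hjle2, _⟩ := (key m2 h2).choose_spec
      simp only [hF, dif_pos h1, dif_pos h2, Prod.mk.injEq] at heq
      have e1 : m1 + Finsupp.single (0:Fin n) 1 =
          (m1 + Finsupp.single 0 1 - Finsupp.single (key m1 h1).choose 1)
            + Finsupp.single (key m1 h1).choose 1 :=
        (tsub_add_cancel_of_le hjle1).symm
      have e2 : m2 + Finsupp.single (0:Fin n) 1 =
          (m2 + Finsupp.single 0 1 - Finsupp.single (key m2 h2).choose 1)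
            + Finsupp.single (key m2 h2).choose 1 :=
        (tsub_add_cancel_of_le hjle2).symm
      have : m1 + Finsupp.single (0:Fin n) 1 = m2 + Finsupp.single (0:Fin n) 1 := by
        rw [e1, e2, heq.1, heq.2]
      exact add_right_cancel this)
  rw [Finset.card_product, Finset.card_erase_of_mem (Finset.mem_univ _),
    Finset.card_univ, Fintype.card_fin] at hcard
  rw [mul_comm]
  exact hcard
end

section
/- Suppose a negative coefficient of p occurs at multi-index β and all coefficients of p·(x₁+⋯+xₙ) are nonnegative. Then for each k ∈ {1,…,n} there exists a multi-index α(k) with positive coefficient in p and an index j with α(k)+e_j = β+e_k; moreover the multi-indices α(k) for distinct k are distinct. Here e_j is the j-th standard basis multi-index. -/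
open MvPolynomial

theorem stmt3 (n : ℕ) (hn : 2 ≤ n) (p : MvPolynomial (Fin n) ℝ)
    (hS : ∀ m : Fin n →₀ ℕ, 0 ≤ (p * ∑ i, X i).coeff m)
    (β : Fin n →₀ ℕ) (hβ : p.coeff β < 0) :
    ∃ α : Fin n → (Fin n →₀ ℕ),
      (∀ k : Fin n, 0 < p.coeff (α k) ∧
        ∃ j : Fin n, α k + Finsupp.single j 1 = β + Finsupp.single k 1) ∧
      Function.Injective α := by
  have key : ∀ k : Fin n, ∃ j : Fin n, j ≠ k ∧
      0 < p.coeff (β + Finsupp.single k 1 - Finsupp.single j 1) ∧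
      Finsupp.single j 1 ≤ β + Finsupp.single k 1 := by
    intro k
    set m := β + Finsupp.single k 1 with hm
    set f : Fin n → ℝ := fun i =>
      if i ∈ m.support then p.coeff (m - Finsupp.single i 1) else 0 with hf
    have hsum : (p * ∑ i, X i).coeff m = ∑ i, f i := by
      rw [Finset.mul_sum, coeff_sum]
      exact Finset.sum_congr rfl fun i _ => coeff_mul_X' m i p
    have hmemk : k ∈ m.support := by
      rw [Finsupp.mem_support_iff]
      simp [hm, Finsupp.single_apply]
    have hfk : f k = p.coeff β := by
      rw [hf]
      simp only [if_pos hmemk]; simp only [hm, add_tsub_cancel_right]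
    have h0 : 0 ≤ ∑ i, f i := by rw [← hsum]; exact hS m
    have hex : ∃ j ∈ Finset.univ.erase k, 0 < f j := by
      by_contra hcon
      push_neg at hcon
      have hle : ∑ j ∈ Finset.univ.erase k, f j ≤ 0 :=
        Finset.sum_nonpos hcon
      have := Finset.add_sum_erase Finset.univ f (Finset.mem_univ k)
      rw [← this, hfk] at h0
      linarith
    obtain ⟨j, hj, hpos⟩ := hex
    have hjk : j ≠ k := (Finset.mem_erase.mp hj).1
    have hmem : j ∈ m.support := by
      by_contra h
      rw [hf] at hpos
      simp [h] at hpos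
    have hfj : f j = p.coeff (m - Finsupp.single j 1) := by
      rw [hf]; simp [hmem]
    refine ⟨j, hjk, by rw [← hfj]; exact hpos, ?_⟩
    rw [Finsupp.single_le_iff]
    exact Nat.one_le_iff_ne_zero.mpr (Finsupp.mem_support_iff.mp hmem)
  choose j hjk hpos hle using key
  refine ⟨fun k => β + Finsupp.single k 1 - Finsupp.single (j k) 1, ?_, ?_⟩
  · intro k
    refine ⟨hpos k, j k, tsub_add_cancel_of_le (hle k)⟩
  · intro a b hab
    by_contra hne
    have ea : (β + Finsupp.single a 1 - Finsupp.single (j a) 1) +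
        Finsupp.single (j a) 1 = β + Finsupp.single a 1 :=
      tsub_add_cancel_of_le (hle a)
    have eb : (β + Finsupp.single b 1 - Finsupp.single (j b) 1) +
        Finsupp.single (j b) 1 = β + Finsupp.single b 1 :=
      tsub_add_cancel_of_le (hle b)
    have heq : (β + Finsupp.single a 1) + Finsupp.single (j b) 1 =
        (β + Finsupp.single b 1) + Finsupp.single (j a) 1 := by
      simp only at hab
      rw [← ea, ← eb, hab]
      exact add_right_comm _ _ _
    have h := DFunLike.congr_fun heq a
    simp only [Finsupp.add_apply, Finsupp.single_apply] at h
    have hja : j a ≠ a := hjk a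
    have hba : b ≠ a := fun h' => hne h'.symm
    simp [hja, hba] at h
    omega
end

section
/- For every n ≥ 2 and every ε > 0, there exists a homogeneous real polynomial p in n variables such that p(x)·(x₁+⋯+xₙ) has only nonnegative coefficients and the ratio N₋/N₊ of negative to positive coefficients of p exceeds n − 1 − ε. -/
open Finset

namespace S5

variable (m x : ℕ)

def w (δ : Fin m → ℕ) : ℕ := ∑ j : Fin m, ((j : ℕ) + 1) * δ j

def c (δ : Fin m → ℕ) : ℝ :=
  if ∀ j, 1 ≤ δ j ∧ δ j ≤ x then (if (m + 1) ∣ w m δ then (m : ℝ) else -1)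
  else if ∀ j, δ j ≤ x + 1 then (m + 1 : ℝ) else 0

lemma c_ge (δ : Fin m → ℕ) : (-1 : ℝ) ≤ c m x δ := by
  have h0 : (0:ℝ) ≤ (m:ℝ) := Nat.cast_nonneg m
  unfold c; split_ifs <;> linarith

lemma c_nonneg (δ : Fin m → ℕ) (h : ¬ ∀ j, 1 ≤ δ j ∧ δ j ≤ x) : 0 ≤ c m x δ := by
  have h0 : (0:ℝ) ≤ (m:ℝ) := Nat.cast_nonneg m
  unfold c; rw [if_neg h]; split_ifs <;> linarith

lemma c_eq_zero (δ : Fin m → ℕ) (j : Fin m) (h : x + 1 < δ j) : c m x δ = 0 := by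
  unfold c
  rw [if_neg, if_neg]
  · intro hb; exact absurd (hb j) (by omega)
  · intro hb; exact absurd (hb j).2 (by omega)

lemma c_shell (δ : Fin m → ℕ) (hb : ∀ j, δ j ≤ x + 1) (hni : ¬ ∀ j, 1 ≤ δ j ∧ δ j ≤ x) :
    c m x δ = (m + 1 : ℝ) := by
  unfold c; rw [if_neg hni, if_pos hb]

lemma c_intr (δ : Fin m → ℕ) (hi : ∀ j, 1 ≤ δ j ∧ δ j ≤ x) :
    c m x δ = if (m + 1) ∣ w m δ then (m : ℝ) else -1 := by
  unfold c; rw [if_pos hi]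

def dec (δ : Fin m → ℕ) (j : Fin m) : Fin m → ℕ := Function.update δ j (δ j - 1)

lemma dec_apply_self (δ : Fin m → ℕ) (j : Fin m) : dec m δ j j = δ j - 1 := by
  simp [dec]

lemma dec_apply_ne (δ : Fin m → ℕ) (j i : Fin m) (h : i ≠ j) : dec m δ j i = δ i := by
  simp [dec, Function.update_of_ne h]

lemma w_dec (δ : Fin m → ℕ) (j : Fin m) (h : δ j ≠ 0) :
    w m (dec m δ j) + ((j : ℕ) + 1) = w m δ := by
  unfold w dec
  have h1 : ∀ k : Fin m, ((k : ℕ) + 1) * Function.update δ j (δ j - 1) k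
      = Function.update (fun k : Fin m => ((k : ℕ) + 1) * δ k) j (((j : ℕ) + 1) * (δ j - 1)) k := by
    intro k
    by_cases hk : k = j
    · subst hk; simp
    · simp [Function.update_of_ne hk]
  rw [Finset.sum_congr rfl (fun k _ => h1 k),
    Finset.sum_update_of_mem (Finset.mem_univ j),
    Finset.sum_eq_sum_sdiff_singleton_add (Finset.mem_univ j) (fun k : Fin m => ((k : ℕ) + 1) * δ k)]
  have : ((j : ℕ) + 1) * (δ j - 1) + ((j : ℕ) + 1) = ((j : ℕ) + 1) * δ j := by
    cases' Nat.exists_eq_succ_of_ne_zero h with d hd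
    rw [hd]; simp [Nat.succ_sub_one, Nat.mul_succ]
  omega

lemma dvd_filter_eq (W : ℕ) (hW : m + 1 ≤ W) :
    (Finset.range (m + 1)).filter (fun k => (m + 1) ∣ (W - k)) = {W % (m + 1)} := by
  ext k
  simp only [Finset.mem_filter, Finset.mem_range, Finset.mem_singleton]
  constructor
  · rintro ⟨hk, hdvd⟩
    have hkW : k ≤ W := by omega
    have : k ≡ W [MOD m + 1] := (Nat.modEq_iff_dvd' hkW).mpr hdvd
    have := this.symm
    unfold Nat.ModEq at this
    rw [Nat.mod_eq_of_lt hk] at this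
    omega
  · rintro rfl
    refine ⟨Nat.mod_lt _ (by omega), ?_⟩
    have h2 : W - W % (m + 1) = (m + 1) * (W / (m + 1)) := by
      have := Nat.div_add_mod W (m + 1); omega
    rw [h2]; exact Dvd.intro _ rfl

lemma sum_resid (W : ℕ) (hW : m + 1 ≤ W) :
    ∑ k ∈ Finset.range (m + 1), (if (m + 1) ∣ (W - k) then (m : ℝ) else -1) = 0 := by
  rw [Finset.sum_ite, Finset.sum_const, Finset.sum_const, dvd_filter_eq m W hW]
  have hcard : ((Finset.range (m + 1)).filter (fun k => ¬ (m + 1) ∣ (W - k))).card = m := by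
    have h1 := Finset.card_filter_add_card_filter_not
      (s := Finset.range (m + 1)) (p := fun k => (m + 1) ∣ (W - k))
    rw [dvd_filter_eq m W hW] at h1
    simp at h1 ⊢
    omega
  rw [hcard]
  simp

lemma term_ge (δ : Fin m → ℕ) (j : Fin m) :
    (-1 : ℝ) ≤ (if δ j ≠ 0 then c m x (dec m δ j) else 0) := by
  split_ifs
  · exact c_ge m x _
  · norm_num

theorem key (hm : 1 ≤ m) (δ : Fin m → ℕ) :
    0 ≤ c m x δ + ∑ j : Fin m, (if δ j ≠ 0 then c m x (dec m δ j) else 0) := by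
  by_cases hA : ∃ j, x + 1 < δ j
  · -- out of box above
    obtain ⟨j, hj⟩ := hA
    rw [c_eq_zero m x δ j hj]
    have hterm : ∀ i : Fin m, (0:ℝ) ≤ (if δ i ≠ 0 then c m x (dec m δ i) else 0) := by
      intro i
      split_ifs with hi
      · by_cases hij : i = j
        · subst hij
          apply c_nonneg
          intro hall
          have := (hall i).2
          rw [dec_apply_self] at this
          omega
        · rw [c_eq_zero m x (dec m δ i) j]
          rw [dec_apply_ne m δ i j (Ne.symm hij)]
          exact hj
      · exact le_rfl
    have hs := Finset.sum_nonneg (s := (Finset.univ : Finset (Fin m)))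
      (f := fun i => if δ i ≠ 0 then c m x (dec m δ i) else 0) (fun i _ => hterm i)
    linarith
  · push_neg at hA
    have hbox : ∀ j, δ j ≤ x + 1 := fun j => by have := hA j; omega
    have hsum_ge : -((m:ℝ)) ≤ ∑ j : Fin m, (if δ j ≠ 0 then c m x (dec m δ j) else 0) := by
      have := Finset.card_nsmul_le_sum Finset.univ
        (fun j : Fin m => if δ j ≠ 0 then c m x (dec m δ j) else 0) (-1 : ℝ)
        (fun j _ => term_ge m x δ j)
      simpa [nsmul_eq_mul, mul_comm] using this
    by_cases hI : ∀ j, 1 ≤ δ j ∧ δ j ≤ x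
    · by_cases hD : ∀ j, 2 ≤ δ j
      · -- deep interior: residue computation
        have hW : m + 1 ≤ w m δ := by
          have hlast : (⟨m - 1, by omega⟩ : Fin m) ∈ (Finset.univ : Finset (Fin m)) :=
            Finset.mem_univ _
          have hle := Finset.single_le_sum
            (f := fun j : Fin m => ((j : ℕ) + 1) * δ j) (fun i _ => Nat.zero_le _) hlast
          have h2 : ((m:ℕ) - 1 + 1) * δ ⟨m - 1, by omega⟩ ≥ m * 2 := by
            have := hD ⟨m - 1, by omega⟩
            have hm1 : (m - 1 + 1) = m := by omega
            rw [hm1]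
            exact Nat.mul_le_mul_left m this
          unfold w
          simp only at hle
          omega
        have hterm : ∀ j : Fin m, (if δ j ≠ 0 then c m x (dec m δ j) else 0)
            = (if (m + 1) ∣ (w m δ - ((j:ℕ) + 1)) then (m : ℝ) else -1) := by
          intro j
          have hj0 : δ j ≠ 0 := by have := hD j; omega
          rw [if_pos hj0, c_intr]
          · have hw := w_dec m δ j hj0
            have hww : w m (dec m δ j) = w m δ - ((j:ℕ) + 1) := by omega
            rw [hww]
          · intro i
            by_cases hij : i = j
            · subst hij
              rw [dec_apply_self]
              have := hD i; have := (hI i).2; omega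
            · rw [dec_apply_ne m δ j i hij]
              exact hI i
        rw [c_intr m x δ hI, Finset.sum_congr rfl (fun j _ => hterm j)]
        have h1 : ∑ j : Fin m, (if (m + 1) ∣ (w m δ - ((j:ℕ) + 1)) then (m : ℝ) else -1)
            = ∑ k ∈ Finset.range m, (if (m + 1) ∣ (w m δ - (k + 1)) then (m : ℝ) else -1) := by
          rw [Fin.sum_univ_eq_sum_range (fun k => (if (m + 1) ∣ (w m δ - (k + 1)) then (m : ℝ) else -1))]
        have h2 := sum_resid m (w m δ) hW
        rw [Finset.sum_range_succ' (fun k => (if (m + 1) ∣ (w m δ - k) then (m : ℝ) else -1)) m] at h2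
        simp only [Nat.sub_zero] at h2
        rw [h1]
        linarith [le_of_eq h2.symm]
      · -- some δ j = 1
        push_neg at hD
        obtain ⟨j₀, hj₀⟩ := hD
        have hj₀1 : δ j₀ = 1 := by have := (hI j₀).1; omega
        have hterm0 : (if δ j₀ ≠ 0 then c m x (dec m δ j₀) else 0) = (m + 1 : ℝ) := by
          rw [if_pos (by omega), c_shell]
          · intro i
            by_cases hij : i = j₀
            · subst hij; rw [dec_apply_self]; omega
            · rw [dec_apply_ne m δ j₀ i hij]; have := (hI i).2; omega
          · intro hall
            have := (hall j₀).1
            rw [dec_apply_self, hj₀1] at this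
            omega
        rw [Finset.sum_eq_sum_sdiff_singleton_add (Finset.mem_univ j₀)
          (fun j : Fin m => if δ j ≠ 0 then c m x (dec m δ j) else 0)]
        have hrest : -((m:ℝ) - 1) ≤ ∑ j ∈ Finset.univ \ {j₀},
            (if δ j ≠ 0 then c m x (dec m δ j) else 0) := by
          have hcard : (Finset.univ \ {j₀} : Finset (Fin m)).card = m - 1 := by
            rw [Finset.sdiff_singleton_eq_erase, Finset.card_erase_of_mem (Finset.mem_univ j₀)]
            simp
          have := Finset.card_nsmul_le_sum (Finset.univ \ {j₀})
            (fun j : Fin m => if δ j ≠ 0 then c m x (dec m δ j) else 0) (-1 : ℝ)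
            (fun j _ => term_ge m x δ j)
          rw [hcard] at this
          have hcast : ((m - 1 : ℕ) : ℝ) = (m : ℝ) - 1 := by
            have : (1:ℕ) ≤ m := hm
            push_cast [Nat.cast_sub this]
            ring
          rw [nsmul_eq_mul, hcast] at this
          linarith
        have hc := c_ge m x δ
        rw [hterm0]
        linarith
    · -- shell
      rw [c_shell m x δ hbox hI]
      have : (0:ℝ) ≤ (m:ℝ) := Nat.cast_nonneg m
      linarith


def Box : Finset (Fin m → ℕ) := Fintype.piFinset (fun _ => Finset.range (x + 2))
def Int' : Finset (Fin m → ℕ) := Fintype.piFinset (fun _ => Finset.Icc 1 x)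
def Aset (r : ZMod (m + 1)) : Finset (Fin m → ℕ) :=
  (Int' m x).filter (fun γ => ((w m γ : ZMod (m + 1)) = r))

lemma mem_Box {γ : Fin m → ℕ} : γ ∈ Box m x ↔ ∀ j, γ j ≤ x + 1 := by
  simp [Box, Fintype.mem_piFinset, Nat.lt_succ_iff]

lemma mem_Int' {γ : Fin m → ℕ} : γ ∈ Int' m x ↔ ∀ j, 1 ≤ γ j ∧ γ j ≤ x := by
  simp [Int', Fintype.mem_piFinset]

lemma card_Box : (Box m x).card = (x + 2) ^ m := by
  simp [Box, Fintype.card_piFinset]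

lemma card_Int' : (Int' m x).card = x ^ m := by
  simp [Int', Fintype.card_piFinset, Nat.card_Icc]

lemma w_update (γ : Fin m → ℕ) (j : Fin m) (v : ℕ) :
    w m (Function.update γ j v) + ((j : ℕ) + 1) * γ j = w m γ + ((j : ℕ) + 1) * v := by
  unfold w
  have h1 : ∀ k : Fin m, ((k : ℕ) + 1) * Function.update γ j v k
      = Function.update (fun k : Fin m => ((k : ℕ) + 1) * γ k) j (((j : ℕ) + 1) * v) k := by
    intro k
    by_cases hk : k = j
    · subst hk; simp
    · simp [Function.update_of_ne hk]
  rw [Finset.sum_congr rfl (fun k _ => h1 k),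
    Finset.sum_update_of_mem (Finset.mem_univ j),
    Finset.sum_eq_sum_sdiff_singleton_add (Finset.mem_univ j) (fun k : Fin m => ((k : ℕ) + 1) * γ k)]
  ring

def nxt (v : ℕ) : ℕ := if v = x then 1 else v + 1
def prv (v : ℕ) : ℕ := if v = 1 then x else v - 1

lemma card_Aset_succ (hm : 1 ≤ m) (hx : (m + 1) ∣ x) (hx1 : 1 ≤ x) (r : ZMod (m + 1)) :
    (Aset m x r).card = (Aset m x (r + 1)).card := by
  have hxz : ((x : ℕ) : ZMod (m + 1)) = 0 := (ZMod.natCast_eq_zero_iff x (m + 1)).mpr hx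
  set j₀ : Fin m := ⟨0, by omega⟩ with hj₀
  have hw1 : ((j₀ : ℕ) + 1) = 1 := by simp [hj₀]
  -- residue shift under update with nxt
  have hres : ∀ γ ∈ Aset m x r,
      Function.update γ j₀ (nxt x (γ j₀)) ∈ Aset m x (r + 1) := by
    intro γ hγ
    rw [Aset, Finset.mem_filter, mem_Int'] at hγ ⊢
    obtain ⟨hInt, hr⟩ := hγ
    constructor
    · intro i
      by_cases hij : i = j₀
      · subst hij
        rw [Function.update_self]
        unfold nxt
        split_ifs with h
        · omega
        · have := hInt j₀; omega
      · rw [Function.update_of_ne hij]; exact hInt i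
    · have hkey := w_update m γ j₀ (nxt x (γ j₀))
      rw [hw1] at hkey
      have : ((w m (Function.update γ j₀ (nxt x (γ j₀))) : ℕ) : ZMod (m + 1))
          = ((w m γ : ℕ) : ZMod (m + 1)) + (nxt x (γ j₀) : ZMod (m+1)) - ((γ j₀ : ℕ) : ZMod (m+1)) := by
        have := congrArg (fun t : ℕ => ((t : ZMod (m + 1)))) hkey
        push_cast at this ⊢
        linear_combination this
      rw [this, hr]
      unfold nxt
      split_ifs with h
      · rw [h]; push_cast [hxz]; ring
      · push_cast; ring
  have hres' : ∀ γ ∈ Aset m x (r + 1),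
      Function.update γ j₀ (prv x (γ j₀)) ∈ Aset m x r := by
    intro γ hγ
    rw [Aset, Finset.mem_filter, mem_Int'] at hγ ⊢
    obtain ⟨hInt, hr⟩ := hγ
    constructor
    · intro i
      by_cases hij : i = j₀
      · subst hij
        rw [Function.update_self]
        unfold prv
        split_ifs with h
        · omega
        · have := hInt j₀; omega
      · rw [Function.update_of_ne hij]; exact hInt i
    · have hkey := w_update m γ j₀ (prv x (γ j₀))
      rw [hw1] at hkey
      have hcast : ((w m (Function.update γ j₀ (prv x (γ j₀))) : ℕ) : ZMod (m + 1))
          = ((w m γ : ℕ) : ZMod (m + 1)) + (prv x (γ j₀) : ZMod (m+1)) - ((γ j₀ : ℕ) : ZMod (m+1)) := by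
        have := congrArg (fun t : ℕ => ((t : ZMod (m + 1)))) hkey
        push_cast at this ⊢
        linear_combination this
      rw [hcast, hr]
      unfold prv
      split_ifs with h
      · rw [h]; push_cast [hxz]; ring
      · have h2 : 2 ≤ γ j₀ := by have := (hInt j₀).1; omega
        have : ((γ j₀ - 1 : ℕ) : ZMod (m + 1)) = ((γ j₀ : ℕ) : ZMod (m+1)) - 1 := by
          push_cast [Nat.cast_sub (by omega : 1 ≤ γ j₀)]
          ring
        rw [this]; ring
  refine Finset.card_bij' (fun γ _ => Function.update γ j₀ (nxt x (γ j₀)))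
    (fun γ _ => Function.update γ j₀ (prv x (γ j₀))) hres hres' ?_ ?_
  · intro γ hγ
    rw [Aset, Finset.mem_filter, mem_Int'] at hγ
    have h1 := (hγ.1 j₀)
    simp only [Function.update_self, Function.update_idem]
    have : prv x (nxt x (γ j₀)) = γ j₀ := by
      unfold nxt prv; split_ifs <;> omega
    rw [this, Function.update_eq_self]
  · intro γ hγ
    rw [Aset, Finset.mem_filter, mem_Int'] at hγ
    have h1 := (hγ.1 j₀)
    simp only [Function.update_self, Function.update_idem]
    have : nxt x (prv x (γ j₀)) = γ j₀ := by
      unfold nxt prv; split_ifs <;> omega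
    rw [this, Function.update_eq_self]

lemma card_Aset_const (hm : 1 ≤ m) (hx : (m + 1) ∣ x) (hx1 : 1 ≤ x) (r : ZMod (m + 1)) :
    (Aset m x r).card = (Aset m x 0).card := by
  have hk : ∀ k : ℕ, (Aset m x (0 + (k : ZMod (m+1)))).card = (Aset m x 0).card := by
    intro k
    induction k with
    | zero => simp
    | succ k ih =>
      have h := card_Aset_succ m x hm hx hx1 (0 + (k : ZMod (m+1)))
      have hc : ((k + 1 : ℕ) : ZMod (m+1)) = (k : ZMod (m+1)) + 1 := by push_cast; ring
      rw [hc, ← add_assoc, ← h]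
      exact ih
  have := hk (r.val)
  rwa [ZMod.natCast_val, ZMod.cast_id, zero_add] at this

lemma card_Int'_eq (hm : 1 ≤ m) (hx : (m + 1) ∣ x) (hx1 : 1 ≤ x) :
    (Int' m x).card = (m + 1) * (Aset m x 0).card := by
  have hfib : (Int' m x).card = ∑ r : ZMod (m + 1), (Aset m x r).card := by
    exact Finset.card_eq_sum_card_fiberwise
      (f := fun γ => ((w m γ : ℕ) : ZMod (m + 1))) (t := Finset.univ) (fun γ _ => Finset.mem_univ _)
  rw [hfib, Finset.sum_congr rfl (fun r _ => card_Aset_const m x hm hx hx1 r),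
    Finset.sum_const, Finset.card_univ, ZMod.card]
  rfl


lemma Aset_zero : Aset m x 0 = (Int' m x).filter (fun γ => (m + 1) ∣ w m γ) := by
  unfold Aset
  apply Finset.filter_congr
  intro γ _
  rw [ZMod.natCast_eq_zero_iff]

lemma neg_eq (hm : 1 ≤ m) :
    (Box m x).filter (fun γ => c m x γ < 0)
      = (Int' m x).filter (fun γ => ¬ (m + 1) ∣ w m γ) := by
  ext γ
  simp only [Finset.mem_filter, mem_Box, mem_Int']
  unfold c
  constructor
  · rintro ⟨hbox, hneg⟩
    by_cases hI : ∀ j, 1 ≤ γ j ∧ γ j ≤ x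
    · rw [if_pos hI] at hneg
      refine ⟨hI, ?_⟩
      intro hdvd
      rw [if_pos hdvd] at hneg
      have : (0:ℝ) ≤ (m:ℝ) := Nat.cast_nonneg m
      linarith
    · rw [if_neg hI, if_pos hbox] at hneg
      have : (0:ℝ) ≤ (m:ℝ) := Nat.cast_nonneg m
      linarith
  · rintro ⟨hI, hndvd⟩
    refine ⟨fun j => by have := (hI j).2; omega, ?_⟩
    rw [if_pos hI, if_neg hndvd]
    norm_num

lemma card_neg (hm : 1 ≤ m) (hx : (m + 1) ∣ x) (hx1 : 1 ≤ x) :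
    ((Box m x).filter (fun γ => c m x γ < 0)).card = m * (Aset m x 0).card := by
  rw [neg_eq m x hm]
  have h1 := Finset.card_filter_add_card_filter_not
    (s := Int' m x) (p := fun γ => (m + 1) ∣ w m γ)
  rw [← Aset_zero] at h1
  have h2 := card_Int'_eq m x hm hx hx1
  have h3 : ((Int' m x).filter (fun γ => ¬ (m + 1) ∣ w m γ)).card
      = (Int' m x).card - (Aset m x 0).card := by omega
  rw [h3, h2, Nat.succ_mul]
  omega

lemma c_ne_zero (hm : 1 ≤ m) (γ : Fin m → ℕ) (hbox : ∀ j, γ j ≤ x + 1) :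
    c m x γ ≠ 0 := by
  have hmr : (0:ℝ) < (m:ℝ) := by exact_mod_cast hm
  unfold c
  split_ifs with h1 h2
  · exact ne_of_gt hmr
  · norm_num
  · exact ne_of_gt (by linarith)

lemma card_pos (hm : 1 ≤ m) (hx : (m + 1) ∣ x) (hx1 : 1 ≤ x) :
    ((Box m x).filter (fun γ => 0 < c m x γ)).card
      = (x + 2) ^ m - m * (Aset m x 0).card := by
  have h1 := Finset.card_filter_add_card_filter_not
    (s := Box m x) (p := fun γ => c m x γ < 0)
  have h2 : (Box m x).filter (fun γ => ¬ c m x γ < 0)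
      = (Box m x).filter (fun γ => 0 < c m x γ) := by
    apply Finset.filter_congr
    intro γ hγ
    rw [mem_Box] at hγ
    have := c_ne_zero m x hm γ hγ
    constructor
    · intro h
      rcases this.lt_or_gt with h' | h'
      · exact absurd h' h
      · exact h'
    · intro h h'
      linarith
  rw [h2, card_neg m x hm hx hx1, card_Box] at h1
  omega

lemma mA_le (hm : 1 ≤ m) (hx : (m + 1) ∣ x) (hx1 : 1 ≤ x) :
    (m + 1) * (Aset m x 0).card = x ^ m := by
  rw [← card_Int'_eq m x hm hx hx1, card_Int']



section Poly
variable (m x : ℕ)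

def DD : ℕ := (m + 1) * (x + 1)

noncomputable def emb (γ : Fin m → ℕ) : Fin (m + 1) →₀ ℕ :=
  Finsupp.equivFunOnFinite.symm (Fin.cons (DD m x - ∑ j, γ j) γ)

def tl (β : Fin (m + 1) →₀ ℕ) : Fin m → ℕ := fun j => β j.succ

noncomputable def p : MvPolynomial (Fin (m + 1)) ℝ :=
  ∑ γ ∈ Box m x, MvPolynomial.monomial (emb m x γ) (c m x γ)

lemma emb_zero (γ : Fin m → ℕ) : emb m x γ 0 = DD m x - ∑ j, γ j := by
  unfold emb
  rw [Finsupp.coe_equivFunOnFinite_symm]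
  simp

lemma emb_succ (γ : Fin m → ℕ) (j : Fin m) : emb m x γ j.succ = γ j := by
  unfold emb
  rw [Finsupp.coe_equivFunOnFinite_symm]
  simp

lemma tl_emb (γ : Fin m → ℕ) : tl m (emb m x γ) = γ :=
  funext fun j => emb_succ m x γ j

lemma emb_inj : Function.Injective (emb m x) := by
  intro a b h
  have := congrArg (tl m) h
  rwa [tl_emb, tl_emb] at this

lemma emb_eq_iff (γ : Fin m → ℕ) (β : Fin (m + 1) →₀ ℕ) :
    emb m x γ = β ↔ (tl m β = γ ∧ β 0 = DD m x - ∑ j, γ j) := by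
  constructor
  · rintro rfl
    exact ⟨tl_emb m x γ, (emb_zero m x γ)⟩
  · rintro ⟨h1, h2⟩
    ext i
    refine Fin.cases ?_ ?_ i
    · rw [emb_zero, h2]
    · intro j
      rw [emb_succ, ← h1]
      rfl

lemma sum_tl_le (β : Fin (m + 1) →₀ ℕ) (h : ∀ j, tl m β j ≤ x + 1) :
    ∑ j, tl m β j ≤ m * (x + 1) := by
  calc ∑ j, tl m β j ≤ ∑ _j : Fin m, (x + 1) := Finset.sum_le_sum (fun j _ => h j)
  _ = m * (x + 1) := by rw [Finset.sum_const, Finset.card_univ, Fintype.card_fin, smul_eq_mul]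

lemma c_ne_zero_box (γ : Fin m → ℕ) (h : c m x γ ≠ 0) : ∀ j, γ j ≤ x + 1 := by
  intro j
  by_contra hj
  exact h (c_eq_zero m x γ j (by omega))

lemma coeff_p (β : Fin (m + 1) →₀ ℕ) :
    MvPolynomial.coeff β (p m x)
      = if emb m x (tl m β) = β then c m x (tl m β) else 0 := by
  unfold p
  rw [MvPolynomial.coeff_sum]
  have hterm : ∀ γ : Fin m → ℕ,
      MvPolynomial.coeff β (MvPolynomial.monomial (emb m x γ) (c m x γ))
        = if emb m x γ = β then c m x γ else 0 := by
    intro γ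
    rw [MvPolynomial.coeff_monomial]
  rw [Finset.sum_congr rfl (fun γ _ => hterm γ)]
  apply Finset.sum_eq_single (tl m β)
  · intro b _ hb
    rw [if_neg]
    intro h
    apply hb
    rw [← h, tl_emb]
  · intro hnb
    rw [mem_Box] at hnb
    push_neg at hnb
    obtain ⟨j, hj⟩ := hnb
    rw [c_eq_zero m x _ j (by omega)]
    simp

lemma support_p (hm : 1 ≤ m) : (p m x).support = (Box m x).image (emb m x) := by
  ext β
  rw [MvPolynomial.mem_support_iff, coeff_p, Finset.mem_image]
  constructor
  · intro h
    by_cases heq : emb m x (tl m β) = β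
    · rw [if_pos heq] at h
      refine ⟨tl m β, ?_, heq⟩
      rw [mem_Box]
      exact c_ne_zero_box m x _ h
    · rw [if_neg heq] at h
      exact absurd rfl h
  · rintro ⟨γ, hγ, rfl⟩
    rw [tl_emb, if_pos rfl]
    exact c_ne_zero m x hm γ (by rwa [mem_Box] at hγ)

lemma p_hom : (p m x).IsHomogeneous (DD m x) := by
  unfold p
  apply MvPolynomial.IsHomogeneous.sum
  intro γ hγ
  apply MvPolynomial.isHomogeneous_monomial
  have hdeg : (emb m x γ).degree = ∑ i, emb m x γ i := by
    rw [Finsupp.degree]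
    exact (Finsupp.sum_fintype (emb m x γ) (fun _ e => e) (fun _ => rfl)) ▸ rfl
  have h3 : ∑ i, emb m x γ i = (DD m x - ∑ j, γ j) + ∑ j, γ j := by
    have h4 : ∀ j : Fin m, emb m x γ j.succ = γ j := emb_succ m x γ
    simp only [Fin.sum_univ_succ, emb_zero, h4]
  rw [hdeg, h3]
  rw [mem_Box] at hγ
  have h1 : ∑ j, γ j ≤ m * (x + 1) := by
    calc ∑ j, γ j ≤ ∑ _j : Fin m, (x + 1) := Finset.sum_le_sum (fun j _ => hγ j)
    _ = m * (x + 1) := by rw [Finset.sum_const, Finset.card_univ, Fintype.card_fin, smul_eq_mul]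
  have h2 : m * (x + 1) ≤ DD m x := by
    unfold DD
    exact Nat.mul_le_mul_right _ (by omega)
  omega

lemma sum_dec (δ : Fin m → ℕ) (j : Fin m) (h : δ j ≠ 0) :
    (∑ i, dec m δ j i) + 1 = ∑ i, δ i := by
  unfold dec
  rw [Finset.sum_update_of_mem (Finset.mem_univ j),
    Finset.sum_eq_sum_sdiff_singleton_add (Finset.mem_univ j) δ]
  omega

lemma tl_sub_zero (β : Fin (m + 1) →₀ ℕ) : tl m (β - Finsupp.single 0 1) = tl m β := by
  funext j
  show ((β - Finsupp.single 0 1 : Fin (m+1) →₀ ℕ)) j.succ = β j.succ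
  rw [Finsupp.tsub_apply, Finsupp.single_apply, if_neg (Fin.succ_ne_zero j).symm]
  rfl

lemma tl_sub_succ (β : Fin (m + 1) →₀ ℕ) (j : Fin m) :
    tl m (β - Finsupp.single j.succ 1) = dec m (tl m β) j := by
  funext i
  show ((β - Finsupp.single j.succ 1 : Fin (m+1) →₀ ℕ)) i.succ = dec m (tl m β) j i
  rw [Finsupp.tsub_apply, Finsupp.single_apply]
  by_cases hij : i = j
  · subst hij
    rw [if_pos rfl, dec_apply_self]
    rfl
  · rw [if_neg (by simpa [Fin.succ_inj] using Ne.symm hij), dec_apply_ne m _ j i hij]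
    rfl

lemma sub_zero_zero (β : Fin (m + 1) →₀ ℕ) : ((β - Finsupp.single 0 1 : Fin (m+1) →₀ ℕ)) 0 = β 0 - 1 := by
  rw [Finsupp.tsub_apply, Finsupp.single_apply, if_pos rfl]

lemma sub_succ_zero (β : Fin (m + 1) →₀ ℕ) (j : Fin m) :
    ((β - Finsupp.single j.succ 1 : Fin (m+1) →₀ ℕ)) 0 = β 0 := by
  rw [Finsupp.tsub_apply, Finsupp.single_apply, if_neg (Fin.succ_ne_zero j)]
  rfl

theorem prod_nonneg (hm : 1 ≤ m) (β : Fin (m + 1) →₀ ℕ) :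
    0 ≤ MvPolynomial.coeff β (p m x * ∑ i, MvPolynomial.X i) := by
  rw [Finset.mul_sum, MvPolynomial.coeff_sum]
  have hDD : DD m x = m * (x + 1) + (x + 1) := by unfold DD; ring
  set δ := tl m β with hδ
  set s := ∑ j, δ j with hs
  -- rewrite each term
  have hterm0 : (MvPolynomial.coeff β (p m x * MvPolynomial.X 0))
      = if 0 ∈ β.support then
          (if emb m x δ = β - Finsupp.single 0 1 then c m x δ else 0) else 0 := by
    rw [MvPolynomial.coeff_mul_X']
    congr 1
    rw [coeff_p, tl_sub_zero]
  have htermsucc : ∀ j : Fin m, (MvPolynomial.coeff β (p m x * MvPolynomial.X j.succ))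
      = if j.succ ∈ β.support then
          (if emb m x (dec m δ j) = β - Finsupp.single j.succ 1 then c m x (dec m δ j) else 0)
        else 0 := by
    intro j
    rw [MvPolynomial.coeff_mul_X']
    congr 1
    rw [coeff_p, tl_sub_succ]
  rw [Fin.sum_univ_succ, hterm0, Finset.sum_congr rfl (fun j _ => htermsucc j)]
  by_cases hc1 : β 0 + s = DD m x + 1 ∧ 1 ≤ β 0
  · -- main case
    obtain ⟨hsum, hpos⟩ := hc1
    have h0 : (if 0 ∈ β.support then
        (if emb m x δ = β - Finsupp.single 0 1 then c m x δ else 0) else 0) = c m x δ := by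
      rw [if_pos (by rw [Finsupp.mem_support_iff]; omega), if_pos]
      rw [emb_eq_iff]
      refine ⟨tl_sub_zero m β, ?_⟩
      rw [sub_zero_zero]
      omega
    have hsucc : ∀ j : Fin m, (if j.succ ∈ β.support then
        (if emb m x (dec m δ j) = β - Finsupp.single j.succ 1 then c m x (dec m δ j) else 0)
          else 0) = (if δ j ≠ 0 then c m x (dec m δ j) else 0) := by
      intro j
      by_cases hj : δ j ≠ 0
      · rw [if_pos hj, if_pos (by rw [Finsupp.mem_support_iff]; exact hj), if_pos]
        rw [emb_eq_iff]
        refine ⟨tl_sub_succ m β j, ?_⟩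
        rw [sub_succ_zero]
        have hsd := sum_dec m δ j hj
        have hs1 : 1 ≤ s := by
          have := Finset.single_le_sum (f := fun i : Fin m => δ i)
            (fun i _ => Nat.zero_le _) (Finset.mem_univ j)
          omega
        omega
      · rw [if_neg hj, if_neg]
        rw [Finsupp.mem_support_iff]
        push_neg at hj ⊢
        exact hj
    rw [h0, Finset.sum_congr rfl (fun j _ => hsucc j)]
    exact key m x hm δ
  · -- all terms vanish
    have h0 : (if 0 ∈ β.support then
        (if emb m x δ = β - Finsupp.single 0 1 then c m x δ else 0) else 0) = 0 := by
      split_ifs with hsupp heq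
      · by_contra hne
        have hbox := c_ne_zero_box m x δ hne
        have hsle : s ≤ m * (x + 1) := sum_tl_le m x β hbox
        rw [emb_eq_iff] at heq
        rw [sub_zero_zero] at heq
        obtain ⟨-, heq2⟩ := heq
        rw [Finsupp.mem_support_iff] at hsupp
        apply hc1
        constructor <;> omega
      · rfl
      · rfl
    have hsucc : ∀ j : Fin m, (if j.succ ∈ β.support then
        (if emb m x (dec m δ j) = β - Finsupp.single j.succ 1 then c m x (dec m δ j) else 0)
          else 0) = 0 := by
      intro j
      split_ifs with hsupp heq
      · by_contra hne
        have hbox := c_ne_zero_box m x _ hne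
        have hsle : (∑ i, dec m δ j i) ≤ m * (x + 1) := by
          calc (∑ i, dec m δ j i) ≤ ∑ _i : Fin m, (x + 1) :=
            Finset.sum_le_sum (fun i _ => hbox i)
          _ = m * (x + 1) := by
            rw [Finset.sum_const, Finset.card_univ, Fintype.card_fin, smul_eq_mul]
        rw [Finsupp.mem_support_iff] at hsupp
        have hj : δ j ≠ 0 := hsupp
        have hsd := sum_dec m δ j hj
        rw [emb_eq_iff] at heq
        rw [sub_succ_zero] at heq
        obtain ⟨-, heq2⟩ := heq
        apply hc1
        constructor <;> omega
      · rfl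
      · rfl
    rw [h0, Finset.sum_congr rfl (fun j _ => hsucc j)]
    simp

lemma coeff_emb (γ : Fin m → ℕ) :
    MvPolynomial.coeff (emb m x γ) (p m x) = c m x γ := by
  rw [coeff_p, tl_emb, if_pos rfl]

lemma card_filter (hm : 1 ≤ m) (P : ℝ → Prop) [DecidablePred P] :
    ((p m x).support.filter (fun β => P (MvPolynomial.coeff β (p m x)))).card
      = ((Box m x).filter (fun γ => P (c m x γ))).card := by
  rw [support_p m x hm, Finset.filter_image]
  rw [Finset.card_image_of_injective _ (emb_inj m x)]
  congr 1
  apply Finset.filter_congr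
  intro γ _
  rw [coeff_emb]

end Poly

lemma pow_bound : ∀ (m x : ℕ), 1 ≤ x → x * (x+2)^m ≤ (x + 5^m) * x^m := by
  intro m
  induction m with
  | zero => intro x hx; simp
  | succ m ih =>
    intro x hx
    have h5 : 1 ≤ 5^m := Nat.one_le_pow m 5 (by norm_num)
    calc x * (x+2)^(m+1) = (x+2) * (x * (x+2)^m) := by ring
    _ ≤ (x+2) * ((x + 5^m) * x^m) := Nat.mul_le_mul_left _ (ih x hx)
    _ = ((x+2) * (x + 5^m)) * x^m := by ring
    _ ≤ ((x + 5^(m+1)) * x) * x^m := by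
        apply Nat.mul_le_mul_right
        have : (x+2) * (x + 5^m) = x*x + (2 + 5^m)*x + 2*5^m := by ring
        have h2 : (x + 5^(m+1)) * x = x*x + 5*5^m*x := by ring
        nlinarith
    _ = (x + 5^(m+1)) * x^(m+1) := by ring

end S5


open MvPolynomial

set_option maxHeartbeats 1000000 in
theorem stmt5 (n : ℕ) (hn : 2 ≤ n) (ε : ℝ) (hε : 0 < ε) :
    ∃ (D : ℕ) (p : MvPolynomial (Fin n) ℝ), p.IsHomogeneous D ∧
      (∀ m : Fin n →₀ ℕ, 0 ≤ (p * ∑ i, X i).coeff m) ∧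
      ((n : ℝ) - 1 - ε) <
        ((p.support.filter fun m => p.coeff m < 0).card : ℝ) /
          ((p.support.filter fun m => 0 < p.coeff m).card : ℝ) := by
  obtain ⟨m, rfl⟩ : ∃ m, n = m + 1 := ⟨n - 1, by omega⟩
  have hm : 1 ≤ m := by omega
  obtain ⟨T, hT⟩ := exists_nat_gt (((m : ℝ) * (m + 1) * 5 ^ m) / ε)
  have hB : (0:ℝ) ≤ ((m : ℝ) * (m + 1) * 5 ^ m) / ε := by positivity
  have hT1 : 1 ≤ T := by
    rcases Nat.eq_zero_or_pos T with h | h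
    · subst h; simp at hT; linarith
    · exact h
  set x := (m + 1) * T with hxdef
  have hx : (m + 1) ∣ x := Dvd.intro T rfl
  have hx1 : 1 ≤ x := by
    have : 1 * 1 ≤ (m+1) * T := Nat.mul_le_mul (by omega) hT1
    omega
  refine ⟨S5.DD m x, S5.p m x, S5.p_hom m x, S5.prod_nonneg m x hm, ?_⟩
  set A := (S5.Aset m x 0).card with hA
  have hcneg : ((S5.p m x).support.filter
      (fun β => MvPolynomial.coeff β (S5.p m x) < 0)).card = m * A := by
    rw [S5.card_filter m x hm (fun t => t < 0), S5.card_neg m x hm hx hx1]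
  have hcpos : ((S5.p m x).support.filter
      (fun β => 0 < MvPolynomial.coeff β (S5.p m x))).card = (x + 2) ^ m - m * A := by
    rw [S5.card_filter m x hm (fun t => 0 < t), S5.card_pos m x hm hx hx1]
  rw [hcneg, hcpos]
  have hmA : (m + 1) * A = x ^ m := S5.mA_le m x hm hx hx1
  -- ℕ facts
  have hxm1 : 1 ≤ x ^ m := Nat.one_le_pow m x (by omega)
  have hA1 : 1 ≤ A := by
    rcases Nat.eq_zero_or_pos A with h | h
    · rw [h] at hmA; omega
    · exact h
  have hmono : x ^ m ≤ (x + 2) ^ m := Nat.pow_le_pow_left (by omega) m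
  have hle : m * A ≤ (x + 2) ^ m := by
    have : m * A ≤ (m + 1) * A := Nat.mul_le_mul_right A (by omega)
    omega
  have hcast : (((x + 2) ^ m - m * A : ℕ) : ℝ)
      = ((x : ℝ) + 2) ^ m - (m : ℝ) * (A : ℝ) := by
    push_cast [Nat.cast_sub hle]
    ring
  rw [hcast]
  push_cast
  -- ℝ facts
  have hA0 : (0:ℝ) < (A:ℝ) := by exact_mod_cast hA1
  have hx0 : (0:ℝ) < (x:ℝ) := by exact_mod_cast hx1
  have hxa : ((m:ℝ) + 1) * (A:ℝ) = ((x:ℝ)) ^ m := by exact_mod_cast hmA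
  have hxa2 : (m:ℝ) * (A:ℝ) + (A:ℝ) = ((x:ℝ)) ^ m := by rw [← hxa]; ring
  have hmono' : ((x:ℝ)) ^ m ≤ ((x:ℝ) + 2) ^ m := by exact_mod_cast hmono
  have hden2 : ((x:ℝ)+2)^m - (m:ℝ)*(A:ℝ)
      = (((x:ℝ)+2)^m - ((x:ℝ))^m) + (A:ℝ) := by rw [← hxa2]; ring
  have hdenpos : 0 < ((x:ℝ)+2)^m - (m:ℝ)*(A:ℝ) := by rw [hden2]; nlinarith
  rw [lt_div_iff₀ hdenpos, hden2]
  -- key estimate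
  have hpb : ((x:ℝ)) * ((x:ℝ) + 2) ^ m ≤ ((x:ℝ) + 5 ^ m) * ((x:ℝ)) ^ m := by
    exact_mod_cast S5.pow_bound m x hx1
  have hexp : ((x:ℝ) + 5 ^ m) * ((x:ℝ)) ^ m
      = (x:ℝ)*((x:ℝ))^m + 5^m*((x:ℝ))^m := by ring
  rw [hexp] at hpb
  have hεx : (m:ℝ) * ((m:ℝ) + 1) * 5 ^ m < ε * (x:ℝ) := by
    have h2 : (m : ℝ) * ((m:ℝ) + 1) * 5 ^ m < ε * T := by
      rw [div_lt_iff₀ hε] at hT; push_cast at hT ⊢; linarith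
    have h3 : (T:ℝ) ≤ (x:ℝ) := by
      have : T ≤ x := by
        calc T = 1 * T := (one_mul T).symm
        _ ≤ (m+1) * T := Nat.mul_le_mul_right T (by omega)
      exact_mod_cast this
    nlinarith
  have e1 : (m:ℝ) * ((x:ℝ)*((x:ℝ)+2)^m)
      ≤ (m:ℝ)*((x:ℝ)*((x:ℝ))^m + 5^m*((x:ℝ))^m) :=
    mul_le_mul_of_nonneg_left hpb (Nat.cast_nonneg m)
  have e2 : (m:ℝ)*(5^m*((x:ℝ))^m) = ((m:ℝ)*((m:ℝ)+1)*5^m)*(A:ℝ) := by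
    rw [← hxa]; ring
  have e3 : ((m:ℝ)*((m:ℝ)+1)*5^m)*(A:ℝ) < (ε*(x:ℝ))*(A:ℝ) :=
    mul_lt_mul_of_pos_right hεx hA0
  have e5 : ((m:ℝ)*(((x:ℝ)+2)^m - ((x:ℝ))^m))*(x:ℝ) < (ε*(A:ℝ))*(x:ℝ) := by
    nlinarith [e1, e2, e3]
  have hkey : (m:ℝ)*(((x:ℝ)+2)^m - ((x:ℝ))^m) < ε*(A:ℝ) :=
    lt_of_mul_lt_mul_right e5 hx0.le
  nlinarith [hkey, mul_nonneg hε.le (sub_nonneg.mpr hmono')]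
end

section
/- Fix n ≥ 2 and degree D. Define p_D(x) = Σ_{|α|=D} γ(α) x^α where γ(α) = n−1 if some α_k = 0, γ(α) = n−1 if all α_k ≥ 1 and Σ_{k=1}^{n−1} k·α_k − D ≡ 0 (mod n), and γ(α) = −1 otherwise. Then p_D(x)·(x₁+⋯+xₙ) has only nonnegative coefficients. -/
open MvPolynomial

theorem stmt6 (n D : ℕ) (hn : 2 ≤ n) (γ : (Fin n →₀ ℕ) → ℝ)
    (hγ0 : ∀ α : Fin n →₀ ℕ, (∃ k, α k = 0) → γ α = (n : ℝ) - 1)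
    (hγ1 : ∀ α : Fin n →₀ ℕ, (∀ k, 1 ≤ α k) →
      (((∑ k : Fin n, (if (k : ℕ) < n - 1 then (k : ℕ) + 1 else 0) * α k : ℕ) : ℤ) - (D : ℤ)) % (n : ℤ) = 0 →
      γ α = (n : ℝ) - 1)
    (hγ2 : ∀ α : Fin n →₀ ℕ, (∀ k, 1 ≤ α k) →
      ¬ ((((∑ k : Fin n, (if (k : ℕ) < n - 1 then (k : ℕ) + 1 else 0) * α k : ℕ) : ℤ) - (D : ℤ)) % (n : ℤ) = 0) →
      γ α = -1)
    (p : MvPolynomial (Fin n) ℝ)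
    (hp : ∀ α : Fin n →₀ ℕ, p.coeff α = if (α.sum fun _ e => e) = D then γ α else 0) :
    ∀ m : Fin n →₀ ℕ, 0 ≤ (p * ∑ i, X i).coeff m := by
  classical
  have hnR : (2 : ℝ) ≤ (n : ℝ) := by exact_mod_cast hn
  have hγge : ∀ α : Fin n →₀ ℕ, -1 ≤ γ α := by
    intro α
    by_cases h0 : ∃ k, α k = 0
    · rw [hγ0 α h0]; linarith
    · push_neg at h0
      have h1 : ∀ k, 1 ≤ α k := fun k => Nat.one_le_iff_ne_zero.mpr (h0 k)
      by_cases hm : (((∑ k : Fin n, (if (k : ℕ) < n - 1 then (k : ℕ) + 1 else 0) * α k : ℕ) : ℤ) - (D : ℤ)) % (n : ℤ) = 0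
      · rw [hγ1 α h1 hm]; linarith
      · rw [hγ2 α h1 hm]
  intro m
  have hsum : (p * ∑ i, X i).coeff m
      = ∑ i : Fin n, if i ∈ m.support then p.coeff (m - Finsupp.single i 1) else 0 := by
    rw [Finset.mul_sum, coeff_sum]
    exact Finset.sum_congr rfl fun i _ => coeff_mul_X' m i p
  have key : ∀ i : Fin n, i ∈ m.support →
      ((m - Finsupp.single i 1).sum fun _ e => e) + 1 = m.sum fun _ e => e := by
    intro i hi
    have hle : Finsupp.single i 1 ≤ m := by
      rw [Finsupp.single_le_iff]
      exact Nat.one_le_iff_ne_zero.mpr (Finsupp.mem_support_iff.mp hi)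
    have hm : m = (m - Finsupp.single i 1) + Finsupp.single i 1 :=
      (tsub_add_cancel_of_le hle).symm
    conv_rhs => rw [hm]
    rw [Finsupp.sum_add_index' (fun _ => rfl) (fun _ _ _ => rfl),
      Finsupp.sum_single_index rfl]
  rw [hsum]
  by_cases hD : (m.sum fun _ e => e) = D + 1
  · have hterm : ∀ i ∈ m.support, p.coeff (m - Finsupp.single i 1) = γ (m - Finsupp.single i 1) := by
      intro i hi
      rw [hp]
      rw [if_pos (by have := key i hi; omega)]
    rw [Finset.sum_ite_mem, Finset.univ_inter, Finset.sum_congr rfl hterm]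
    by_cases hz : ∃ j, m j = 0
    · obtain ⟨j, hj⟩ := hz
      apply Finset.sum_nonneg
      intro i hi
      have hzero : ((m - Finsupp.single i 1 : Fin n →₀ ℕ)) j = 0 := by
        rw [Finsupp.tsub_apply, hj]
        simp
      rw [hγ0 _ ⟨j, hzero⟩]
      linarith
    · push_neg at hz
      have hB : ∀ j, 1 ≤ m j := fun j => Nat.one_le_iff_ne_zero.mpr (hz j)
      have hsupp : m.support = Finset.univ := by
        ext j; simp [Finsupp.mem_support_iff, hz j]
      -- find the good index
      set Sz : ℤ := ((∑ k : Fin n, (if (k : ℕ) < n - 1 then (k : ℕ) + 1 else 0) * m k : ℕ) : ℤ) with hSz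
      set r : ℤ := (Sz - (D : ℤ)) % (n : ℤ) with hr
      have hn0 : (0 : ℤ) < (n : ℤ) := by exact_mod_cast Nat.lt_of_lt_of_le Nat.zero_lt_two hn
      have hr0 : 0 ≤ r := Int.emod_nonneg _ (by omega)
      have hrn : r < (n : ℤ) := Int.emod_lt_of_pos _ hn0
      set j : ℕ := if r = 0 then n - 1 else r.toNat - 1 with hj
      have hjn : j < n := by
        rcases eq_or_ne r 0 with h | h <;> simp [hj, h] <;> omega
      set i₀ : Fin n := ⟨j, hjn⟩ with hi₀
      have hwval : (if (i₀ : ℕ) < n - 1 then (i₀ : ℕ) + 1 else 0) = r.toNat := by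
        rcases eq_or_ne r 0 with h | h
        · have : ¬ ((i₀ : ℕ) < n - 1) := by simp [hi₀, hj, h]
          simp [this, h]
        · have hr1 : 1 ≤ r := by omega
          have h1 : (i₀ : ℕ) = r.toNat - 1 := by simp [hi₀, hj, h]
          have h2 : (i₀ : ℕ) < n - 1 := by
            rw [h1]; omega
          rw [if_pos h2, h1]
          omega
      -- value of the weighted sum at m - e_{i₀}
      have hval : ∀ k : Fin n, (((m - Finsupp.single i₀ 1 : Fin n →₀ ℕ)) k : ℤ)
          = (m k : ℤ) - (if i₀ = k then 1 else 0) := by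
        intro k
        rw [Finsupp.tsub_apply, Finsupp.single_apply]
        rcases eq_or_ne i₀ k with h | h
        · subst h
          rw [if_pos rfl, if_pos rfl, Nat.cast_sub (hB i₀)]
          simp
        · simp [h]
      have hSsub : ((∑ k : Fin n, (if (k : ℕ) < n - 1 then (k : ℕ) + 1 else 0)
            * ((m - Finsupp.single i₀ 1 : Fin n →₀ ℕ)) k : ℕ) : ℤ) = Sz - r := by
        have expand : ∀ (β : Fin n →₀ ℕ),
            ((∑ k : Fin n, (if (k : ℕ) < n - 1 then (k : ℕ) + 1 else 0) * β k : ℕ) : ℤ)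
            = ∑ k : Fin n, (if (k : ℕ) < n - 1 then ((k : ℕ) : ℤ) + 1 else 0) * (β k : ℤ) := by
          intro β
          rw [Nat.cast_sum]
          refine Finset.sum_congr rfl fun k _ => ?_
          rw [Nat.cast_mul]
          congr 1
          split_ifs <;> simp
        rw [hSz, expand, expand]
        have : ∀ k : Fin n,
            ((if (k : ℕ) < n - 1 then (k : ℕ) + 1 else 0 : ℤ)) * (((m - Finsupp.single i₀ 1 : Fin n →₀ ℕ)) k : ℤ)
            = (if (k : ℕ) < n - 1 then (k : ℕ) + 1 else 0 : ℤ) * (m k : ℤ)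
              - (if i₀ = k then (if (k : ℕ) < n - 1 then (k : ℕ) + 1 else 0 : ℤ) else 0) := by
          intro k
          rw [hval k]
          rcases eq_or_ne i₀ k with h | h <;> simp [h] <;> split_ifs <;> ring
        rw [Finset.sum_congr rfl fun k _ => this k, Finset.sum_sub_distrib]
        have hsingle : (∑ k : Fin n, (if i₀ = k then (if (k : ℕ) < n - 1 then (k : ℕ) + 1 else 0 : ℤ) else 0))
            = (if (i₀ : ℕ) < n - 1 then (i₀ : ℕ) + 1 else 0 : ℤ) := by
          rw [Finset.sum_ite_eq]
          simp
        rw [hsingle]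
        have : ((if (i₀ : ℕ) < n - 1 then (i₀ : ℕ) + 1 else 0 : ℤ)) = r := by
          have := hwval
          have hcast : ((if (i₀ : ℕ) < n - 1 then (i₀ : ℕ) + 1 else 0 : ℕ) : ℤ) = r := by
            rw [this]; omega
          push_cast at hcast
          exact_mod_cast hcast
        rw [this]
      have hmod : ((((∑ k : Fin n, (if (k : ℕ) < n - 1 then (k : ℕ) + 1 else 0)
            * ((m - Finsupp.single i₀ 1 : Fin n →₀ ℕ)) k : ℕ) : ℤ)) - (D : ℤ)) % (n : ℤ) = 0 := by
        rw [hSsub]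
        have : Sz - r - (D : ℤ) = (Sz - (D : ℤ)) - r := by ring
        rw [this, Int.sub_emod, ← hr, Int.emod_emod_of_dvd _ dvd_rfl]
        simp
        have hq := Int.emod_add_mul_ediv (Sz - (D : ℤ)) (n : ℤ)
        exact ⟨-((Sz - (D : ℤ)) / (n : ℤ)), by linarith⟩
      have hgood : γ (m - Finsupp.single i₀ 1) = (n : ℝ) - 1 := by
        by_cases h0 : ∃ k, ((m - Finsupp.single i₀ 1 : Fin n →₀ ℕ)) k = 0
        · exact hγ0 _ h0
        · push_neg at h0
          exact hγ1 _ (fun k => Nat.one_le_iff_ne_zero.mpr (h0 k)) hmod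
      -- final counting
      rw [hsupp]
      have hsplit : γ (m - Finsupp.single i₀ 1)
          + ∑ i ∈ Finset.univ.erase i₀, γ (m - Finsupp.single i 1)
          = ∑ i : Fin n, γ (m - Finsupp.single i 1) :=
        Finset.add_sum_erase _ (fun i => γ (m - Finsupp.single i 1)) (Finset.mem_univ i₀)
      have hcard : (Finset.univ.erase i₀).card = n - 1 := by
        rw [Finset.card_erase_of_mem (Finset.mem_univ i₀), Finset.card_univ, Fintype.card_fin]
      have hrest : -(((n : ℝ)) - 1) ≤ ∑ i ∈ Finset.univ.erase i₀, γ (m - Finsupp.single i 1) := by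
        have h1 : (Finset.univ.erase i₀).card • (-1 : ℝ)
            ≤ ∑ i ∈ Finset.univ.erase i₀, γ (m - Finsupp.single i 1) :=
          Finset.card_nsmul_le_sum _ _ _ (fun i _ => hγge _)
        rw [hcard] at h1
        have : ((n - 1 : ℕ) : ℝ) = (n : ℝ) - 1 := by
          rw [Nat.cast_sub (by omega)]; simp
        calc -(((n : ℝ)) - 1) = (n - 1 : ℕ) • (-1 : ℝ) := by
              rw [nsmul_eq_mul, this]; ring
          _ ≤ _ := h1
      rw [← hsplit, hgood]
      linarith
  · apply Finset.sum_nonneg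
    intro i _
    split_ifs with hi
    · rw [hp, if_neg (by have := key i hi; omega)]
    · exact le_refl 0
end

section
/- For the family p_D defined by the γ-coefficients (with n fixed, D → ∞), the ratio N₋(p_D)/N₊(p_D) tends to n − 1 as D → ∞. In particular, N₋(p_D) ≥ ((n−1)/n)·C(D−n, n−1) and N₊(p_D) = C(D+n−1, n−1) − N₋(p_D). -/
open MvPolynomial Filter

private lemma aux_card7 (n D : ℕ) (hn : 1 ≤ n) :
    ((Finset.univ : Finset (Fin n)).finsuppAntidiag D).card = (D + n - 1).choose (n - 1) := by
  classical
  rw [← Fintype.card_coe]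
  have e : {x // x ∈ (Finset.univ : Finset (Fin n)).finsuppAntidiag D} ≃ Sym (Fin n) D := by
    refine (Equiv.subtypeEquivRight ?_).trans (Sym.equivNatSum (Fin n) D).symm
    intro f
    rw [Finset.mem_finsuppAntidiag]
    constructor
    · rintro ⟨h, -⟩
      rw [Finsupp.sum_fintype]
      · exact h
      · intro; rfl
    · intro h
      refine ⟨?_, Finset.subset_univ _⟩
      rw [Finsupp.sum_fintype] at h
      · exact h
      · intro; rfl
  rw [Fintype.card_congr e, Sym.card_sym_eq_choose, Fintype.card_fin]
  have h1 : D ≤ n + D - 1 := by omega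
  have := Nat.choose_symm h1
  have h2 : n + D - 1 - D = n - 1 := by omega
  rw [h2] at this
  rw [← this]
  congr 1
  omega

private lemma aux_count7 (n : ℕ) (hn : 2 ≤ n) (D : ℕ) (hD : 3 * n < D)
    (Neg Pos : Finset (Fin n →₀ ℕ))
    (hNeg : ∀ α : Fin n →₀ ℕ, ((α.sum fun _ e => e) = D → (∀ k, 1 ≤ α k) →
      ¬ ((((∑ k : Fin n, (if (k : ℕ) < n - 1 then (k : ℕ) + 1 else 0) * α k : ℕ) : ℤ) - (D : ℤ)) % (n : ℤ) = 0) →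
      α ∈ Neg))
    (hPos : ∀ α : Fin n →₀ ℕ, ((α.sum fun _ e => e) = D → (∀ k, 1 ≤ α k) →
      ((((∑ k : Fin n, (if (k : ℕ) < n - 1 then (k : ℕ) + 1 else 0) * α k : ℕ) : ℤ) - (D : ℤ)) % (n : ℤ) = 0) →
      α ∈ Pos)) :
    (n - 1) * (D - n).choose (n - 1) ≤ n * Neg.card ∧
      (D - n).choose (n - 1) ≤ n * Pos.card := by
  classical
  set c : Fin n → ℕ := fun k => if (k : ℕ) < n - 1 then (k : ℕ) + 1 else 0 with hc
  set S : (Fin n →₀ ℕ) → ℕ := fun α => ∑ k : Fin n, c k * α k with hS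
  set B : Finset (Fin n →₀ ℕ) := (Finset.univ : Finset (Fin n)).finsuppAntidiag (D - (2 * n - 1)) with hB
  have hzlt : (0 : ℕ) < n := by omega
  set z : Fin n := ⟨0, hzlt⟩ with hz
  set l : Fin n := ⟨n - 1, by omega⟩ with hl
  have hzl : z ≠ l := by
    intro h
    have := congrArg Fin.val h
    simp [hz, hl] at this
    omega
  set b : Fin n → Fin n → ℕ := fun j k =>
    1 + (if k = z then n - 1 - (j : ℕ) else 0) + (if k = l then (j : ℕ) else 0) with hb
  set Φ : Fin n → (Fin n →₀ ℕ) → (Fin n →₀ ℕ) :=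
    fun j β => β + Finsupp.equivFunOnFinite.symm (b j) with hΦ
  have hΦapp : ∀ j β k, Φ j β k = β k + b j k := by
    intro j β k; simp [hΦ]
  have hmemB : ∀ β : Fin n →₀ ℕ, β ∈ B ↔ ∑ k : Fin n, β k = D - (2 * n - 1) := by
    intro β
    rw [hB, Finset.mem_finsuppAntidiag]
    constructor
    · rintro ⟨h, -⟩; exact h
    · intro h; exact ⟨h, Finset.subset_univ _⟩
  have hbsum : ∀ j : Fin n, ∑ k : Fin n, b j k = 2 * n - 1 := by
    intro j
    have hj : (j : ℕ) < n := j.isLt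
    simp only [hb]
    rw [Finset.sum_add_distrib, Finset.sum_add_distrib, Finset.sum_const,
      Finset.sum_ite_eq' Finset.univ z (fun _ => n - 1 - (j : ℕ)),
      Finset.sum_ite_eq' Finset.univ l (fun _ => (j : ℕ))]
    simp only [Finset.mem_univ, if_true, Finset.card_univ, Fintype.card_fin, smul_eq_mul, mul_one]
    omega
  have hΦsum : ∀ (j : Fin n) (β : Fin n →₀ ℕ), β ∈ B → ((Φ j β).sum fun _ e => e) = D := by
    intro j β hβ
    rw [(hmemB β)] at hβ
    rw [Finsupp.sum_fintype _ _ (fun _ => rfl)]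
    have : ∀ k, Φ j β k = β k + b j k := hΦapp j β
    calc ∑ k : Fin n, Φ j β k = ∑ k : Fin n, (β k + b j k) := by
          exact Finset.sum_congr rfl fun k _ => this k
      _ = (∑ k : Fin n, β k) + ∑ k : Fin n, b j k := Finset.sum_add_distrib
      _ = D := by rw [hβ, hbsum j]; omega
  have hcz : c z = 1 := by simp [hc, hz]; omega
  have hcl : c l = 0 := by simp [hc, hl]
  have hSΦ : ∀ (j : Fin n) (β : Fin n →₀ ℕ), S (Φ j β) = S β + ((∑ k : Fin n, c k) + (n - 1 - (j : ℕ))) := by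
    intro j β
    simp only [hS]
    calc ∑ k : Fin n, c k * Φ j β k = ∑ k : Fin n, (c k * β k + (c k * 1 + (c k * (if k = z then n - 1 - (j:ℕ) else 0) + c k * (if k = l then (j:ℕ) else 0)))) := by
          refine Finset.sum_congr rfl fun k _ => ?_
          rw [hΦapp j β k]
          simp only [hb]
          ring
      _ = (∑ k : Fin n, c k * β k) + ((∑ k : Fin n, c k * 1) + ((∑ k : Fin n, c k * (if k = z then n - 1 - (j:ℕ) else 0)) + ∑ k : Fin n, c k * (if k = l then (j:ℕ) else 0))) := by
          rw [Finset.sum_add_distrib, Finset.sum_add_distrib, Finset.sum_add_distrib]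
      _ = (∑ k : Fin n, c k * β k) + ((∑ k : Fin n, c k) + (n - 1 - (j : ℕ))) := by
          congr 1
          have e1 : ∑ k : Fin n, c k * (if k = z then n - 1 - (j:ℕ) else 0) = c z * (n - 1 - (j:ℕ)) := by
            simp [mul_ite, mul_zero, Finset.sum_ite_eq']
          have e2 : ∑ k : Fin n, c k * (if k = l then (j:ℕ) else 0) = c l * (j:ℕ) := by
            simp [mul_ite, mul_zero, Finset.sum_ite_eq']
          rw [e1, e2, hcz, hcl]
          simp [mul_one]
      _ = _ := rfl
  set C0 : ℕ := ∑ k : Fin n, c k with hC0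
  set A : (Fin n →₀ ℕ) → ℤ := fun β => (S β : ℤ) + C0 + (n - 1) - D with hA
  have hSdef : ∀ α : Fin n →₀ ℕ,
      (∑ k : Fin n, (if (k : ℕ) < n - 1 then (k : ℕ) + 1 else 0) * α k) = S α := fun _ => rfl
  have hcong : ∀ (j : Fin n) (β : Fin n →₀ ℕ),
      (((S (Φ j β) : ℕ) : ℤ) - D) % n = 0 ↔ (A β - (j : ℕ)) % n = 0 := by
    intro j β
    have hj : (j : ℕ) ≤ n - 1 := by have := j.isLt; omega
    have : ((S (Φ j β) : ℕ) : ℤ) - D = A β - (j : ℕ) := by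
      rw [hSΦ j β, hA]
      push_cast
      omega
    rw [this]
  have hn0 : (0 : ℤ) < n := by exact_mod_cast hzlt
  have hone : ∀ A' : ℤ, (Finset.univ.filter (fun j : Fin n => (A' - (j : ℕ)) % n = 0)).card = 1 := by
    intro A'
    have h1 : 0 ≤ A' % n := Int.emod_nonneg A' (by omega)
    have h2 : A' % n < n := Int.emod_lt_of_pos A' hn0
    rw [Finset.card_eq_one]
    refine ⟨⟨(A' % n).toNat, by omega⟩, ?_⟩
    have hiff : ∀ j : Fin n, (A' - (j : ℕ)) % n = 0 ↔ ((j : ℕ) : ℤ) = A' % n := by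
      intro j
      constructor
      · intro h
        have h3 := Int.emod_eq_emod_iff_emod_sub_eq_zero.mpr h
        rw [Int.emod_eq_of_lt (a := ((j : ℕ) : ℤ)) (b := (n : ℤ))
          (Int.natCast_nonneg _) (by exact_mod_cast j.isLt)] at h3
        exact h3.symm
      · intro h
        apply Int.emod_eq_emod_iff_emod_sub_eq_zero.mp
        rw [h]
        exact (Int.emod_emod_of_dvd _ dvd_rfl).symm
    ext j
    simp only [Finset.mem_filter, Finset.mem_univ, true_and, Finset.mem_singleton]
    rw [hiff j]
    constructor
    · intro h
      apply Fin.ext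
      simp only []
      omega
    · rintro rfl
      simp only []
      rw [Int.toNat_of_nonneg h1]
  have hbadcount : ∀ A' : ℤ,
      (Finset.univ.filter (fun j : Fin n => ¬ ((A' - (j : ℕ)) % n = 0))).card = n - 1 := by
    intro A'
    have h1 := Finset.card_filter_add_card_filter_not
      (s := (Finset.univ : Finset (Fin n))) (p := fun j : Fin n => (A' - (j : ℕ)) % n = 0)
    rw [hone A'] at h1
    rw [Finset.card_univ, Fintype.card_fin] at h1
    omega
  have hbad_le : ∀ j : Fin n,
      (B.filter (fun β => ¬ ((A β - (j : ℕ)) % n = 0))).card ≤ Neg.card := by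
    intro j
    apply Finset.card_le_card_of_injOn (Φ j)
    · intro β hβ
      rw [Finset.mem_coe, Finset.mem_filter] at hβ
      obtain ⟨hβB, hbad⟩ := hβ
      apply hNeg _ (hΦsum j β hβB)
      · intro k
        rw [hΦapp]
        simp only [hb]
        omega
      · rw [hSdef, hcong j β]
        exact hbad
    · intro β1 _ β2 _ heq
      exact add_left_injective _ heq
  have hgood_le : ∀ j : Fin n,
      (B.filter (fun β => (A β - (j : ℕ)) % n = 0)).card ≤ Pos.card := by
    intro j
    apply Finset.card_le_card_of_injOn (Φ j)
    · intro β hβ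
      rw [Finset.mem_coe, Finset.mem_filter] at hβ
      obtain ⟨hβB, hgood⟩ := hβ
      apply hPos _ (hΦsum j β hβB)
      · intro k
        rw [hΦapp]
        simp only [hb]
        omega
      · rw [hSdef, hcong j β]
        exact hgood
    · intro β1 _ β2 _ heq
      exact add_left_injective _ heq
  have hsum_bad : ∑ j : Fin n, (B.filter (fun β => ¬ ((A β - (j : ℕ)) % n = 0))).card
      = (n - 1) * B.card := by
    simp_rw [Finset.card_filter]
    rw [Finset.sum_comm]
    have : ∀ β ∈ B, (∑ j : Fin n, if ¬ ((A β - (j : ℕ)) % n = 0) then 1 else 0) = n - 1 := by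
      intro β _
      have := hbadcount (A β)
      rw [Finset.card_filter] at this
      exact this
    rw [Finset.sum_congr rfl this, Finset.sum_const, smul_eq_mul, mul_comm]
  have hsum_good : ∑ j : Fin n, (B.filter (fun β => (A β - (j : ℕ)) % n = 0)).card
      = B.card := by
    simp_rw [Finset.card_filter]
    rw [Finset.sum_comm]
    have : ∀ β ∈ B, (∑ j : Fin n, if (A β - (j : ℕ)) % n = 0 then 1 else 0) = 1 := by
      intro β _
      have := hone (A β)
      rw [Finset.card_filter] at this
      exact this
    rw [Finset.sum_congr rfl this, Finset.sum_const, smul_eq_mul, mul_one]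
  have hBcard : B.card = (D - n).choose (n - 1) := by
    rw [hB, aux_card7 n _ (by omega)]
    congr 1
    omega
  constructor
  · calc (n - 1) * (D - n).choose (n - 1) = (n - 1) * B.card := by rw [hBcard]
      _ = ∑ j : Fin n, (B.filter (fun β => ¬ ((A β - (j : ℕ)) % n = 0))).card := hsum_bad.symm
      _ ≤ ∑ _j : Fin n, Neg.card := Finset.sum_le_sum fun j _ => hbad_le j
      _ = n * Neg.card := by rw [Finset.sum_const, smul_eq_mul, Finset.card_univ, Fintype.card_fin]
  · have hex : ∃ j : Fin n, B.card ≤ n * (B.filter (fun β => (A β - (j : ℕ)) % n = 0)).card := by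
      by_contra hcon
      push_neg at hcon
      haveI : Nonempty (Fin n) := ⟨z⟩
      have h1 : ∑ j : Fin n, n * (B.filter (fun β => (A β - (j : ℕ)) % n = 0)).card
          < ∑ _j : Fin n, B.card := by
        apply Finset.sum_lt_sum_of_nonempty
        · exact Finset.univ_nonempty
        · intro j _
          exact hcon j
      rw [← Finset.mul_sum, hsum_good, Finset.sum_const, smul_eq_mul, Finset.card_univ,
        Fintype.card_fin] at h1
      omega
    obtain ⟨j, hj⟩ := hex
    calc (D - n).choose (n - 1) = B.card := hBcard.symm
      _ ≤ n * (B.filter (fun β => (A β - (j : ℕ)) % n = 0)).card := hj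
      _ ≤ n * Pos.card := Nat.mul_le_mul_left n (hgood_le j)

private lemma aux_frac7 (a b : ℝ) :
    Tendsto (fun D : ℕ => ((D : ℝ) - a) / ((D : ℝ) + b)) atTop (nhds 1) := by
  have h0 : Tendsto (fun D : ℕ => (D : ℝ) + b) atTop atTop :=
    tendsto_atTop_add_const_right _ b tendsto_natCast_atTop_atTop
  have h1 : Tendsto (fun D : ℕ => (a + b) / ((D : ℝ) + b)) atTop (nhds 0) :=
    Tendsto.div_atTop tendsto_const_nhds h0
  have h2 : Tendsto (fun D : ℕ => 1 - (a + b) / ((D : ℝ) + b)) atTop (nhds (1 - 0)) :=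
    tendsto_const_nhds.sub h1
  rw [sub_zero] at h2
  apply h2.congr'
  filter_upwards [h0.eventually_gt_atTop 0] with D hD
  field_simp
  ring

private lemma aux_ratio7 (n : ℕ) (hn : 2 ≤ n) :
    Tendsto (fun D : ℕ => (((D - n).choose (n - 1) : ℕ) : ℝ) / (((D + n - 1).choose (n - 1) : ℕ) : ℝ))
      atTop (nhds 1) := by
  have key : Tendsto (fun D : ℕ => ∏ i ∈ Finset.range (n - 1),
      (((D : ℝ) - (n + i)) / ((D : ℝ) + ((n - 1 - i : ℕ) : ℝ)))) atTop (nhds 1) := by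
    have := tendsto_finset_prod (f := fun (i : ℕ) (D : ℕ) =>
        ((D : ℝ) - (n + i)) / ((D : ℝ) + ((n - 1 - i : ℕ) : ℝ)))
      (x := atTop) (a := fun _ => (1 : ℝ)) (Finset.range (n - 1))
      (fun i _ => aux_frac7 _ _)
    simpa using this
  apply key.congr'
  filter_upwards [eventually_ge_atTop (2 * n)] with D hD
  have hfact : ((n - 1).factorial : ℝ) ≠ 0 := by positivity
  have h1 : (((D - n).choose (n - 1) : ℕ) : ℝ)
      = (((D - n).descFactorial (n - 1) : ℕ) : ℝ) / ((n - 1).factorial : ℝ) := by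
    rw [Nat.descFactorial_eq_factorial_mul_choose]
    push_cast
    field_simp
  have h2 : (((D + n - 1).choose (n - 1) : ℕ) : ℝ)
      = (((D + n - 1).descFactorial (n - 1) : ℕ) : ℝ) / ((n - 1).factorial : ℝ) := by
    rw [Nat.descFactorial_eq_factorial_mul_choose]
    push_cast
    field_simp
  have hd2 : (((D + n - 1).descFactorial (n - 1) : ℕ) : ℝ) ≠ 0 := by
    have : (D + n - 1).descFactorial (n - 1) ≠ 0 := by
      rw [Ne, Nat.descFactorial_eq_zero_iff_lt]
      omega
    exact_mod_cast this
  have hprod1 : (((D - n).descFactorial (n - 1) : ℕ) : ℝ)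
      = ∏ i ∈ Finset.range (n - 1), ((D : ℝ) - (n + i)) := by
    rw [Nat.descFactorial_eq_prod_range]
    push_cast
    apply Finset.prod_congr rfl
    intro i hi
    rw [Finset.mem_range] at hi
    rw [Nat.cast_sub (by omega)]
    push_cast [Nat.cast_sub (show n ≤ D by omega)]
    ring
  have hprod2 : (((D + n - 1).descFactorial (n - 1) : ℕ) : ℝ)
      = ∏ i ∈ Finset.range (n - 1), ((D : ℝ) + ((n - 1 - i : ℕ) : ℝ)) := by
    rw [Nat.descFactorial_eq_prod_range]
    push_cast
    apply Finset.prod_congr rfl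
    intro i hi
    rw [Finset.mem_range] at hi
    have : D + n - 1 - i = D + (n - 1 - i) := by omega
    rw [this]
    push_cast
    ring
  rw [Finset.prod_div_distrib, ← hprod1, ← hprod2, h1, h2]
  field_simp

theorem stmt7 (n : ℕ) (hn : 2 ≤ n) (γ : ℕ → (Fin n →₀ ℕ) → ℝ)
    (hγ0 : ∀ (D : ℕ) (α : Fin n →₀ ℕ), (∃ k, α k = 0) → γ D α = (n : ℝ) - 1)
    (hγ1 : ∀ (D : ℕ) (α : Fin n →₀ ℕ), (∀ k, 1 ≤ α k) →
      (((∑ k : Fin n, (if (k : ℕ) < n - 1 then (k : ℕ) + 1 else 0) * α k : ℕ) : ℤ) - (D : ℤ)) % (n : ℤ) = 0 →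
      γ D α = (n : ℝ) - 1)
    (hγ2 : ∀ (D : ℕ) (α : Fin n →₀ ℕ), (∀ k, 1 ≤ α k) →
      ¬ ((((∑ k : Fin n, (if (k : ℕ) < n - 1 then (k : ℕ) + 1 else 0) * α k : ℕ) : ℤ) - (D : ℤ)) % (n : ℤ) = 0) →
      γ D α = -1)
    (p : ℕ → MvPolynomial (Fin n) ℝ)
    (hp : ∀ (D : ℕ) (α : Fin n →₀ ℕ),
      (p D).coeff α = if (α.sum fun _ e => e) = D then γ D α else 0) :
    (∀ D : ℕ, 3 * n < D →
      ((n : ℝ) - 1) / n * (Nat.choose (D - n) (n - 1)) ≤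
        (((p D).support.filter fun m => (p D).coeff m < 0).card : ℝ) ∧
      ((p D).support.filter fun m => 0 < (p D).coeff m).card =
        Nat.choose (D + n - 1) (n - 1) -
          ((p D).support.filter fun m => (p D).coeff m < 0).card) ∧
    Tendsto (fun D : ℕ =>
        (((p D).support.filter fun m => (p D).coeff m < 0).card : ℝ) /
          (((p D).support.filter fun m => 0 < (p D).coeff m).card : ℝ))
      atTop (nhds ((n : ℝ) - 1)) := by
  classical
  have hnR : (0 : ℝ) < n := by positivity
  have hn1R : (1 : ℝ) ≤ (n : ℝ) - 1 := by
    have : (2 : ℝ) ≤ (n : ℝ) := by exact_mod_cast hn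
    linarith
  have hγval : ∀ (D : ℕ) (α : Fin n →₀ ℕ),
      γ D α = (n : ℝ) - 1 ∨ (γ D α = -1 ∧ (∀ k, 1 ≤ α k) ∧
        ¬ ((((∑ k : Fin n, (if (k : ℕ) < n - 1 then (k : ℕ) + 1 else 0) * α k : ℕ) : ℤ) - (D : ℤ)) % (n : ℤ) = 0)) := by
    intro D α
    by_cases h0 : ∃ k, α k = 0
    · exact Or.inl (hγ0 D α h0)
    · push_neg at h0
      have h1 : ∀ k, 1 ≤ α k := fun k => Nat.one_le_iff_ne_zero.mpr (h0 k)
      by_cases h2 : (((∑ k : Fin n, (if (k : ℕ) < n - 1 then (k : ℕ) + 1 else 0) * α k : ℕ) : ℤ) - (D : ℤ)) % (n : ℤ) = 0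
      · exact Or.inl (hγ1 D α h1 h2)
      · exact Or.inr ⟨hγ2 D α h1 h2, h1, h2⟩
  have hγne : ∀ (D : ℕ) (α : Fin n →₀ ℕ), γ D α ≠ 0 := by
    intro D α
    rcases hγval D α with h | ⟨h, -⟩ <;> rw [h] <;> intro hc <;> [linarith; norm_num at hc]
  have hsupp : ∀ (D : ℕ) (α : Fin n →₀ ℕ), α ∈ (p D).support ↔ (α.sum fun _ e => e) = D := by
    intro D α
    rw [MvPolynomial.mem_support_iff, hp]
    split_ifs with h
    · simp [h, hγne D α]
    · simp [h]
  have hsuppcard : ∀ D : ℕ, (p D).support.card = (D + n - 1).choose (n - 1) := by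
    intro D
    have : (p D).support = (Finset.univ : Finset (Fin n)).finsuppAntidiag D := by
      ext α
      rw [hsupp D α, Finset.mem_finsuppAntidiag']
      constructor
      · intro h; exact ⟨h, Finset.subset_univ _⟩
      · rintro ⟨h, -⟩; exact h
    rw [this, aux_card7 n D (by omega)]
  -- membership in Neg characterization
  have hNegMem : ∀ (D : ℕ) (α : Fin n →₀ ℕ),
      ((α.sum fun _ e => e) = D → (∀ k, 1 ≤ α k) →
      ¬ ((((∑ k : Fin n, (if (k : ℕ) < n - 1 then (k : ℕ) + 1 else 0) * α k : ℕ) : ℤ) - (D : ℤ)) % (n : ℤ) = 0) →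
      α ∈ (p D).support.filter fun m => (p D).coeff m < 0) := by
    intro D α hs h1 h2
    rw [Finset.mem_filter]
    refine ⟨(hsupp D α).mpr hs, ?_⟩
    rw [hp, if_pos hs, hγ2 D α h1 h2]
    norm_num
  have hPosMem : ∀ (D : ℕ) (α : Fin n →₀ ℕ),
      ((α.sum fun _ e => e) = D → (∀ k, 1 ≤ α k) →
      ((((∑ k : Fin n, (if (k : ℕ) < n - 1 then (k : ℕ) + 1 else 0) * α k : ℕ) : ℤ) - (D : ℤ)) % (n : ℤ) = 0) →
      α ∈ (p D).support.filter fun m => 0 < (p D).coeff m) := by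
    intro D α hs h1 h2
    rw [Finset.mem_filter]
    refine ⟨(hsupp D α).mpr hs, ?_⟩
    rw [hp, if_pos hs, hγ1 D α h1 h2]
    linarith
  -- cardinal split
  have hsplit : ∀ D : ℕ,
      ((p D).support.filter fun m => (p D).coeff m < 0).card
        + ((p D).support.filter fun m => 0 < (p D).coeff m).card
        = (D + n - 1).choose (n - 1) := by
    intro D
    have hfe : ((p D).support.filter fun m => 0 < (p D).coeff m)
        = ((p D).support.filter fun m => ¬ ((p D).coeff m < 0)) := by
      apply Finset.filter_congr
      intro α hα
      have hne : (p D).coeff α ≠ 0 := MvPolynomial.mem_support_iff.mp hα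
      constructor
      · intro h; exact not_lt.mpr h.le
      · intro h
        exact lt_of_le_of_ne (not_lt.mp h) (Ne.symm hne)
    rw [hfe, Finset.card_filter_add_card_filter_not, hsuppcard D]
  -- key counting facts
  have hkey : ∀ D : ℕ, 3 * n < D →
      (n - 1) * (D - n).choose (n - 1)
        ≤ n * ((p D).support.filter fun m => (p D).coeff m < 0).card ∧
      (D - n).choose (n - 1)
        ≤ n * ((p D).support.filter fun m => 0 < (p D).coeff m).card := by
    intro D hD
    exact aux_count7 n hn D hD _ _ (hNegMem D) (hPosMem D)
  have hmain : ∀ D : ℕ, 3 * n < D →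
      ((n : ℝ) - 1) / n * (Nat.choose (D - n) (n - 1)) ≤
        (((p D).support.filter fun m => (p D).coeff m < 0).card : ℝ) ∧
      ((p D).support.filter fun m => 0 < (p D).coeff m).card =
        Nat.choose (D + n - 1) (n - 1) -
          ((p D).support.filter fun m => (p D).coeff m < 0).card := by
    intro D hD
    obtain ⟨h1, h2⟩ := hkey D hD
    constructor
    · have h1R : ((n : ℝ) - 1) * ((D - n).choose (n - 1) : ℝ)
          ≤ (n : ℝ) * (((p D).support.filter fun m => (p D).coeff m < 0).card : ℝ) := by
        have := Nat.cast_le (α := ℝ) |>.mpr h1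
        push_cast at this
        have hcast : ((n : ℝ) - 1) = ((n - 1 : ℕ) : ℝ) := by
          rw [Nat.cast_sub (by omega)]
          norm_num
        rw [hcast]
        push_cast
        convert this using 2
      rw [div_mul_eq_mul_div, div_le_iff₀ hnR]
      nlinarith [h1R]
    · have := hsplit D
      omega
  refine ⟨hmain, ?_⟩
  have hq := aux_ratio7 n hn
  set q : ℕ → ℝ := fun D =>
    (((D - n).choose (n - 1) : ℕ) : ℝ) / (((D + n - 1).choose (n - 1) : ℕ) : ℝ) with hqdef
  set c1 : ℝ := ((n : ℝ) - 1) / n with hc1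
  have hc1pos : 0 < c1 := by rw [hc1]; positivity
  have h1c1 : 1 - c1 = 1 / n := by
    rw [hc1]
    field_simp
    ring
  have h1c1pos : (0 : ℝ) < 1 - c1 := by rw [h1c1]; positivity
  -- limits of bounding functions
  have hL : Tendsto (fun D : ℕ => c1 * q D / (1 - c1 * q D)) atTop (nhds ((n : ℝ) - 1)) := by
    have hnum : Tendsto (fun D : ℕ => c1 * q D) atTop (nhds (c1 * 1)) := hq.const_mul c1
    have hden : Tendsto (fun D : ℕ => 1 - c1 * q D) atTop (nhds (1 - c1 * 1)) :=
      tendsto_const_nhds.sub hnum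
    have := hnum.div hden (by rw [mul_one]; linarith)
    have hval : c1 * 1 / (1 - c1 * 1) = (n : ℝ) - 1 := by
      rw [mul_one, h1c1, hc1]
      field_simp
    rwa [hval] at this
  have hU : Tendsto (fun D : ℕ => (1 - q D / n) / (q D / n)) atTop (nhds ((n : ℝ) - 1)) := by
    have hden : Tendsto (fun D : ℕ => q D / n) atTop (nhds (1 / n)) := hq.div_const n
    have hnum : Tendsto (fun D : ℕ => 1 - q D / n) atTop (nhds (1 - 1 / n)) :=
      tendsto_const_nhds.sub hden
    have := hnum.div hden (by positivity)
    have hval : (1 - 1 / (n : ℝ)) / (1 / n) = (n : ℝ) - 1 := by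
      field_simp
    rwa [hval] at this
  -- squeeze
  apply tendsto_of_tendsto_of_tendsto_of_le_of_le' hL hU
  · filter_upwards [eventually_gt_atTop (3 * n)] with D hD
    obtain ⟨h1, h2⟩ := hkey D hD
    have h3 := hsplit D
    set xn : ℕ := ((p D).support.filter fun m => (p D).coeff m < 0).card with hxn
    set yn : ℕ := ((p D).support.filter fun m => 0 < (p D).coeff m).card with hyn
    set X : ℝ := (xn : ℝ) with hX
    set Y : ℝ := (yn : ℝ) with hY
    set Bb : ℝ := (((D - n).choose (n - 1) : ℕ) : ℝ) with hBb
    set T : ℝ := (((D + n - 1).choose (n - 1) : ℕ) : ℝ) with hT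
    have hbpos : 0 < (D - n).choose (n - 1) := Nat.choose_pos (by omega)
    have hBb0 : 0 < Bb := by rw [hBb]; exact_mod_cast hbpos
    have hynpos : 0 < yn := by
      rcases Nat.eq_zero_or_pos yn with h | h
      · rw [h, Nat.mul_zero] at h2; omega
      · exact h
    have hY0 : 0 < Y := by rw [hY]; exact_mod_cast hynpos
    have hTB : Bb ≤ T := by
      rw [hBb, hT]
      exact_mod_cast Nat.choose_le_choose (n - 1) (by omega : D - n ≤ D + n - 1)
    have hT0 : 0 < T := lt_of_lt_of_le hBb0 hTB
    have hXY : X + Y = T := by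
      rw [hX, hY, hT]
      exact_mod_cast h3
    have hqD : q D = Bb / T := rfl
    have hXc : c1 * Bb ≤ X := by
      have h1R : ((n : ℝ) - 1) * Bb ≤ (n : ℝ) * X := by
        have := Nat.cast_le (α := ℝ) |>.mpr h1
        push_cast at this
        have hcast : ((n - 1 : ℕ) : ℝ) = (n : ℝ) - 1 := by
          rw [Nat.cast_sub (by omega)]
          norm_num
        rw [hcast] at this
        exact this
      rw [hc1, div_mul_eq_mul_div, div_le_iff₀ hnR]
      nlinarith
    have hYle : Y ≤ T - c1 * Bb := by
      have hXge : c1 * Bb ≤ X := hXc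
      linarith
    have hden0 : 0 < T - c1 * Bb := lt_of_lt_of_le hY0 hYle
    have heq : c1 * q D / (1 - c1 * q D) = c1 * Bb / (T - c1 * Bb) := by
      rw [hqD]
      have h4 : 1 - c1 * (Bb / T) = (T - c1 * Bb) / T := by
        field_simp
      have h5 : 1 - c1 * (Bb / T) ≠ 0 := by
        rw [h4]; exact (div_pos hden0 hT0).ne'
      rw [div_eq_div_iff h5 (ne_of_gt hden0), h4]
      field_simp
    rw [heq]
    calc c1 * Bb / (T - c1 * Bb) ≤ c1 * Bb / Y :=
          div_le_div_of_nonneg_left (by positivity) hY0 hYle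
      _ ≤ X / Y := div_le_div_of_nonneg_right hXc hY0.le
  · filter_upwards [eventually_gt_atTop (3 * n)] with D hD
    obtain ⟨h1, h2⟩ := hkey D hD
    have h3 := hsplit D
    set xn : ℕ := ((p D).support.filter fun m => (p D).coeff m < 0).card with hxn
    set yn : ℕ := ((p D).support.filter fun m => 0 < (p D).coeff m).card with hyn
    set X : ℝ := (xn : ℝ) with hX
    set Y : ℝ := (yn : ℝ) with hY
    set Bb : ℝ := (((D - n).choose (n - 1) : ℕ) : ℝ) with hBb
    set T : ℝ := (((D + n - 1).choose (n - 1) : ℕ) : ℝ) with hT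
    have hbpos : 0 < (D - n).choose (n - 1) := Nat.choose_pos (by omega)
    have hBb0 : 0 < Bb := by rw [hBb]; exact_mod_cast hbpos
    have hynpos : 0 < yn := by
      rcases Nat.eq_zero_or_pos yn with h | h
      · rw [h, Nat.mul_zero] at h2; omega
      · exact h
    have hY0 : 0 < Y := by rw [hY]; exact_mod_cast hynpos
    have hTB : Bb ≤ T := by
      rw [hBb, hT]
      exact_mod_cast Nat.choose_le_choose (n - 1) (by omega : D - n ≤ D + n - 1)
    have hT0 : 0 < T := lt_of_lt_of_le hBb0 hTB
    have hXY : X + Y = T := by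
      rw [hX, hY, hT]
      exact_mod_cast h3
    have hqD : q D = Bb / T := rfl
    have hX0 : 0 ≤ X := by rw [hX]; positivity
    have hYge : Bb / n ≤ Y := by
      have h2R : Bb ≤ (n : ℝ) * Y := by
        have := Nat.cast_le (α := ℝ) |>.mpr h2
        push_cast at this
        exact this
      rw [div_le_iff₀ hnR]
      linarith
    have hXle : X ≤ T - Bb / n := by linarith
    have hBn0 : 0 < Bb / n := by positivity
    have heq : (1 - q D / n) / (q D / n) = (T - Bb / n) / (Bb / n) := by
      rw [hqD]
      have hTne : T ≠ 0 := ne_of_gt hT0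
      have hBne : Bb ≠ 0 := ne_of_gt hBb0
      have hnne : (n : ℝ) ≠ 0 := ne_of_gt hnR
      field_simp
    rw [heq]
    calc X / Y ≤ (T - Bb / n) / Y := div_le_div_of_nonneg_right hXle hY0.le
      _ ≤ (T - Bb / n) / (Bb / n) :=
          div_le_div_of_nonneg_left (by linarith) hBn0 hYge
end

section
/- Let r(z,z̄) be a real polynomial on ℂⁿ, n ≥ 2, d ≥ 1, with signature pair (N₊, N₋), and suppose r(z,z̄)·‖z‖^{2d} is a squared norm. Then N₋/N₊ ≤ C(n−1+d, d) − 1, where C denotes the binomial coefficient. -/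
open MvPolynomial Complex Module

section Helpers

lemma vanish_fin : ∀ (m : ℕ) (q : MvPolynomial (Fin m) ℂ),
    (∀ x : Fin m → ℝ, eval (fun i => (x i : ℂ)) q = 0) → q = 0 := by
  intro m
  induction m with
  | zero =>
    intro q hq
    have := hq (fun _ => 0)
    rw [eq_C_of_isEmpty q, eval_C] at this
    rw [eq_C_of_isEmpty q, this, map_zero]
  | succ m ih =>
    intro q hq
    have key : ∀ s : Fin m → ℝ,
        Polynomial.map (eval (fun i => ((s i : ℝ) : ℂ))) (finSuccEquiv ℂ m q) = 0 := by
      intro s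
      apply Polynomial.eq_zero_of_infinite_isRoot
      apply Set.Infinite.mono (s := Set.range ((↑·) : ℝ → ℂ))
      · rintro x ⟨y, rfl⟩
        have hc : (fun i => (((Fin.cons y s : Fin (m+1) → ℝ) i : ℝ) : ℂ))
            = Fin.cons (y : ℂ) (fun i => ((s i : ℝ) : ℂ)) := by
          ext i
          refine Fin.cases ?_ ?_ i <;> simp
        have := hq (Fin.cons y s)
        rw [hc, eval_eq_eval_mv_eval'] at this
        exact this
      · exact Set.infinite_range_of_injective Complex.ofReal_injective
    have h0 : finSuccEquiv ℂ m q = 0 := by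
      apply Polynomial.ext
      intro k
      rw [Polynomial.coeff_zero]
      apply ih
      intro x
      have := congrArg (fun p => Polynomial.coeff p k) (key x)
      simpa [Polynomial.coeff_map] using this
    have := congrArg (finSuccEquiv ℂ m).symm h0
    simpa using this

lemma vanish_real {σ : Type*} [Fintype σ] (q : MvPolynomial σ ℂ)
    (hq : ∀ x : σ → ℝ, eval (fun i => (x i : ℂ)) q = 0) : q = 0 := by
  have h := vanish_fin (Fintype.card σ) (rename (Fintype.equivFin σ) q) ?_
  · have := congrArg (rename (Fintype.equivFin σ).symm) h
    rwa [rename_rename, map_zero, show ((Fintype.equivFin σ).symm ∘ (Fintype.equivFin σ)) = id by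
      ext i; simp, rename_id] at this
  · intro x
    rw [eval_rename]
    exact hq _

/-- polarization: a polynomial in `z` and `w` vanishing whenever `w = conj z` is zero. -/
lemma polar {σ : Type*} [Fintype σ] (q : MvPolynomial (σ ⊕ σ) ℂ)
    (hq : ∀ z : σ → ℂ, eval (Sum.elim z (fun i => (starRingEnd ℂ) (z i))) q = 0) : q = 0 := by
  classical
  set u : σ ⊕ σ → MvPolynomial (σ ⊕ σ) ℂ := fun v =>
    Sum.elim (fun i => X (Sum.inl i) + C I * X (Sum.inr i))
      (fun i => X (Sum.inl i) - C I * X (Sum.inr i)) v with hu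
  set v : σ ⊕ σ → MvPolynomial (σ ⊕ σ) ℂ := fun s =>
    Sum.elim (fun i => C (2⁻¹ : ℂ) * (X (Sum.inl i) + X (Sum.inr i)))
      (fun i => C (-(I/2)) * (X (Sum.inl i) - X (Sum.inr i))) s with hv
  have hq' : bind₁ u q = 0 := by
    apply vanish_real
    intro x
    have hfun : (fun s => eval (fun i => ((x i : ℝ) : ℂ)) (u s))
        = Sum.elim (fun i => (x (Sum.inl i) : ℂ) + I * (x (Sum.inr i) : ℂ))
          (fun i => (starRingEnd ℂ) ((x (Sum.inl i) : ℂ) + I * (x (Sum.inr i) : ℂ))) := by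
      funext s; rcases s with i | i <;> simp [hu, Complex.ext_iff]
    calc eval (fun i => ((x i : ℝ) : ℂ)) (bind₁ u q)
        = eval (fun s => eval (fun i => ((x i : ℝ) : ℂ)) (u s)) q := by
          rw [show (eval fun i => ((x i : ℝ) : ℂ))
            = eval₂Hom (RingHom.id ℂ) (fun i => ((x i : ℝ) : ℂ)) from rfl, eval₂Hom_bind₁]
          rfl
      _ = 0 := by rw [hfun]; exact hq _
  have hIC : (C (I * -(I/2)) : MvPolynomial (σ ⊕ σ) ℂ) = C (2⁻¹ : ℂ) := by
    congr 1
    linear_combination (-(2:ℂ)⁻¹) * Complex.I_mul_I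
  have hC2 : (C (1/2 : ℂ) : MvPolynomial (σ ⊕ σ) ℂ) * 2 = 1 := by
    rw [← map_ofNat (C : ℂ →+* MvPolynomial (σ ⊕ σ) ℂ) 2, ← C_mul]
    norm_num
  have hcomp : bind₁ v (bind₁ u q) = q := by
    rw [bind₁_bind₁]
    have hX : (fun s => bind₁ v (u s)) = (X : σ ⊕ σ → MvPolynomial (σ ⊕ σ) ℂ) := by
      funext s
      rcases s with i | i
      · show bind₁ v (X (Sum.inl i) + C I * X (Sum.inr i)) = X (Sum.inl i)
        rw [map_add, map_mul, bind₁_X_right, bind₁_X_right, bind₁_C_right]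
        show C (2⁻¹:ℂ) * (X (Sum.inl i) + X (Sum.inr i))
          + C I * (C (-(I/2)) * (X (Sum.inl i) - X (Sum.inr i))) = X (Sum.inl i)
        rw [← mul_assoc, ← C_mul, hIC]
        ring_nf
        rw [mul_right_comm, hC2, one_mul]
      · show bind₁ v (X (Sum.inl i) - C I * X (Sum.inr i)) = X (Sum.inr i)
        rw [map_sub, map_mul, bind₁_X_right, bind₁_X_right, bind₁_C_right]
        show C (2⁻¹:ℂ) * (X (Sum.inl i) + X (Sum.inr i))
          - C I * (C (-(I/2)) * (X (Sum.inl i) - X (Sum.inr i))) = X (Sum.inr i)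
        rw [← mul_assoc, ← C_mul, hIC]
        ring_nf
        rw [mul_right_comm, hC2, one_mul]
    rw [hX, bind₁_X_left]
    simp
  rw [← hcomp, hq', map_zero]

lemma conj_eval {σ : Type*} (z : σ → ℂ) (p : MvPolynomial σ ℂ) :
    eval (fun i => (starRingEnd ℂ) (z i)) (map (starRingEnd ℂ) p)
      = (starRingEnd ℂ) (eval z p) := by
  rw [eval_map, show eval z p = eval₂ (RingHom.id ℂ) z p from rfl,
    eval₂_comp_left (starRingEnd ℂ) (RingHom.id ℂ) z p]
  rfl

lemma norm_sq_cast (c : ℂ) : ((‖c‖^2 : ℝ) : ℂ) = c * (starRingEnd ℂ) c := by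
  rw [Complex.mul_conj]
  norm_cast
  rw [Complex.sq_norm]

lemma span_dominate {σ : Type*} [Fintype σ] {ι κ μ : Type*} [Fintype ι] [Fintype κ] [Fintype μ]
    (a : ι → MvPolynomial σ ℂ) (b : κ → MvPolynomial σ ℂ) (hp : μ → MvPolynomial σ ℂ)
    (hyp : ∀ z : σ → ℂ, (∑ i, ‖eval z (a i)‖^2)
      = (∑ j, ‖eval z (b j)‖^2) + ∑ l, ‖eval z (hp l)‖^2) :
    ∀ j0, b j0 ∈ Submodule.span ℂ (Set.range a) := by
  classical
  set S := Submodule.span ℂ (Set.range a) with hS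
  set cP : MvPolynomial σ ℂ → MvPolynomial σ ℂ := fun p => map (starRingEnd ℂ) p with hcP
  set rl : MvPolynomial σ ℂ → MvPolynomial (σ ⊕ σ) ℂ := fun p => rename Sum.inl p with hrl
  set rr : MvPolynomial σ ℂ → MvPolynomial (σ ⊕ σ) ℂ := fun p => rename Sum.inr (cP p) with hrr
  have hterm : ∀ (z : σ → ℂ) (p : MvPolynomial σ ℂ),
      eval (Sum.elim z (fun i => (starRingEnd ℂ) (z i))) (rl p * rr p)
        = ((‖eval z p‖^2 : ℝ) : ℂ) := by
    intro z p
    rw [map_mul, hrl, hrr]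
    simp only [eval_rename]
    rw [show (Sum.elim z (fun i => (starRingEnd ℂ) (z i)) ∘ Sum.inl) = z from rfl,
      show (Sum.elim z (fun i => (starRingEnd ℂ) (z i)) ∘ Sum.inr)
        = (fun i => (starRingEnd ℂ) (z i)) from rfl, hcP, conj_eval, norm_sq_cast]
  set Q : MvPolynomial (σ ⊕ σ) ℂ :=
    (∑ i, rl (a i) * rr (a i)) - (∑ j, rl (b j) * rr (b j)) - ∑ l, rl (hp l) * rr (hp l) with hQdef
  have hQ : Q = 0 := by
    apply polar
    intro z
    rw [hQdef, map_sub, map_sub, map_sum, map_sum, map_sum]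
    simp only [hterm]
    norm_cast
    rw [hyp z]
    ring
  -- the coefficient-extraction ring hom
  let E : MvPolynomial (σ ⊕ σ) ℂ →+* MvPolynomial σ (MvPolynomial σ ℂ) :=
    RingHom.comp (↑(sumAlgEquiv ℂ σ σ).toAlgHom.toRingHom)
      (↑(rename (Equiv.sumComm σ σ : σ ⊕ σ → σ ⊕ σ)).toRingHom)
  have hEl : ∀ p, E (rl p)
      = (C : MvPolynomial σ ℂ →+* MvPolynomial σ (MvPolynomial σ ℂ)) p := by
    intro p
    have : E.comp (rename (Sum.inl : σ → σ ⊕ σ)).toRingHom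
        = (C : MvPolynomial σ ℂ →+* MvPolynomial σ (MvPolynomial σ ℂ)) := by
      apply ringHom_ext
      · intro c
        simp [E, sumAlgEquiv_C_inl]
      · intro i
        simp [E, sumAlgEquiv_X_inl, sumAlgEquiv_X_inr]
    exact RingHom.congr_fun this p
  have hEr : ∀ p, E (rename Sum.inr p) = map (C : ℂ →+* MvPolynomial σ ℂ) p := by
    intro p
    have : E.comp (rename (Sum.inr : σ → σ ⊕ σ)).toRingHom
        = (MvPolynomial.map (C : ℂ →+* MvPolynomial σ ℂ)) := by
      apply ringHom_ext
      · intro c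
        simp [E, sumAlgEquiv_C_inl]
      · intro i
        simp [E, sumAlgEquiv_X_inl, sumAlgEquiv_X_inr]
    exact RingHom.congr_fun this p
  have hcoeff : ∀ (β : σ →₀ ℕ) (p : MvPolynomial σ ℂ),
      coeff β (E (rl p * rr p)) = (starRingEnd ℂ) (coeff β p) • p := by
    intro β p
    rw [map_mul, hEl, hrr, hEr, coeff_C_mul, hcP, coeff_map, coeff_map, smul_eq_C_mul, mul_comm]
  have key : ∀ β : σ →₀ ℕ,
      ((∑ j, (starRingEnd ℂ) (coeff β (b j)) • b j)
        + ∑ l, (starRingEnd ℂ) (coeff β (hp l)) • hp l) ∈ S := by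
    intro β
    have h0 := congrArg (fun p => coeff β (E p)) hQ
    simp only [hQdef, map_sub, map_sum, map_zero, coeff_zero, coeff_sub, coeff_sum, hcoeff] at h0
    have h1 : ((∑ j, (starRingEnd ℂ) (coeff β (b j)) • b j)
        + ∑ l, (starRingEnd ℂ) (coeff β (hp l)) • hp l)
        = ∑ i, (starRingEnd ℂ) (coeff β (a i)) • a i := by
      have h2 := sub_eq_zero.mp h0
      rw [sub_eq_iff_eq_add] at h2
      rw [h2]
      exact add_comm _ _
    rw [h1]
    exact Submodule.sum_mem _ fun i _ =>
      Submodule.smul_mem _ _ (Submodule.subset_span (Set.mem_range_self i))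
  -- Euclidean space finish
  intro j0
  set B : (κ ⊕ μ) → MvPolynomial σ ℂ := Sum.elim b hp with hB
  let combo : EuclideanSpace ℂ (κ ⊕ μ) →ₗ[ℂ] MvPolynomial σ ℂ :=
    { toFun := fun c => ∑ k, c k • B k,
      map_add' := fun x y => by
        simp [add_smul, Finset.sum_add_distrib]
      map_smul' := fun c x => by
        simp [smul_smul, Finset.smul_sum] }
  set wvec : (σ →₀ ℕ) → EuclideanSpace ℂ (κ ⊕ μ) :=
    fun β => WithLp.toLp 2 (fun k => (starRingEnd ℂ) (coeff β (B k))) with hwvec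
  set W : Submodule ℂ (EuclideanSpace ℂ (κ ⊕ μ)) := Submodule.span ℂ (Set.range wvec) with hW
  have hcomboW : ∀ x ∈ W, combo x ∈ S := by
    intro x hx
    induction hx using Submodule.span_induction with
    | mem x h =>
      obtain ⟨β, rfl⟩ := h
      have : combo (wvec β) = (∑ j, (starRingEnd ℂ) (coeff β (b j)) • b j)
          + ∑ l, (starRingEnd ℂ) (coeff β (hp l)) • hp l := by
        show (∑ k : κ ⊕ μ, wvec β k • B k) = _
        rw [Fintype.sum_sum_type]
        rfl
      rw [this]
      exact key β
    | zero => simp only [map_zero]; exact Submodule.zero_mem S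
    | add x y _ _ hx hy => rw [map_add]; exact Submodule.add_mem S hx hy
    | smul c x _ hx => rw [map_smul]; exact Submodule.smul_mem S c hx
  set u : EuclideanSpace ℂ (κ ⊕ μ) := EuclideanSpace.single (Sum.inl j0) (1 : ℂ) with hu
  set T : EuclideanSpace ℂ (κ ⊕ μ) := u - (W.orthogonalProjectionOnto u : EuclideanSpace ℂ (κ ⊕ μ)) with hT
  have hTW : T ∈ Wᗮ := W.sub_starProjection_mem_orthogonal u
  have hcomboT : combo T = 0 := by
    apply MvPolynomial.ext
    intro β
    have horth : inner ℂ (wvec β) T = (0 : ℂ) :=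
      (Submodule.mem_orthogonal W T).mp hTW _ (Submodule.subset_span (Set.mem_range_self β))
    rw [PiLp.inner_apply] at horth
    have : coeff β (combo T) = ∑ k, T k * coeff β (B k) := by
      show coeff β (∑ k : κ ⊕ μ, T k • B k) = _
      rw [coeff_sum]
      exact Finset.sum_congr rfl fun k _ => by rw [smul_eq_C_mul, coeff_C_mul]
    rw [this, coeff_zero]
    rw [← horth]
    congr 1; funext k
    simp [hwvec, RCLike.inner_apply, mul_comm]
  have hcombou : combo u = b j0 := by
    show (∑ k : κ ⊕ μ, u k • B k) = b j0
    rw [hu]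
    rw [Finset.sum_eq_single (Sum.inl j0)]
    · simp [hB, EuclideanSpace.single_apply]
    · intro k _ hk
      simp [EuclideanSpace.single_apply, hk]
    · intro hk
      exact absurd (Finset.mem_univ _) hk
  have : b j0 = combo ((W.orthogonalProjectionOnto u : EuclideanSpace ℂ (κ ⊕ μ))) + combo T := by
    rw [← map_add, hT]
    simp only [add_sub_cancel]
    exact hcombou.symm
  rw [this, hcomboT, add_zero]
  exact hcomboW _ (W.orthogonalProjectionOnto u).2

lemma norm_sq_cast' (c : ℂ) : ((‖c‖^2 : ℝ) : ℂ) = c * (starRingEnd ℂ) c := by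
  rw [Complex.mul_conj]; norm_cast; rw [Complex.sq_norm]

lemma sum_comm3 {α : Type*} [AddCommMonoid α] {ι κ μ : Type*} [Fintype ι] [Fintype κ] [Fintype μ]
    (F : ι → κ → μ → α) :
    ∑ s, ∑ t, ∑ a, F s t a = ∑ a, ∑ s, ∑ t, F s t a := by
  have h1 : ∀ s : ι, ∑ t : κ, ∑ a : μ, F s t a = ∑ a : μ, ∑ t : κ, F s t a :=
    fun s => Finset.sum_comm
  simp_rw [h1]
  exact Finset.sum_comm

lemma minimal_indep {σ : Type*} [Fintype σ] {Np Nm : ℕ}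
    (f : Fin Np → MvPolynomial σ ℂ) (g : Fin Nm → MvPolynomial σ ℂ) (r : (σ → ℂ) → ℝ)
    (hdec : ∀ z, r z = (∑ j, ‖eval z (f j)‖^2) - ∑ j, ‖eval z (g j)‖^2)
    (hmin : ∀ (Mp Mm : ℕ) (f' : Fin Mp → MvPolynomial σ ℂ) (g' : Fin Mm → MvPolynomial σ ℂ),
      (∀ z, r z = (∑ j, ‖eval z (f' j)‖^2) - ∑ j, ‖eval z (g' j)‖^2) → Np ≤ Mp ∧ Nm ≤ Mm) :
    LinearIndependent ℂ (Sum.elim f g) := by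
  classical
  set v : Fin Np ⊕ Fin Nm → MvPolynomial σ ℂ := Sum.elim f g with hvdef
  set V := Submodule.span ℂ (Set.range v) with hV
  have : FiniteDimensional ℂ V := FiniteDimensional.span_of_finite ℂ (Set.finite_range v)
  set m := finrank ℂ V with hm
  set e : Basis (Fin m) ℂ V := finBasis ℂ V with he
  have hmem : ∀ k, v k ∈ V := fun k => Submodule.subset_span (Set.mem_range_self k)
  set c : (Fin Np ⊕ Fin Nm) → Fin m → ℂ := fun k s => e.repr ⟨v k, hmem k⟩ s with hc
  have hvc : ∀ k, v k = ∑ s, c k s • (e s : MvPolynomial σ ℂ) := by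
    intro k
    have h2 := congrArg (Subtype.val : ↥V → MvPolynomial σ ℂ) (e.sum_repr ⟨v k, hmem k⟩)
    simp only [Submodule.coe_sum, SetLike.val_smul] at h2
    exact h2.symm
  have hvE : ∀ k (z : σ → ℂ), eval z (v k) = ∑ s, c k s * eval z (e s : MvPolynomial σ ℂ) := by
    intro k z
    rw [hvc k, map_sum]
    exact Finset.sum_congr rfl fun s _ => smul_eval _ _ _
  -- The Hermitian coefficient matrix
  set H : Matrix (Fin m) (Fin m) ℂ := fun s t =>
    (∑ i, c (Sum.inl i) s * (starRingEnd ℂ) (c (Sum.inl i) t))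
      - ∑ j, c (Sum.inr j) s * (starRingEnd ℂ) (c (Sum.inr j) t) with hH
  have hsq : ∀ (k) (z : σ → ℂ), ((‖eval z (v k)‖^2 : ℝ) : ℂ)
      = ∑ s, ∑ t, (c k s * (starRingEnd ℂ) (c k t))
          * (eval z (e s : MvPolynomial σ ℂ) * (starRingEnd ℂ) (eval z (e t : MvPolynomial σ ℂ))) := by
    intro k z
    rw [norm_sq_cast', hvE k z, map_sum, Finset.sum_mul_sum]
    refine Finset.sum_congr rfl fun s _ => Finset.sum_congr rfl fun t _ => ?_
    rw [map_mul]
    ring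
  have hkey : ∀ z : σ → ℂ, ((r z : ℝ) : ℂ)
      = ∑ s, ∑ t, H s t * (eval z (e s : MvPolynomial σ ℂ)
          * (starRingEnd ℂ) (eval z (e t : MvPolynomial σ ℂ))) := by
    intro z
    rw [hdec z, Complex.ofReal_sub, Complex.ofReal_sum, Complex.ofReal_sum]
    have hfv : ∀ (i : Fin Np), f i = v (Sum.inl i) := fun _ => rfl
    have hgv : ∀ (j : Fin Nm), g j = v (Sum.inr j) := fun _ => rfl
    simp only [hfv, hgv, hsq]
    rw [Finset.sum_comm, Finset.sum_comm (γ := Fin Nm)]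
    rw [← Finset.sum_sub_distrib]
    refine Finset.sum_congr rfl fun s _ => ?_
    rw [Finset.sum_comm, Finset.sum_comm (γ := Fin Nm), ← Finset.sum_sub_distrib]
    refine Finset.sum_congr rfl fun t _ => ?_
    rw [sub_mul, Finset.sum_mul, Finset.sum_mul]
  have hherm : H.IsHermitian := by
    show H.conjTranspose = H
    ext s t
    rw [Matrix.conjTranspose_apply]
    show (starRingEnd ℂ) (H t s) = H s t
    simp only [hH, map_sub, map_sum, map_mul, Complex.conj_conj]
    congr 1 <;> exact Finset.sum_congr rfl fun k _ => mul_comm _ _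
  set U : Matrix (Fin m) (Fin m) ℂ :=
    (Matrix.IsHermitian.eigenvectorUnitary hherm : Matrix (Fin m) (Fin m) ℂ) with hU
  set ev : Fin m → ℝ := hherm.eigenvalues with hev
  have hentry : ∀ s t, H s t = ∑ a, (ev a : ℂ) * (U s a * (starRingEnd ℂ) (U t a)) := by
    intro s t
    conv_lhs => rw [hherm.spectral_theorem, Unitary.conjStarAlgAut_apply]
    rw [Matrix.mul_apply]
    refine Finset.sum_congr rfl fun a _ => ?_
    rw [Matrix.mul_diagonal, Matrix.star_apply]
    show U s a * ((ev a : ℝ) : ℂ) * star (U t a) = _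
    rw [Complex.star_def]
    ring
  set φ : Fin m → MvPolynomial σ ℂ := fun a => ∑ s, U s a • (e s : MvPolynomial σ ℂ) with hφ
  have hφE : ∀ a (z : σ → ℂ), eval z (φ a) = ∑ s, U s a * eval z (e s : MvPolynomial σ ℂ) := by
    intro a z
    rw [hφ]
    show eval z (∑ s, U s a • (e s : MvPolynomial σ ℂ)) = _
    rw [map_sum]
    exact Finset.sum_congr rfl fun s _ => smul_eval _ _ _
  have hr2 : ∀ z : σ → ℂ, r z = ∑ a, ev a * ‖eval z (φ a)‖^2 := by
    intro z
    have hC : ((r z : ℝ) : ℂ)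
        = ∑ a, (ev a : ℂ) * (eval z (φ a) * (starRingEnd ℂ) (eval z (φ a))) := by
      rw [hkey z]
      have step1 : ∀ s t, H s t * (eval z (e s : MvPolynomial σ ℂ)
            * (starRingEnd ℂ) (eval z (e t : MvPolynomial σ ℂ)))
          = ∑ a, (ev a : ℂ) * ((U s a * eval z (e s : MvPolynomial σ ℂ))
            * (starRingEnd ℂ) (U t a * eval z (e t : MvPolynomial σ ℂ))) := by
        intro s t
        rw [hentry, Finset.sum_mul]
        refine Finset.sum_congr rfl fun a _ => ?_
        rw [map_mul]
        ring
      simp_rw [step1]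
      rw [sum_comm3]
      refine Finset.sum_congr rfl fun a _ => ?_
      rw [hφE, map_sum, Finset.sum_mul_sum, Finset.mul_sum]
      refine Finset.sum_congr rfl fun s _ => ?_
      rw [Finset.mul_sum]
    have hC2 : ((r z : ℝ) : ℂ) = ((∑ a, ev a * ‖eval z (φ a)‖^2 : ℝ) : ℂ) := by
      rw [hC]
      push_cast
      refine Finset.sum_congr rfl fun a _ => ?_
      rw [← norm_sq_cast']
      push_cast
      ring
    exact_mod_cast hC2
  -- split into positive and negative eigenvalues
  set Pos : Finset (Fin m) := Finset.univ.filter (fun a => 0 < ev a) with hPosDef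
  set Neg : Finset (Fin m) := Finset.univ.filter (fun a => ev a < 0) with hNegDef
  set pidx : Fin Pos.card → Fin m := fun i => (Pos.equivFin.symm i : Fin m) with hpidx
  set nidx : Fin Neg.card → Fin m := fun i => (Neg.equivFin.symm i : Fin m) with hnidx
  set f' : Fin Pos.card → MvPolynomial σ ℂ :=
    fun i => C ((Real.sqrt (ev (pidx i)) : ℝ) : ℂ) * φ (pidx i) with hf'
  set g' : Fin Neg.card → MvPolynomial σ ℂ :=
    fun i => C ((Real.sqrt (-ev (nidx i)) : ℝ) : ℂ) * φ (nidx i) with hg'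
  have hsumf : ∀ z : σ → ℂ, ∑ i, ‖eval z (f' i)‖^2 = ∑ a ∈ Pos, ev a * ‖eval z (φ a)‖^2 := by
    intro z
    rw [← Finset.sum_coe_sort Pos (fun a => ev a * ‖eval z (φ a)‖^2)]
    rw [← Equiv.sum_comp Pos.equivFin.symm
      (fun x => ev (x : Fin m) * ‖eval z (φ (x : Fin m))‖^2)]
    refine Finset.sum_congr rfl fun i _ => ?_
    have hpos : 0 < ev (pidx i) :=
      (Finset.mem_filter.mp (Pos.equivFin.symm i).2).2
    rw [hf']
    show ‖eval z (C ((Real.sqrt (ev (pidx i)) : ℝ) : ℂ) * φ (pidx i))‖^2 = _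
    rw [map_mul, eval_C, norm_mul, mul_pow, Complex.norm_real, Real.norm_eq_abs,
      _root_.abs_of_nonneg (Real.sqrt_nonneg _), Real.sq_sqrt hpos.le]
  have hsumg : ∀ z : σ → ℂ, ∑ i, ‖eval z (g' i)‖^2 = -∑ a ∈ Neg, ev a * ‖eval z (φ a)‖^2 := by
    intro z
    rw [← Finset.sum_coe_sort Neg (fun a => ev a * ‖eval z (φ a)‖^2)]
    rw [← Equiv.sum_comp Neg.equivFin.symm
      (fun x => ev (x : Fin m) * ‖eval z (φ (x : Fin m))‖^2), ← Finset.sum_neg_distrib]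
    refine Finset.sum_congr rfl fun i _ => ?_
    have hneg : ev (nidx i) < 0 :=
      (Finset.mem_filter.mp (Neg.equivFin.symm i).2).2
    rw [hg']
    show ‖eval z (C ((Real.sqrt (-ev (nidx i)) : ℝ) : ℂ) * φ (nidx i))‖^2 = _
    rw [map_mul, eval_C, norm_mul, mul_pow, Complex.norm_real, Real.norm_eq_abs,
      _root_.abs_of_nonneg (Real.sqrt_nonneg _), Real.sq_sqrt (by linarith)]
    ring
  have hdec' : ∀ z : σ → ℂ, r z = (∑ i, ‖eval z (f' i)‖^2) - ∑ i, ‖eval z (g' i)‖^2 := by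
    intro z
    rw [hr2 z, hsumf, hsumg, sub_neg_eq_add]
    rw [← Finset.sum_filter_add_sum_filter_not Finset.univ (fun a => 0 < ev a)
      (fun a => ev a * ‖eval z (φ a)‖^2)]
    congr 1
    rw [show Finset.univ.filter (fun a => ¬ 0 < ev a)
        = (Finset.univ.filter (fun a => ¬ 0 < ev a)) from rfl]
    refine (Finset.sum_subset ?_ ?_).symm
    · intro a ha
      rw [hNegDef] at ha
      simp only [Finset.mem_filter, Finset.mem_univ, true_and] at ha ⊢
      linarith
    · intro a ha hna
      simp only [Finset.mem_filter, Finset.mem_univ, true_and] at ha hna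
      rw [hNegDef] at hna
      simp only [Finset.mem_filter, Finset.mem_univ, true_and] at hna
      have : ev a = 0 := by
        push_neg at ha hna
        linarith
      rw [this]
      ring
  obtain ⟨h1, h2⟩ := hmin Pos.card Neg.card f' g' hdec'
  have hdisj : Disjoint Pos Neg := by
    rw [Finset.disjoint_left]
    intro a ha hb
    rw [hPosDef] at ha
    rw [hNegDef] at hb
    simp only [Finset.mem_filter, Finset.mem_univ, true_and] at ha hb
    linarith
  have hcard : Pos.card + Neg.card ≤ m := by
    rw [← Finset.card_union_of_disjoint hdisj]
    calc (Pos ∪ Neg).card ≤ (Finset.univ : Finset (Fin m)).card := Finset.card_le_card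
          (Finset.subset_univ _)
      _ = m := by rw [Finset.card_univ, Fintype.card_fin]
  have hfinrank : m ≤ Np + Nm := by
    have h3 := finrank_range_le_card (R := ℂ) v
    rw [Fintype.card_sum, Fintype.card_fin, Fintype.card_fin] at h3
    exact h3
  have hEq : Fintype.card (Fin Np ⊕ Fin Nm) = (Set.range v).finrank ℂ := by
    rw [Fintype.card_sum, Fintype.card_fin, Fintype.card_fin]
    have : (Set.range v).finrank ℂ = m := rfl
    rw [this]
    omega
  rw [hvdef] at hEq
  exact linearIndependent_iff_card_eq_finrank_span.mpr hEq

end Helpers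

/-- A real-valued function on `ℂⁿ` is a squared norm if it is a finite sum of
squared moduli of holomorphic polynomials. -/
def IsSquaredNorm {n : ℕ} (F : (Fin n → ℂ) → ℝ) : Prop :=
  ∃ (N : ℕ) (h : Fin N → MvPolynomial (Fin n) ℂ),
    ∀ z : Fin n → ℂ, F z = ∑ j, ‖MvPolynomial.eval z (h j)‖ ^ 2

/-- `r` has signature pair `(Np, Nm)`: it admits a holomorphic decomposition with
`Np` positive and `Nm` negative squares, and these numbers are minimal. -/
def HasSignaturePair {n : ℕ} (r : (Fin n → ℂ) → ℝ) (Np Nm : ℕ) : Prop :=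
  (∃ (f : Fin Np → MvPolynomial (Fin n) ℂ) (g : Fin Nm → MvPolynomial (Fin n) ℂ),
    ∀ z : Fin n → ℂ,
      r z = (∑ j, ‖MvPolynomial.eval z (f j)‖ ^ 2) - ∑ j, ‖MvPolynomial.eval z (g j)‖ ^ 2) ∧
  ∀ (Mp Mm : ℕ) (f : Fin Mp → MvPolynomial (Fin n) ℂ) (g : Fin Mm → MvPolynomial (Fin n) ℂ),
    (∀ z : Fin n → ℂ,
      r z = (∑ j, ‖MvPolynomial.eval z (f j)‖ ^ 2) - ∑ j, ‖MvPolynomial.eval z (g j)‖ ^ 2) →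
    Np ≤ Mp ∧ Nm ≤ Mm
theorem stmt15 (n d : ℕ) (hn : 2 ≤ n) (hd : 1 ≤ d) (r : (Fin n → ℂ) → ℝ) (Np Nm : ℕ)
    (hr : HasSignaturePair r Np Nm)
    (h : IsSquaredNorm fun z : Fin n → ℂ => r z * (∑ i, ‖z i‖ ^ 2) ^ d) :
    Nm ≤ (Nat.choose (n - 1 + d) d - 1) * Np := by
  classical
  obtain ⟨⟨f, g, hdec⟩, hmin⟩ := hr
  obtain ⟨N, hh, hsqn⟩ := h
  haveI : NeZero n := ⟨by omega⟩
  -- monomial products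
  set Xprod : (Fin d → Fin n) → MvPolynomial (Fin n) ℂ := fun v => ∏ k, X (v k) with hXprod
  set Xsym : Sym (Fin n) d → MvPolynomial (Fin n) ℂ :=
    fun s => (s.val.map X).prod with hXsym
  set sOf : (Fin d → Fin n) → Sym (Fin n) d :=
    fun v => ⟨(List.ofFn v : List (Fin n)), by simp⟩ with hsOf
  have hXeq : ∀ v, Xprod v = Xsym (sOf v) := by
    intro v
    rw [hXprod, hXsym, hsOf]
    show ∏ k, X (v k) = ((↑(List.ofFn v) : Multiset (Fin n)).map X).prod
    rw [Multiset.map_coe, Multiset.prod_coe, List.map_ofFn, List.prod_ofFn]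
    rfl
  have hXev : ∀ (v : Fin d → Fin n) (z : Fin n → ℂ),
      ‖eval z (Xprod v)‖^2 = ∏ k, ‖z (v k)‖^2 := by
    intro v z
    rw [hXprod]
    show ‖eval z (∏ k, X (v k))‖^2 = _
    rw [map_prod]
    simp only [eval_X]
    rw [norm_prod, ← Finset.prod_pow]
  have hT : ∀ z : Fin n → ℂ, ∑ v : Fin d → Fin n, ∏ k, ‖z (v k)‖^2 = (∑ i, ‖z i‖^2)^d := by
    intro z
    rw [Finset.sum_pow' Finset.univ (fun i => ‖z i‖^2) d, Fintype.piFinset_univ]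
  set A : (Fin Np × (Fin d → Fin n)) → MvPolynomial (Fin n) ℂ :=
    fun p => f p.1 * Xprod p.2 with hA
  set Bb : (Fin Nm × (Fin d → Fin n)) → MvPolynomial (Fin n) ℂ :=
    fun p => g p.1 * Xprod p.2 with hBb
  have hsum : ∀ (M : ℕ) (u : Fin M → MvPolynomial (Fin n) ℂ) (z : Fin n → ℂ),
      ∑ p : Fin M × (Fin d → Fin n), ‖eval z (u p.1 * Xprod p.2)‖^2
        = (∑ i, ‖eval z (u i)‖^2) * (∑ i, ‖z i‖^2)^d := by
    intro M u z
    rw [Fintype.sum_prod_type, Finset.sum_mul]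
    refine Finset.sum_congr rfl fun i _ => ?_
    rw [← hT z, Finset.mul_sum]
    refine Finset.sum_congr rfl fun v _ => ?_
    rw [map_mul, norm_mul, mul_pow, hXev]
  have hyp : ∀ z : Fin n → ℂ,
      (∑ p : Fin Np × (Fin d → Fin n), ‖eval z (A p)‖^2)
        = (∑ p : Fin Nm × (Fin d → Fin n), ‖eval z (Bb p)‖^2) + ∑ l, ‖eval z (hh l)‖^2 := by
    intro z
    show (∑ p : Fin Np × (Fin d → Fin n), ‖eval z (f p.1 * Xprod p.2)‖^2)
        = (∑ p : Fin Nm × (Fin d → Fin n), ‖eval z (g p.1 * Xprod p.2)‖^2) + _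
    have hsqn' : r z * (∑ i, ‖z i‖^2)^d = ∑ j, ‖eval z (hh j)‖^2 := hsqn z
    rw [hsum Np f z, hsum Nm g z, ← hsqn', hdec z]
    ring
  have hspan := span_dominate A Bb hh hyp
  have hindep := minimal_indep f g r hdec hmin
  set c0 : MvPolynomial (Fin n) ℂ := Xprod (fun _ => (0 : Fin n)) with hc0
  have hc0ne : c0 ≠ 0 := by
    rw [hc0, hXprod]
    show (∏ _k : Fin d, (X (0:Fin n) : MvPolynomial (Fin n) ℂ)) ≠ 0
    rw [Finset.prod_const]
    exact pow_ne_zero _ (X_ne_zero _)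
  set w : (Fin Np ⊕ Fin Nm) → MvPolynomial (Fin n) ℂ := fun k => Sum.elim f g k * c0 with hw
  have hwind : LinearIndependent ℂ w := by
    have hinj : Function.Injective (LinearMap.mulRight ℂ c0) := by
      intro p q hpq
      simp only [LinearMap.mulRight_apply] at hpq
      exact mul_right_cancel₀ hc0ne hpq
    have := LinearIndependent.map' hindep (LinearMap.mulRight ℂ c0)
      (LinearMap.ker_eq_bot.mpr hinj)
    exact this
  set SymF : (Fin Np × Sym (Fin n) d) → MvPolynomial (Fin n) ℂ :=
    fun p => f p.1 * Xsym p.2 with hSymF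
  set W : Submodule ℂ (MvPolynomial (Fin n) ℂ) := Submodule.span ℂ (Set.range SymF) with hW
  have hAW : ∀ p : Fin Np × (Fin d → Fin n), A p ∈ W := by
    intro p
    apply Submodule.subset_span
    refine ⟨(p.1, sOf p.2), ?_⟩
    show f p.1 * Xsym (sOf p.2) = A p
    rw [hA]
    show _ = f p.1 * Xprod p.2
    rw [hXeq]
  have hwW : ∀ k, w k ∈ W := by
    rintro (i | j)
    · exact hAW (i, fun _ => 0)
    · have h1 := hspan (j, fun _ => 0)
      have h2 : Submodule.span ℂ (Set.range A) ≤ W :=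
        Submodule.span_le.mpr (by rintro _ ⟨p, rfl⟩; exact hAW p)
      exact h2 h1
  haveI : FiniteDimensional ℂ ↥W := FiniteDimensional.span_of_finite ℂ (Set.finite_range SymF)
  have hcard : Np + Nm ≤ Np * Nat.choose (n + d - 1) d := by
    set w' : (Fin Np ⊕ Fin Nm) → ↥W := fun k => ⟨w k, hwW k⟩ with hw'
    have hwind' : LinearIndependent ℂ w' := by
      apply LinearIndependent.of_comp W.subtype
      exact hwind
    have hle := LinearIndependent.fintype_card_le_finrank hwind'
    have hfr := finrank_range_le_card (R := ℂ) SymF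
    have hWfr : finrank ℂ ↥W = (Set.range SymF).finrank ℂ := rfl
    rw [Fintype.card_sum, Fintype.card_fin, Fintype.card_fin] at hle
    rw [Fintype.card_prod, Fintype.card_fin, Sym.card_sym_eq_choose, Fintype.card_fin] at hfr
    omega
  have hKeq : Nat.choose (n - 1 + d) d = Nat.choose (n + d - 1) d := by congr 1; omega
  rw [hKeq]
  set K := Nat.choose (n + d - 1) d with hK
  have hsub : (K - 1) * Np = Np * K - Np := by rw [tsub_mul, one_mul, mul_comm]
  rw [hsub]
  omega
end

section
/- Fix d ≥ 1 and let m ∈ ℕ, D = (d+1)m. Define p_D(x,y) = Σ_{j=0}^D γ(j) x^{D−j} y^j where γ(j) = 2^d − 1 if j ≡ 0 (mod d+1) and γ(j) = −1 otherwise. Then p_D(x,y)·(x+y)^d has only nonnegative coefficients, and N₋(p_D)/N₊(p_D) = dD/(D + d + 1), which tends to d as D → ∞. -/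
open MvPolynomial Filter

namespace Stmt16Aux

open Finset

noncomputable def ee (a b : ℕ) : Fin 2 →₀ ℕ := Finsupp.single 0 a + Finsupp.single 1 b

lemma ee_apply0 (a b : ℕ) : ee a b 0 = a := by simp [ee]
lemma ee_apply1 (a b : ℕ) : ee a b 1 = b := by simp [ee]

lemma eq_ee (A : Fin 2 →₀ ℕ) : A = ee (A 0) (A 1) := by
  ext i
  fin_cases i <;> simp [ee]

lemma ee_eq_iff {a b : ℕ} {A : Fin 2 →₀ ℕ} : ee a b = A ↔ a = A 0 ∧ b = A 1 := by
  constructor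
  · rintro rfl; simp [ee_apply0, ee_apply1]
  · rintro ⟨rfl, rfl⟩; exact (eq_ee A).symm

lemma ee_add (a b c e : ℕ) : ee a b + ee c e = ee (a + c) (b + e) := by
  simp only [ee, Finsupp.single_add]
  abel

lemma monomial_ee (c : ℝ) (a b : ℕ) :
    C c * X 0 ^ a * X 1 ^ b = (monomial (ee a b) c : MvPolynomial (Fin 2) ℝ) := by
  rw [X_pow_eq_monomial, X_pow_eq_monomial, C_apply, monomial_mul, monomial_mul, ee]
  simp

lemma key (d m k : ℕ) (hd : 1 ≤ d) (γ : ℕ → ℝ)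
    (hγ : ∀ j : ℕ, γ j = if j % (d + 1) = 0 then (2 : ℝ) ^ d - 1 else -1) :
    0 ≤ ∑ j ∈ (Finset.range ((d + 1) * m + 1)).filter (fun j => j ≤ k ∧ k - j ≤ d),
        γ j * (d.choose (k - j) : ℝ) := by
  set D := (d + 1) * m with hD
  set T := (Finset.range (D + 1)).filter (fun j => j ≤ k ∧ k - j ≤ d) with hT
  rcases T.eq_empty_or_nonempty with h | ⟨j1, hj1⟩
  · simp [h]
  · rw [hT, mem_filter, mem_range] at hj1
    have hkDd : k ≤ D + d := by omega
    have h1 := Nat.div_add_mod k (d + 1)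
    have h2 : k % (d + 1) < d + 1 := Nat.mod_lt k (by omega)
    set j0 := (d + 1) * min (k / (d + 1)) m with hj0
    have hj0T : j0 ∈ T := by
      rw [hT, mem_filter, mem_range]
      rcases le_total (k / (d + 1)) m with h' | h'
      · rw [hj0, min_eq_left h']
        have h3 : (d + 1) * (k / (d + 1)) ≤ (d + 1) * m := Nat.mul_le_mul_left _ h'
        omega
      · rw [hj0, min_eq_right h']
        have h3 : (d + 1) * m ≤ (d + 1) * (k / (d + 1)) := Nat.mul_le_mul_left _ h'
        omega
    have hj0mod : j0 % (d + 1) = 0 := by rw [hj0]; exact Nat.mul_mod_right _ _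
    have hsplit : ∀ j ∈ T, γ j * (d.choose (k - j) : ℝ) =
        (if j % (d + 1) = 0 then (2 : ℝ) ^ d else 0) * (d.choose (k - j) : ℝ)
          - (d.choose (k - j) : ℝ) := by
      intro j _
      rw [hγ]
      split <;> ring
    rw [Finset.sum_congr rfl hsplit, Finset.sum_sub_distrib, sub_nonneg]
    have hub : (∑ j ∈ T, (d.choose (k - j) : ℝ)) ≤ 2 ^ d := by
      have hnat : (∑ j ∈ T, d.choose (k - j)) ≤ 2 ^ d := by
        have hinj : ∀ x ∈ T, ∀ y ∈ T, k - x = k - y → x = y := by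
          intro x hx y hy hxy
          rw [hT, mem_filter, mem_range] at hx hy
          omega
        have himg := Finset.sum_image (s := T) (g := fun j => k - j)
          (f := fun i => d.choose i) hinj
        rw [← himg]
        calc ∑ i ∈ T.image (fun j => k - j), d.choose i
            ≤ ∑ i ∈ Finset.range (d + 1), d.choose i := by
              apply Finset.sum_le_sum_of_subset
              intro i hi
              simp only [mem_image] at hi
              obtain ⟨j, hj, rfl⟩ := hi
              rw [hT, mem_filter, mem_range] at hj
              rw [mem_range]; omega
          _ = 2 ^ d := Nat.sum_range_choose d
      calc (∑ j ∈ T, (d.choose (k - j) : ℝ)) = ((∑ j ∈ T, d.choose (k - j) : ℕ) : ℝ) := by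
            push_cast; ring
        _ ≤ ((2 ^ d : ℕ) : ℝ) := by exact_mod_cast hnat
        _ = 2 ^ d := by push_cast; ring
    have hlb : (2 : ℝ) ^ d ≤ ∑ j ∈ T,
        (if j % (d + 1) = 0 then (2 : ℝ) ^ d else 0) * (d.choose (k - j) : ℝ) := by
      have hpos : 1 ≤ d.choose (k - j0) := by
        apply Nat.choose_pos
        rw [hT, mem_filter] at hj0T
        omega
      have hterm : (2 : ℝ) ^ d ≤
          (if j0 % (d + 1) = 0 then (2 : ℝ) ^ d else 0) * (d.choose (k - j0) : ℝ) := by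
        rw [if_pos hj0mod]
        nlinarith [pow_pos (show (0:ℝ) < 2 by norm_num) d,
          show (1 : ℝ) ≤ (d.choose (k - j0) : ℝ) by exact_mod_cast hpos]
      refine le_trans hterm (Finset.single_le_sum (f := fun j =>
        (if j % (d + 1) = 0 then (2 : ℝ) ^ d else 0) * (d.choose (k - j) : ℝ)) ?_ hj0T)
      intro j _
      split <;> positivity
    linarith

lemma hbin (d : ℕ) : (X 0 + X 1 : MvPolynomial (Fin 2) ℝ) ^ d
    = ∑ i ∈ Finset.range (d + 1), monomial (ee (d - i) i) ((d.choose i : ℝ)) := by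
  rw [add_comm (X 0) (X 1), add_pow]
  refine Finset.sum_congr rfl fun i hi => ?_
  rw [← monomial_ee, ← MvPolynomial.C_eq_coe_nat]
  ring

lemma coeff_prod (d m : ℕ) (γ : ℕ → ℝ) (A : Fin 2 →₀ ℕ) :
    (((∑ j ∈ Finset.range ((d + 1) * m + 1), monomial (ee ((d + 1) * m - j) j) (γ j)) *
        (X 0 + X 1) ^ d)).coeff A =
      ∑ j ∈ (Finset.range ((d + 1) * m + 1)).filter
          (fun j => j ≤ A 1 ∧ A 1 - j ≤ d ∧ A 0 + A 1 = (d + 1) * m + d),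
        γ j * (d.choose (A 1 - j) : ℝ) := by
  set D := (d + 1) * m with hD
  rw [hbin, Finset.sum_mul_sum]
  simp only [monomial_mul, ee_add]
  rw [MvPolynomial.coeff_sum]
  have hstep : ∀ j ∈ Finset.range (D + 1),
      (∑ i ∈ Finset.range (d + 1),
          monomial (ee ((D - j) + (d - i)) (j + i)) (γ j * (d.choose i : ℝ))).coeff A
        = if j ≤ A 1 ∧ A 1 - j ≤ d ∧ A 0 + A 1 = D + d then
            γ j * (d.choose (A 1 - j) : ℝ) else 0 := by
    intro j hj
    rw [mem_range] at hj
    rw [MvPolynomial.coeff_sum]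
    have hterm : ∀ i ∈ Finset.range (d + 1),
        (monomial (ee ((D - j) + (d - i)) (j + i)) (γ j * (d.choose i : ℝ))).coeff A
          = if i = A 1 - j then
              (if j ≤ A 1 ∧ A 1 - j ≤ d ∧ A 0 + A 1 = D + d then
                γ j * (d.choose (A 1 - j) : ℝ) else 0) else 0 := by
      intro i hi
      rw [mem_range] at hi
      rw [coeff_monomial]
      by_cases h : i = A 1 - j
      · subst h
        rw [if_pos rfl]
        congr 1
        · rw [eq_iff_iff, ee_eq_iff]
          omega
      · rw [if_neg h, if_neg]
        rw [ee_eq_iff]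
        rintro ⟨h1, h2⟩
        omega
    rw [Finset.sum_congr rfl hterm, Finset.sum_ite_eq' (Finset.range (d + 1)) (A 1 - j)]
    by_cases hmem : A 1 - j ∈ Finset.range (d + 1)
    · rw [if_pos hmem]
    · rw [if_neg hmem, eq_comm, ite_eq_right_iff]
      rw [mem_range] at hmem
      intro hcond
      omega
  rw [Finset.sum_congr rfl hstep, Finset.sum_filter]

lemma coeff_p (D : ℕ) (γ : ℕ → ℝ) (A : Fin 2 →₀ ℕ) :
    (∑ j ∈ Finset.range (D + 1), monomial (ee (D - j) j) (γ j)).coeff A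
      = if A 1 ≤ D ∧ D - A 1 = A 0 then γ (A 1) else 0 := by
  rw [MvPolynomial.coeff_sum]
  have hterm : ∀ j ∈ Finset.range (D + 1),
      (monomial (ee (D - j) j) (γ j)).coeff A
        = if j = A 1 then (if A 1 ≤ D ∧ D - A 1 = A 0 then γ (A 1) else 0) else 0 := by
    intro j hj
    rw [mem_range] at hj
    rw [coeff_monomial]
    by_cases h : j = A 1
    · subst h
      rw [if_pos rfl]
      congr 1
      · rw [eq_iff_iff, ee_eq_iff]
        constructor
        · rintro ⟨h1, -⟩; omega
        · rintro ⟨h1, h2⟩; omega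
    · rw [if_neg h, if_neg]
      rw [ee_eq_iff]
      rintro ⟨-, h2⟩
      exact h h2
  rw [Finset.sum_congr rfl hterm, Finset.sum_ite_eq' (Finset.range (D + 1)) (A 1)]
  by_cases hmem : A 1 ∈ Finset.range (D + 1)
  · rw [if_pos hmem]
  · rw [if_neg hmem, eq_comm, ite_eq_right_iff]
    rw [mem_range] at hmem
    intro hcond
    omega

lemma card_filter_support (D : ℕ) (γ : ℕ → ℝ) (hne : ∀ j, γ j ≠ 0)
    (Pr : ℝ → Prop) [DecidablePred Pr] :
    (((∑ j ∈ Finset.range (D + 1), monomial (ee (D - j) j) (γ j)).support.filter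
        (fun A => Pr ((∑ j ∈ Finset.range (D + 1),
          monomial (ee (D - j) j) (γ j)).coeff A))).card)
      = ((Finset.range (D + 1)).filter (fun j => Pr (γ j))).card := by
  have himg : ((∑ j ∈ Finset.range (D + 1), monomial (ee (D - j) j) (γ j)).support.filter
        (fun A => Pr ((∑ j ∈ Finset.range (D + 1),
          monomial (ee (D - j) j) (γ j)).coeff A)))
      = ((Finset.range (D + 1)).filter (fun j => Pr (γ j))).image
          (fun j => ee (D - j) j) := by
    ext A
    simp only [mem_filter, MvPolynomial.mem_support_iff, mem_image, mem_range, coeff_p D γ]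
    constructor
    · rintro ⟨hne0, hPr⟩
      by_cases hc : A 1 ≤ D ∧ D - A 1 = A 0
      · rw [if_pos hc] at hPr
        refine ⟨A 1, ⟨by omega, hPr⟩, ?_⟩
        rw [hc.2]
        exact (eq_ee A).symm
      · rw [if_neg hc] at hne0
        exact absurd rfl hne0
    · rintro ⟨j, ⟨hj, hPr⟩, rfl⟩
      have h0 : ee (D - j) j 0 = D - j := ee_apply0 _ _
      have h1 : ee (D - j) j 1 = j := ee_apply1 _ _
      rw [h0, h1, if_pos ⟨by omega, by omega⟩]
      exact ⟨hne j, hPr⟩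
  rw [himg, Finset.card_image_of_injOn]
  intro x hx y hy hxy
  have := congrArg (fun f => f 1) hxy
  simpa [ee_apply1] using this

lemma count_mults (d m : ℕ) :
    ((Finset.range ((d + 1) * m + 1)).filter (fun j => j % (d + 1) = 0)).card = m + 1 := by
  have himg : (Finset.range ((d + 1) * m + 1)).filter (fun j => j % (d + 1) = 0)
      = (Finset.range (m + 1)).image (fun i => (d + 1) * i) := by
    ext j
    simp only [mem_filter, mem_range, mem_image]
    constructor
    · rintro ⟨hj, hmod⟩
      obtain ⟨i, rfl⟩ := Nat.dvd_of_mod_eq_zero hmod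
      refine ⟨i, ?_, rfl⟩
      have : i ≤ m := Nat.le_of_mul_le_mul_left
        (show (d + 1) * i ≤ (d + 1) * m by omega) (by omega)
      omega
    · rintro ⟨i, hi, rfl⟩
      have : (d + 1) * i ≤ (d + 1) * m := Nat.mul_le_mul_left _ (by omega)
      exact ⟨by omega, Nat.mul_mod_right _ _⟩
  rw [himg, Finset.card_image_of_injective _ fun a b hab =>
    Nat.eq_of_mul_eq_mul_left (by omega) hab, Finset.card_range]

end Stmt16Aux

theorem stmt16 (d : ℕ) (hd : 1 ≤ d) (γ : ℕ → ℝ)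
    (hγ : ∀ j : ℕ, γ j = if j % (d + 1) = 0 then (2 : ℝ) ^ d - 1 else -1)
    (p : ℕ → MvPolynomial (Fin 2) ℝ)
    (hp : ∀ m : ℕ, p m = ∑ j ∈ Finset.range ((d + 1) * m + 1),
      C (γ j) * X 0 ^ ((d + 1) * m - j) * X 1 ^ j) :
    (∀ (m : ℕ) (A : Fin 2 →₀ ℕ), 0 ≤ ((p m) * (X 0 + X 1) ^ d).coeff A) ∧
    (∀ m : ℕ,
      ((((p m).support.filter fun A => (p m).coeff A < 0).card : ℝ) /
          (((p m).support.filter fun A => 0 < (p m).coeff A).card : ℝ)) =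
        (d : ℝ) * ((d + 1) * m) / ((d + 1) * m + d + 1)) ∧
    Tendsto (fun m : ℕ =>
        ((((p m).support.filter fun A => (p m).coeff A < 0).card : ℝ) /
          (((p m).support.filter fun A => 0 < (p m).coeff A).card : ℝ)))
      atTop (nhds (d : ℝ)) := by
  have hpm : ∀ m : ℕ, p m = ∑ j ∈ Finset.range ((d + 1) * m + 1),
      monomial (Stmt16Aux.ee ((d + 1) * m - j) j) (γ j) := by
    intro m
    rw [hp m]
    exact Finset.sum_congr rfl fun j hj => Stmt16Aux.monomial_ee _ _ _
  have h2d : (1 : ℝ) < 2 ^ d := by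
    calc (1 : ℝ) = 1 ^ d := (one_pow d).symm
    _ < 2 ^ d := by
        apply pow_lt_pow_left₀ (by norm_num) (by norm_num)
        omega
  have hne : ∀ j, γ j ≠ 0 := by
    intro j
    rw [hγ j]
    split
    · intro h; linarith
    · norm_num
  have hiffpos : ∀ j, (0 < γ j ↔ j % (d + 1) = 0) := by
    intro j
    rw [hγ j]
    by_cases h : j % (d + 1) = 0
    · rw [if_pos h]
      exact ⟨fun _ => h, fun _ => by linarith⟩
    · rw [if_neg h]
      exact ⟨fun hx => by norm_num at hx, fun hx => absurd hx h⟩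
  have hiffneg : ∀ j, (γ j < 0 ↔ ¬ j % (d + 1) = 0) := by
    intro j
    rw [hγ j]
    by_cases h : j % (d + 1) = 0
    · rw [if_pos h]
      exact ⟨fun hx => by linarith, fun hx => absurd h hx⟩
    · rw [if_neg h]
      exact ⟨fun _ => h, fun _ => by norm_num⟩
  -- part 1
  have part1 : ∀ (m : ℕ) (A : Fin 2 →₀ ℕ), 0 ≤ ((p m) * (X 0 + X 1) ^ d).coeff A := by
    intro m A
    rw [hpm m, Stmt16Aux.coeff_prod d m γ A]
    by_cases hA : A 0 + A 1 = (d + 1) * m + d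
    · rw [Finset.filter_congr (fun j (_ : j ∈ Finset.range ((d + 1) * m + 1)) =>
        (by simp [hA] : (j ≤ A 1 ∧ A 1 - j ≤ d ∧ A 0 + A 1 = (d + 1) * m + d)
          ↔ (j ≤ A 1 ∧ A 1 - j ≤ d)))]
      exact Stmt16Aux.key d m (A 1) hd γ hγ
    · rw [Finset.filter_false_of_mem, Finset.sum_empty]
      · rintro j - ⟨-, -, h⟩
        exact hA h
  -- cardinalities
  have hcards : ∀ m : ℕ,
      (((p m).support.filter fun A => (p m).coeff A < 0).card = d * m) ∧
      (((p m).support.filter fun A => 0 < (p m).coeff A).card = m + 1) := by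
    intro m
    have hposcard : ((p m).support.filter fun A => 0 < (p m).coeff A).card
        = ((Finset.range ((d + 1) * m + 1)).filter (fun j => 0 < γ j)).card := by
      rw [hpm m]
      exact Stmt16Aux.card_filter_support _ γ hne (fun x => 0 < x)
    have hnegcard : ((p m).support.filter fun A => (p m).coeff A < 0).card
        = ((Finset.range ((d + 1) * m + 1)).filter (fun j => γ j < 0)).card := by
      rw [hpm m]
      exact Stmt16Aux.card_filter_support _ γ hne (fun x => x < 0)
    have hfpos : (Finset.range ((d + 1) * m + 1)).filter (fun j => 0 < γ j)
        = (Finset.range ((d + 1) * m + 1)).filter (fun j => j % (d + 1) = 0) :=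
      Finset.filter_congr fun j _ => hiffpos j
    have hfneg : (Finset.range ((d + 1) * m + 1)).filter (fun j => γ j < 0)
        = (Finset.range ((d + 1) * m + 1)).filter (fun j => ¬ j % (d + 1) = 0) :=
      Finset.filter_congr fun j _ => hiffneg j
    have hsum := Finset.card_filter_add_card_filter_not
      (s := Finset.range ((d + 1) * m + 1)) (p := fun j => j % (d + 1) = 0)
    rw [Finset.card_range, Stmt16Aux.count_mults d m] at hsum
    have hmul : (d + 1) * m = d * m + m := by ring
    constructor
    · rw [hnegcard, hfneg]
      omega
    · rw [hposcard, hfpos]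
      exact Stmt16Aux.count_mults d m
  -- part 2
  have part2 : ∀ m : ℕ,
      ((((p m).support.filter fun A => (p m).coeff A < 0).card : ℝ) /
          (((p m).support.filter fun A => 0 < (p m).coeff A).card : ℝ)) =
        (d : ℝ) * ((d + 1) * m) / ((d + 1) * m + d + 1) := by
    intro m
    obtain ⟨hneg, hpos⟩ := hcards m
    rw [hneg, hpos]
    have hden1 : (0 : ℝ) < (m : ℝ) + 1 := by positivity
    have hden2 : (0 : ℝ) < ((d : ℝ) + 1) * m + d + 1 := by positivity
    push_cast
    rw [div_eq_div_iff (by positivity) (by positivity)]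
    ring
  refine ⟨part1, part2, ?_⟩
  -- part 3
  have h2' : Tendsto (fun m : ℕ => (d + 1) * m) atTop atTop :=
    tendsto_atTop_mono (fun m => Nat.le_mul_of_pos_left m (by omega)) tendsto_id
  have h3 := (tendsto_natCast_div_add_atTop ((d : ℝ) + 1)).comp h2'
  have h4 := Filter.Tendsto.const_mul (d : ℝ) h3
  rw [mul_one] at h4
  refine h4.congr fun m => ?_
  rw [part2 m]
  simp only [Function.comp_apply]
  push_cast
  ring
end

section
/- For each fixed n ≥ 2 and each d ≥ 1, there exists a real polynomial p in n variables such that p·(x₁+⋯+xₙ)^d has only nonnegative coefficients and N₋(p)/N₊(p) ≥ d^{n−1}/2^{n(n−1)/2}. -/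
open Finset

lemma card_multiples (s K : ℕ) (hs : 1 ≤ s) :
    ((Finset.range (s * K)).filter (fun x => s ∣ x)).card = K := by
  have h : (Finset.range (s * K)).filter (fun x => s ∣ x)
      = (Finset.range K).image (fun j => s * j) := by
    ext x
    simp only [mem_filter, mem_range, mem_image]
    constructor
    · rintro ⟨hx, j, rfl⟩
      exact ⟨j, lt_of_mul_lt_mul_left hx (Nat.zero_le s), rfl⟩
    · rintro ⟨j, hj, rfl⟩
      exact ⟨by calc s * j < s * K := (Nat.mul_lt_mul_left hs).mpr hj
                  , ⟨j, rfl⟩⟩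
  rw [h, Finset.card_image_of_injective _ (fun a b hab =>
    Nat.eq_of_mul_eq_mul_left hs hab), Finset.card_range]

lemma piFinset_filter_forall {m : ℕ} (t : Fin m → Finset ℕ) (P : Fin m → ℕ → Prop)
    [∀ i x, Decidable (P i x)] :
    (Fintype.piFinset t).filter (fun v => ∀ i, P i (v i))
      = Fintype.piFinset (fun i => (t i).filter (fun x => P i x)) := by
  ext v
  simp only [mem_filter, Fintype.mem_piFinset, mem_filter]
  exact ⟨fun ⟨h1, h2⟩ i => ⟨h1 i, h2 i⟩, fun h => ⟨fun i => (h i).1, fun i => (h i).2⟩⟩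

lemma sq_le_two_pow {m : ℕ} (hm : 5 ≤ m) : m ^ 2 ≤ 2 ^ m := by
  induction m with
  | zero => omega
  | succ k ih =>
    rcases Nat.lt_or_ge k 5 with h | h
    · have hk : k = 4 := by omega
      subst hk; norm_num
    · have := ih (by omega)
      have h2 : (k+1)^2 ≤ 2 * k^2 := by nlinarith
      calc (k+1)^2 ≤ 2 * k^2 := h2
        _ ≤ 2 * 2^k := by omega
        _ = 2^(k+1) := by ring

lemma two_mul_pow_le (m : ℕ) (hm : 1 ≤ m) : 2 * m ^ m ≤ 2 ^ ((m+1) * m / 2) := by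
  rcases Nat.lt_or_ge m 5 with h | h
  · interval_cases m <;> norm_num
  · have hdvd : 2 * ((m+1) * m / 2) = m * m + m := by
      have h2 : 2 ∣ (m+1) * m := by rw [mul_comm]; exact (Nat.even_mul_succ_self m).two_dvd
      have h3 := Nat.div_mul_cancel h2
      have h4 : (m+1) * m = m * m + m := by ring
      omega
    have hsq : (2 * m ^ m) ^ 2 ≤ (2 ^ ((m+1) * m / 2)) ^ 2 := by
      have he : (2 ^ ((m+1) * m / 2)) ^ 2 = 2 ^ (m * m) * 2 ^ m := by
        rw [← pow_mul, ← pow_add]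
        congr 1
        omega
      have h1 : m ^ (m * 2) ≤ 2 ^ (m * m) := by
        calc m ^ (m * 2) = (m ^ 2) ^ m := by rw [← pow_mul, mul_comm 2 m]
          _ ≤ (2 ^ m) ^ m := Nat.pow_le_pow_left (sq_le_two_pow h) m
          _ = 2 ^ (m * m) := by rw [← pow_mul]
      rw [he]
      calc (2 * m ^ m) ^ 2 = 4 * m ^ (m * 2) := by rw [mul_pow, ← pow_mul]; norm_num
        _ ≤ 2 ^ m * 2 ^ (m * m) := by
            apply Nat.mul_le_mul _ h1
            calc (4:ℕ) = 2^2 := by norm_num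
              _ ≤ 2^m := Nat.pow_le_pow_right (by norm_num) (by omega)
        _ = 2 ^ (m * m) * 2 ^ m := by ring
    exact (Nat.pow_le_pow_iff_left (by norm_num)).mp hsq

open MvPolynomial

noncomputable def embF {m : ℕ} (D : ℕ) (v : Fin m → ℕ) : Fin (m+1) →₀ ℕ :=
  Finsupp.equivFunOnFinite.symm (Fin.snoc v (D - ∑ i, v i))

lemma embF_castSucc {m : ℕ} (D : ℕ) (v : Fin m → ℕ) (i : Fin m) :
    embF D v (Fin.castSucc i) = v i := by
  simp [embF, Finsupp.equivFunOnFinite]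
  exact Fin.snoc_castSucc (α := fun _ => ℕ) (x := D - ∑ i, v i) (p := v) (i := i)

lemma embF_last {m : ℕ} (D : ℕ) (v : Fin m → ℕ) :
    embF D v (Fin.last m) = D - ∑ i, v i := by
  simp [embF, Finsupp.equivFunOnFinite]
  exact Fin.snoc_last (α := fun _ => ℕ) (x := D - ∑ i, v i) (p := v)

lemma embF_inj {m : ℕ} (D : ℕ) : Function.Injective (embF (m := m) D) := by
  intro a b hab
  funext i
  have : embF D a (Fin.castSucc i) = embF D b (Fin.castSucc i) := by rw [hab]
  simpa [embF_castSucc] using this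

lemma embF_sum {m : ℕ} (D : ℕ) (v : Fin m → ℕ) (hv : ∑ i, v i ≤ D) :
    ∑ j, embF D v j = D := by
  rw [Fin.sum_univ_castSucc]
  simp only [embF_castSucc, embF_last]
  omega

open Finset MvPolynomial

section Key

variable {m d U : ℕ} {s : Fin m → ℕ}

-- the linear form
noncomputable abbrev lf (m : ℕ) : MvPolynomial (Fin (m+1)) ℝ := ∑ i, X i

lemma lf_coeff_nonneg (k : Fin (m+1) →₀ ℕ) : 0 ≤ (lf m).coeff k := by
  rw [coeff_sum]
  apply Finset.sum_nonneg
  intro i _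
  rw [coeff_X']
  split <;> norm_num

lemma lfpow_coeff_nonneg (j : ℕ) (k : Fin (m+1) →₀ ℕ) : 0 ≤ ((lf m ^ j)).coeff k := by
  induction j generalizing k with
  | zero =>
    simp only [pow_zero, coeff_one]
    split <;> norm_num
  | succ n ih =>
    rw [pow_succ, coeff_mul]
    apply Finset.sum_nonneg
    intro x _
    exact mul_nonneg (ih x.1) (lf_coeff_nonneg x.2)

lemma lfmulX_coeff_nonneg (j : ℕ) (i : Fin (m+1)) (k : Fin (m+1) →₀ ℕ) :
    0 ≤ ((lf m ^ j) * X i).coeff k := by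
  classical
  rw [coeff_mul_X']
  split
  · exact lfpow_coeff_nonneg j _
  · exact le_refl 0

lemma lfpow_homog (j : ℕ) : ((lf m) ^ j).IsHomogeneous j := by
  have h1 : (lf m).IsHomogeneous 1 := by
    apply MvPolynomial.IsHomogeneous.sum
    intro i _
    exact MvPolynomial.isHomogeneous_X _ _
  simpa using h1.pow j

lemma lfpow_coeff_ne_zero {j : ℕ} {b : Fin (m+1) →₀ ℕ} (hb : ((lf m) ^ j).coeff b ≠ 0) :
    ∑ i, b i = j := by
  classical
  have h := lfpow_homog (m := m) j hb
  rw [Finsupp.weight_apply, Finsupp.sum_fintype] at h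
  · simpa using h
  · intro i; simp

lemma lfpow_coeff_one_le {j : ℕ} {b : Fin (m+1) →₀ ℕ} (hb : ∑ i, b i = j) :
    1 ≤ ((lf m) ^ j).coeff b := by
  classical
  induction j generalizing b with
  | zero =>
    have hb0 : b = 0 := by
      ext i
      have := Finset.sum_eq_zero_iff.mp hb
      exact this i (mem_univ i)
    simp [hb0, coeff_one]
  | succ k ih =>
    have hex : ∃ i, b i ≠ 0 := by
      by_contra h
      push_neg at h
      simp [h] at hb
    obtain ⟨i0, hi0⟩ := hex
    set b' : Fin (m+1) →₀ ℕ := b - Finsupp.single i0 1 with hb'def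
    have hb'add : b' + Finsupp.single i0 1 = b := by
      ext j
      by_cases hj : i0 = j
      · subst hj
        simp only [hb'def, Finsupp.add_apply, Finsupp.tsub_apply, Finsupp.single_eq_same]
        omega
      · simp [hb'def, Finsupp.single_apply, hj]
    have hsum' : ∑ i, b' i = k := by
      have h2 : ∑ i, b' i + ∑ i, (Finsupp.single i0 1 : Fin (m+1) →₀ ℕ) i = ∑ i, b i := by
        rw [← Finset.sum_add_distrib]
        apply Finset.sum_congr rfl
        intro i _
        rw [← Finsupp.add_apply, hb'add]
      have hs : ∑ i, (Finsupp.single i0 1 : Fin (m+1) →₀ ℕ) i = 1 := by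
        rw [Finset.sum_eq_single i0]
        · simp
        · intro j _ hj; simp [Finsupp.single_apply, Ne.symm hj]
        · intro h; exact absurd (mem_univ i0) h
      omega
    have hrw : (lf m) ^ (k+1) = ∑ i, (lf m) ^ k * X i := by
      rw [pow_succ, Finset.mul_sum]
    rw [hrw, coeff_sum]
    have hterm : (1:ℝ) ≤ ((lf m) ^ k * X i0).coeff b := by
      rw [← hb'add, coeff_mul_X]
      exact ih hsum'
    exact le_trans hterm
      (Finset.single_le_sum (fun i _ => lfmulX_coeff_nonneg k i b) (mem_univ i0))

lemma lfpow_total (j : ℕ) (mu : Fin (m+1) →₀ ℕ) :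
    ∑ x ∈ Finset.HasAntidiagonal.antidiagonal mu, ((lf m) ^ j).coeff x.2 ≤ ((m:ℝ)+1) ^ j := by
  classical
  have hinj : ∀ x ∈ Finset.HasAntidiagonal.antidiagonal mu, ∀ y ∈ Finset.HasAntidiagonal.antidiagonal mu,
      Prod.snd x = Prod.snd y → x = y := by
    intro x hx y hy hxy
    simp only [Finset.HasAntidiagonal.mem_antidiagonal] at hx hy
    have h1 : x.1 = y.1 := by
      have h2 : x.1 + x.2 = y.1 + y.2 := by rw [hx, hy]
      rw [hxy] at h2
      exact add_right_cancel h2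
    exact Prod.ext h1 hxy
  rw [show (∑ x ∈ Finset.HasAntidiagonal.antidiagonal mu, ((lf m) ^ j).coeff x.2)
      = ∑ b ∈ (Finset.HasAntidiagonal.antidiagonal mu).image Prod.snd, ((lf m) ^ j).coeff b from
      (Finset.sum_image hinj).symm]
  set J := (Finset.HasAntidiagonal.antidiagonal mu).image Prod.snd with hJ
  have h1 : ∑ b ∈ J, ((lf m) ^ j).coeff b = ∑ b ∈ J ∩ ((lf m)^j).support, ((lf m) ^ j).coeff b := by
    apply (Finset.sum_subset (Finset.inter_subset_left)  _).symm
    intro x hx hx2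
    have : x ∉ ((lf m)^j).support := by
      intro hmem
      exact hx2 (Finset.mem_inter.mpr ⟨hx, hmem⟩)
    exact notMem_support_iff.mp this
  rw [h1]
  have h2 : ∑ b ∈ J ∩ ((lf m)^j).support, ((lf m) ^ j).coeff b
      ≤ ∑ b ∈ ((lf m)^j).support, ((lf m) ^ j).coeff b := by
    apply Finset.sum_le_sum_of_subset_of_nonneg (Finset.inter_subset_right)
    intro b _ _
    exact lfpow_coeff_nonneg j b
  have h3 : ∑ b ∈ ((lf m)^j).support, ((lf m) ^ j).coeff b = ((m:ℝ)+1) ^ j := by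
    have he : MvPolynomial.eval (fun _ : Fin (m+1) => (1:ℝ)) ((lf m)^j)
        = ∑ b ∈ ((lf m)^j).support, ((lf m) ^ j).coeff b := by
      rw [MvPolynomial.eval_eq']
      apply Finset.sum_congr rfl
      intro b _
      simp
    rw [← he, map_pow]
    have : MvPolynomial.eval (fun _ : Fin (m+1) => (1:ℝ)) (lf m) = (m:ℝ)+1 := by
      rw [map_sum]
      simp [Finset.card_univ]
    rw [this]
  linarith

lemma key (m d U : ℕ) (hm : 1 ≤ m) (hd : 1 ≤ d) (hU : 1 ≤ U)
    (s : Fin m → ℕ) (hs1 : ∀ i, 1 ≤ s i) (hsum : ∑ i, (s i - 1) ≤ d) :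
    ∃ p : MvPolynomial (Fin (m+1)) ℝ,
      (∀ mu : Fin (m+1) →₀ ℕ, 0 ≤ (p * (∑ i, X i) ^ d).coeff mu) ∧
      (p.support.filter fun mu => 0 < p.coeff mu).card = (U + d)^m ∧
      (p.support.filter fun mu => p.coeff mu < 0).card = (∏ i, s i) * U^m - U^m := by
  classical
  set V : ℝ := ((m:ℝ)+1) ^ d with hV
  have hVpos : 0 < V := by positivity
  set L : Fin m → ℕ := fun i => s i * (U + d) with hL
  set D : ℕ := ∑ i, L i with hD
  set Box : Finset (Fin m → ℕ) := Fintype.piFinset (fun i => Finset.range (L i)) with hBox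
  set c : (Fin m → ℕ) → ℝ := fun v =>
    if ∀ i, s i ∣ v i then V else if ∀ i, v i < s i * U then (-1:ℝ) else 0 with hc
  set p : MvPolynomial (Fin (m+1)) ℝ := ∑ v ∈ Box, monomial (embF D v) (c v) with hp
  -- sums of Box elements are at most D
  have hBoxSum : ∀ v ∈ Box, ∑ i, v i ≤ D := by
    intro v hv
    rw [hD]
    apply Finset.sum_le_sum
    intro i _
    have := (Fintype.mem_piFinset.mp hv) i
    rw [Finset.mem_range] at this
    omega
  -- coefficient extraction
  have hcoeff : ∀ w ∈ Box, p.coeff (embF D w) = c w := by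
    intro w hw
    rw [hp, coeff_sum]
    rw [Finset.sum_eq_single w]
    · simp [coeff_monomial]
    · intro v hv hvw
      rw [coeff_monomial, if_neg]
      intro h
      exact hvw (embF_inj D h)
    · intro h; exact absurd hw h
  have hcoeff0 : ∀ mu, p.coeff mu ≠ 0 → ∃ w ∈ Box, embF D w = mu := by
    intro mu hmu
    by_contra h
    push_neg at h
    apply hmu
    rw [hp, coeff_sum]
    apply Finset.sum_eq_zero
    intro v hv
    rw [coeff_monomial, if_neg (h v hv)]
  -- the two index sets
  set posSet : Finset (Fin m → ℕ) := Box.filter (fun v => ∀ i, s i ∣ v i) with hposSet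
  set negSet : Finset (Fin m → ℕ) :=
    (Fintype.piFinset (fun i => Finset.range (s i * U))).filter
      (fun v => ¬ ∀ i, s i ∣ v i) with hnegSet
  have hsmallBox : ∀ v, (∀ i, v i < s i * U) → v ∈ Box := by
    intro v hv
    rw [hBox, Fintype.mem_piFinset]
    intro i
    rw [Finset.mem_range, hL]
    have h1 : s i * U ≤ s i * (U + d) := Nat.mul_le_mul_left _ (by omega)
    exact lt_of_lt_of_le (hv i) h1
  have hcpos : ∀ v ∈ posSet, c v = V := by
    intro v hv
    rw [hposSet, Finset.mem_filter] at hv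
    simp only [hc]
    exact if_pos hv.2
  have hcneg : ∀ v ∈ negSet, c v = -1 := by
    intro v hv
    rw [hnegSet, Finset.mem_filter, Fintype.mem_piFinset] at hv
    simp only [hc]
    rw [if_neg hv.2, if_pos]
    intro i
    have := hv.1 i
    rwa [Finset.mem_range] at this
  have hnegBox : negSet ⊆ Box := by
    intro v hv
    rw [hnegSet, Finset.mem_filter, Fintype.mem_piFinset] at hv
    exact hsmallBox v (fun i => Finset.mem_range.mp (hv.1 i))
  -- filter characterizations
  have hposfilter : p.support.filter (fun mu => 0 < p.coeff mu) = posSet.image (embF D) := by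
    ext mu
    simp only [Finset.mem_filter, mem_support_iff, Finset.mem_image]
    constructor
    · rintro ⟨hne, hpos⟩
      obtain ⟨w, hwB, hwe⟩ := hcoeff0 mu hne
      refine ⟨w, ?_, hwe⟩
      rw [hposSet, Finset.mem_filter]
      refine ⟨hwB, ?_⟩
      by_contra hdvd
      have hcw : p.coeff mu = c w := by rw [← hwe, hcoeff w hwB]
      rw [hcw] at hpos
      simp only [hc, if_neg hdvd] at hpos
      split at hpos <;> linarith
    · rintro ⟨w, hwP, rfl⟩
      have hwB : w ∈ Box := (Finset.mem_filter.mp hwP).1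
      rw [hcoeff w hwB, hcpos w hwP]
      exact ⟨ne_of_gt hVpos, hVpos⟩
  have hnegfilter : p.support.filter (fun mu => p.coeff mu < 0) = negSet.image (embF D) := by
    ext mu
    simp only [Finset.mem_filter, mem_support_iff, Finset.mem_image]
    constructor
    · rintro ⟨hne, hneg⟩
      obtain ⟨w, hwB, hwe⟩ := hcoeff0 mu hne
      have hcw : p.coeff mu = c w := by rw [← hwe, hcoeff w hwB]
      refine ⟨w, ?_, hwe⟩
      rw [hnegSet, Finset.mem_filter, Fintype.mem_piFinset]
      rw [hcw] at hneg
      simp only [hc] at hneg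
      by_cases hdvd : ∀ i, s i ∣ w i
      · rw [if_pos hdvd] at hneg; linarith
      · rw [if_neg hdvd] at hneg
        by_cases hsm : ∀ i, w i < s i * U
        · exact ⟨fun i => Finset.mem_range.mpr (hsm i), hdvd⟩
        · rw [if_neg hsm] at hneg; linarith
    · rintro ⟨w, hwN, rfl⟩
      rw [hcoeff w (hnegBox hwN), hcneg w hwN]
      norm_num
  -- cardinalities
  have hposcard : posSet.card = (U + d)^m := by
    rw [hposSet, hBox, piFinset_filter_forall, Fintype.card_piFinset]
    have : ∀ i : Fin m, ((Finset.range (L i)).filter (fun x => s i ∣ x)).card = U + d := by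
      intro i
      rw [hL]
      exact card_multiples (s i) (U + d) (hs1 i)
    rw [Finset.prod_congr rfl (fun i _ => this i)]
    simp [Finset.card_univ]
  have hnegcard : negSet.card = (∏ i, s i) * U^m - U^m := by
    have htot := Finset.card_filter_add_card_filter_not
      (s := Fintype.piFinset (fun i => Finset.range (s i * U)))
      (p := fun v => ∀ i, s i ∣ v i)
    have hdvdcard : ((Fintype.piFinset (fun i => Finset.range (s i * U))).filter
        (fun v => ∀ i, s i ∣ v i)).card = U^m := by
      rw [piFinset_filter_forall, Fintype.card_piFinset]
      have : ∀ i : Fin m, ((Finset.range (s i * U)).filter (fun x => s i ∣ x)).card = U := by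
        intro i
        exact card_multiples (s i) U (hs1 i)
      rw [Finset.prod_congr rfl (fun i _ => this i)]
      simp [Finset.card_univ]
    have hallcard : (Fintype.piFinset (fun i => Finset.range (s i * U))).card
        = (∏ i, s i) * U^m := by
      rw [Fintype.card_piFinset]
      simp only [Finset.card_range]
      rw [Finset.prod_mul_distrib]
      simp [Finset.card_univ]
    rw [hdvdcard, hallcard] at htot
    rw [hnegSet]
    rw [add_comm] at htot
    exact eq_tsub_of_add_eq htot
  refine ⟨p, ?_, ?_, ?_⟩
  · -- nonnegativity
    intro mu
    have hlf : (∑ i : Fin (m+1), (X i : MvPolynomial (Fin (m+1)) ℝ)) = lf m := rfl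
    rw [hlf, coeff_mul]
    by_cases hall : ∀ x ∈ Finset.HasAntidiagonal.antidiagonal mu, 0 ≤ p.coeff x.1 * ((lf m)^d).coeff x.2
    · exact Finset.sum_nonneg hall
    push_neg at hall
    obtain ⟨x0, hx0mem, hx0⟩ := hall
    have he2 : 0 < ((lf m)^d).coeff x0.2 := by
      rcases (lfpow_coeff_nonneg d x0.2).lt_or_eq with h | h
      · exact h
      · exfalso; rw [← h, mul_zero] at hx0; exact lt_irrefl 0 hx0
    have hp1 : p.coeff x0.1 < 0 := by
      by_contra h
      push_neg at h
      exact absurd (mul_nonneg h (le_of_lt he2)) (not_le.mpr hx0)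
    obtain ⟨w, hwBox, hwemb⟩ := hcoeff0 x0.1 (ne_of_lt hp1)
    have hcw : p.coeff x0.1 = c w := by rw [← hwemb, hcoeff w hwBox]
    have hsmall : ∀ i, w i < s i * U := by
      by_contra hno
      rw [hcw] at hp1
      simp only [hc] at hp1
      by_cases hdvd : ∀ i, s i ∣ w i
      · rw [if_pos hdvd] at hp1; linarith
      · rw [if_neg hdvd, if_neg hno] at hp1; linarith
    have hsumb : ∑ j, x0.2 j = d := lfpow_coeff_ne_zero (ne_of_gt he2)
    have hadd : x0.1 + x0.2 = mu := Finset.HasAntidiagonal.mem_antidiagonal.mp hx0mem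
    -- the covering positive point
    set b : Fin (m+1) →₀ ℕ := x0.2 with hb
    set xf : Fin m → ℕ := fun i => w i + b (Fin.castSucc i) with hxf
    set vst : Fin m → ℕ := fun i => s i * (xf i / s i) with hvst
    have hdm : ∀ i, vst i + xf i % s i = xf i := by
      intro i
      rw [hvst]
      exact Nat.div_add_mod (xf i) (s i)
    have hmodlt : ∀ i, xf i % s i ≤ s i - 1 := by
      intro i
      have := Nat.mod_lt (xf i) (lt_of_lt_of_le Nat.zero_lt_one (hs1 i))
      omega
    have hble : ∀ j, b j ≤ d := by
      intro j
      rw [← hsumb]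
      exact Finset.single_le_sum (fun i _ => Nat.zero_le _) (mem_univ j)
    have hvstBox : vst ∈ Box := by
      rw [hBox, Fintype.mem_piFinset]
      intro i
      simp only [Finset.mem_range, hL]
      have h1 : vst i ≤ xf i := by have := hdm i; omega
      have h2 : xf i ≤ s i * U - 1 + d := by
        simp only [hxf]
        have := hsmall i
        have := hble (Fin.castSucc i)
        omega
      have h3 : d ≤ s i * d := Nat.le_mul_of_pos_left d (hs1 i)
      have h4 : s i * (U + d) = s i * U + s i * d := by ring
      have h5 : 1 ≤ s i * U := Nat.mul_pos (hs1 i) hU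
      omega
    have hvstdvd : ∀ i, s i ∣ vst i := fun i => Dvd.intro _ rfl
    -- sum bounds
    have hwD : ∑ i, w i ≤ D := hBoxSum w hwBox
    have hvstD : ∑ i, vst i ≤ D := hBoxSum vst hvstBox
    have hbsplit : ∑ j, b j = ∑ i : Fin m, b (Fin.castSucc i) + b (Fin.last m) :=
      Fin.sum_univ_castSucc (f := fun j => b j)
    have hsum_eq : ∑ i, vst i + ∑ i, (xf i % s i) = ∑ i, w i + ∑ i : Fin m, b (Fin.castSucc i) := by
      rw [← Finset.sum_add_distrib, ← Finset.sum_add_distrib]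
      apply Finset.sum_congr rfl
      intro i _
      rw [hdm i]
    have hmodsum : ∑ i, (xf i % s i) ≤ d := by
      calc ∑ i, (xf i % s i) ≤ ∑ i, (s i - 1) := Finset.sum_le_sum (fun i _ => hmodlt i)
        _ ≤ d := hsum
    have hkey : ∑ i, w i ≤ ∑ i, vst i + b (Fin.last m) := by omega
    -- the Finsupp inequality
    have hmu_apply : ∀ j, mu j = embF D w j + b j := by
      intro j
      rw [← hadd, ← hwemb]
      rfl
    have hle : embF D vst ≤ mu := by
      rw [Finsupp.le_def]
      intro j
      induction j using Fin.lastCases with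
      | last =>
        rw [hmu_apply, embF_last, embF_last]
        omega
      | cast i =>
        rw [hmu_apply, embF_castSucc, embF_castSucc]
        have hx1 := hdm i
        have hx2 : vst i ≤ xf i := by omega
        simp only [hxf] at hx2
        omega
    set bst : Fin (m+1) →₀ ℕ := mu - embF D vst with hbst
    have haddst : embF D vst + bst = mu := by
      rw [hbst]
      exact add_tsub_cancel_of_le hle
    have hxstmem : ((embF D vst, bst) : (Fin (m+1) →₀ ℕ) × (Fin (m+1) →₀ ℕ))
        ∈ Finset.HasAntidiagonal.antidiagonal mu := by
      rw [Finset.HasAntidiagonal.mem_antidiagonal]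
      exact haddst
    have hsum_mu : ∑ j, mu j = D + d := by
      calc ∑ j, mu j = ∑ j, (embF D w j + b j) := Finset.sum_congr rfl (fun j _ => hmu_apply j)
        _ = ∑ j, embF D w j + ∑ j, b j := Finset.sum_add_distrib
        _ = D + d := by rw [embF_sum D w hwD, hsumb]
    have hsumbst : ∑ j, bst j = d := by
      have h1 : ∑ j, embF D vst j + ∑ j, bst j = ∑ j, mu j := by
        rw [← Finset.sum_add_distrib]
        apply Finset.sum_congr rfl
        intro j _
        rw [← Finsupp.add_apply, haddst]
      rw [embF_sum D vst hvstD, hsum_mu] at h1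
      omega
    have hebst : (1:ℝ) ≤ ((lf m)^d).coeff bst := lfpow_coeff_one_le hsumbst
    have hcvst : p.coeff (embF D vst) = V := by
      rw [hcoeff vst hvstBox]
      simp only [hc]
      exact if_pos hvstdvd
    have hpm1 : ∀ a, (-1:ℝ) ≤ p.coeff a := by
      intro a
      by_cases h0 : p.coeff a = 0
      · rw [h0]; norm_num
      · obtain ⟨w', hw'B, hw'e⟩ := hcoeff0 a h0
        rw [← hw'e, hcoeff w' hw'B]
        simp only [hc]
        split
        · linarith
        · split
          · exact le_refl _
          · norm_num
    rw [← Finset.add_sum_erase _ _ hxstmem]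
    have h1 : V ≤ p.coeff (embF D vst) * ((lf m)^d).coeff bst := by
      rw [hcvst]
      nlinarith [hVpos, hebst]
    have h2 : ∀ x ∈ (Finset.HasAntidiagonal.antidiagonal mu).erase (embF D vst, bst),
        -(((lf m)^d).coeff x.2) ≤ p.coeff x.1 * ((lf m)^d).coeff x.2 := by
      intro x hx
      have hmul := mul_le_mul_of_nonneg_right (hpm1 x.1) (lfpow_coeff_nonneg d x.2)
      linarith [hmul]
    have h3 : ∑ x ∈ (Finset.HasAntidiagonal.antidiagonal mu).erase (embF D vst, bst), (-(((lf m)^d).coeff x.2))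
        ≤ ∑ x ∈ (Finset.HasAntidiagonal.antidiagonal mu).erase (embF D vst, bst),
            p.coeff x.1 * ((lf m)^d).coeff x.2 :=
      Finset.sum_le_sum h2
    have h4 : ∑ x ∈ (Finset.HasAntidiagonal.antidiagonal mu).erase (embF D vst, bst), ((lf m)^d).coeff x.2
        ≤ ∑ x ∈ Finset.HasAntidiagonal.antidiagonal mu, ((lf m)^d).coeff x.2 :=
      Finset.sum_le_sum_of_subset_of_nonneg (Finset.erase_subset _ _)
        (fun x _ _ => lfpow_coeff_nonneg d x.2)
    have h5 := lfpow_total (m := m) d mu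
    have h6 : -∑ x ∈ (Finset.HasAntidiagonal.antidiagonal mu).erase (embF D vst, bst), ((lf m)^d).coeff x.2
        = ∑ x ∈ (Finset.HasAntidiagonal.antidiagonal mu).erase (embF D vst, bst), (-(((lf m)^d).coeff x.2)) := by
      rw [Finset.sum_neg_distrib]
    have hVd : V = ((m:ℝ)+1)^d := hV
    linarith
  · rw [hposfilter, Finset.card_image_of_injective _ (embF_inj D), hposcard]
  · rw [hnegfilter, Finset.card_image_of_injective _ (embF_inj D), hnegcard]


lemma pow_add_le_two_mul (M U d : ℕ) (hM : 1 ≤ M) (hd : 1 ≤ d) (hU : 2 * M * d ≤ U) :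
    ((U:ℝ) + d)^M ≤ 2 * (U:ℝ)^M := by
  have hU0 : 0 < U := by
    have : 2 * M * d ≥ 2 := by nlinarith
    omega
  have hUr : (0:ℝ) < U := by exact_mod_cast hU0
  set x : ℝ := (d:ℝ)/(U:ℝ) with hx
  have hx0 : 0 ≤ x := by positivity
  have hMx : (M:ℝ) * x ≤ 1/2 := by
    rw [hx, mul_div_assoc']
    rw [div_le_div_iff₀ hUr (by norm_num : (0:ℝ) < 2)]
    have : ((2 * M * d : ℕ) : ℝ) ≤ (U:ℕ) := by exact_mod_cast hU
    push_cast at this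
    nlinarith
  have hx1 : x ≤ 1/2 := by
    have hMx' : x ≤ (M:ℝ) * x := by
      nlinarith [hx0, (by exact_mod_cast hM : (1:ℝ) ≤ (M:ℝ))]
    linarith
  have hbern : 1 - (M:ℝ) * x ≤ (1 - x)^M := by
    have := one_add_mul_le_pow (a := -x) (by linarith) M
    rw [← sub_eq_add_neg] at this
    linarith
  have hhalf : (1:ℝ)/2 ≤ (1 - x)^M := by linarith
  have hprod : (1+x)^M * (1-x)^M ≤ 1 := by
    rw [← mul_pow]
    have h1 : (1+x) * (1-x) = 1 - x^2 := by ring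
    rw [h1]
    apply pow_le_one₀ <;> nlinarith
  have htwo : (1+x)^M ≤ 2 := by
    nlinarith [pow_nonneg hx0 M, pow_nonneg (by linarith : (0:ℝ) ≤ 1 + x) M]
  have hUx : (U:ℝ) + d = U * (1 + x) := by
    rw [hx, mul_add, mul_one, mul_div_assoc', mul_div_cancel_left₀ _ (ne_of_gt hUr)]
  rw [hUx, mul_pow]
  have hUM : (0:ℝ) ≤ (U:ℝ)^M := by positivity
  nlinarith [htwo, hUM]

theorem stmt17 (n d : ℕ) (hn : 2 ≤ n) (hd : 1 ≤ d) :
    ∃ p : MvPolynomial (Fin n) ℝ,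
      (∀ m : Fin n →₀ ℕ, 0 ≤ (p * (∑ i, X i) ^ d).coeff m) ∧
      ((d : ℝ) ^ (n - 1) / 2 ^ (n * (n - 1) / 2)) ≤
        ((p.support.filter fun m => p.coeff m < 0).card : ℝ) /
          ((p.support.filter fun m => 0 < p.coeff m).card : ℝ) := by
  obtain ⟨m, rfl⟩ : ∃ m, n = m + 1 := ⟨n - 1, by omega⟩
  have hm : 1 ≤ m := by omega
  set U : ℕ := 2 * m * d ^ 2 with hUdef
  have hd2 : 1 ≤ d ^ 2 := Nat.one_le_pow _ _ hd
  have hU1 : 1 ≤ U := by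
    have h2 : 1 * 1 ≤ (2 * m) * d ^ 2 := Nat.mul_le_mul (by omega) hd2
    calc 1 = 1 * 1 := (one_mul 1).symm
      _ ≤ 2 * m * d ^ 2 := h2
  have hUd : 2 * m * d ≤ U := by
    rw [hUdef]
    have : d ≤ d ^ 2 := by nlinarith
    nlinarith
  have hUposN : 0 < (U + d)^m := pow_pos (by omega) m
  have hUpos : (0:ℝ) < (((U + d)^m : ℕ) : ℝ) := by exact_mod_cast hUposN
  have h2pos : (0:ℝ) < (2:ℝ)^((m+1) * m / 2) := by positivity
  -- case split
  by_cases hcase : 2 * d ^ (m - 1) ≤ 2 ^ ((m+1) * m / 2)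
  · -- sparse construction s = (d+1, 1, ..., 1)
    set s : Fin m → ℕ := fun i => if i = ⟨0, by omega⟩ then d + 1 else 1 with hs
    have hs1 : ∀ i, 1 ≤ s i := by
      intro i
      simp only [hs]
      split <;> omega
    have hsum : ∑ i, (s i - 1) ≤ d := by
      have h1 : ∀ i : Fin m, s i - 1 = if i = ⟨0, by omega⟩ then d else 0 := by
        intro i
        simp only [hs]
        split <;> omega
      rw [Finset.sum_congr rfl (fun i _ => h1 i), Finset.sum_ite_eq' univ _ (fun _ => d)]
      simp
    have hprod : ∏ i, s i = d + 1 := by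
      simp only [hs]
      rw [Finset.prod_ite_eq' univ _ (fun _ => d + 1)]
      simp
    obtain ⟨p, hnn, hpos, hneg⟩ := key m d U hm hd hU1 s hs1 hsum
    refine ⟨p, hnn, ?_⟩
    simp only [Nat.add_sub_cancel]
    rw [hpos, hneg, hprod]
    have hnegN : (d + 1) * U ^ m - U ^ m = d * U ^ m := by
      have h9 : (d+1) * U^m = d * U^m + U^m := by ring
      omega
    rw [hnegN]
    rw [div_le_div_iff₀ h2pos hUpos]
    -- goal : d^m * (U+d)^m ≤ d*U^m * 2^((m+1) * m / 2) (reals with casts)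
    push_cast
    have hbin : ((U:ℝ) + d)^m ≤ 2 * (U:ℝ)^m := pow_add_le_two_mul m U d hm hd hUd
    have hcaseR : 2 * (d:ℝ) ^ (m-1) ≤ 2 ^ ((m+1) * m / 2) := by exact_mod_cast hcase
    have hdm : (d:ℝ)^m = (d:ℝ)^(m-1) * d := by
      rw [← pow_succ]
      congr 1
      omega
    have hd0 : (0:ℝ) ≤ d := by positivity
    have hdm0 : (0:ℝ) ≤ (d:ℝ)^m := by positivity
    have hdm10 : (0:ℝ) ≤ (d:ℝ)^(m-1) := by positivity
    have hU0 : (0:ℝ) ≤ (U:ℝ)^m := by positivity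
    calc (d:ℝ)^m * ((U:ℝ) + d)^m ≤ (d:ℝ)^m * (2 * (U:ℝ)^m) :=
          mul_le_mul_of_nonneg_left hbin hdm0
      _ = (2 * (d:ℝ)^(m-1)) * ((d:ℝ) * (U:ℝ)^m) := by rw [hdm]; ring
      _ ≤ 2^((m+1) * m / 2) * ((d:ℝ) * (U:ℝ)^m) := by
          apply mul_le_mul_of_nonneg_right hcaseR
          positivity
      _ = (d:ℝ) * (U:ℝ)^m * 2^((m+1) * m / 2) := by ring
  · -- balanced construction
    push_neg at hcase
    have hmd : m ≤ d := by
      by_contra hno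
      push_neg at hno
      have h1 : d ^ (m-1) ≤ m ^ m := by
        calc d ^ (m-1) ≤ m ^ (m-1) := Nat.pow_le_pow_left (by omega) _
          _ ≤ m ^ m := Nat.pow_le_pow_right (by omega) (by omega)
      have h2 : 2 * d ^ (m-1) ≤ 2 * m ^ m := Nat.mul_le_mul (le_refl 2) h1
      have h3 := two_mul_pow_le m hm
      exact absurd (lt_of_lt_of_le (lt_of_lt_of_le hcase h2) h3) (lt_irrefl _)
    set q : ℕ := d / m with hq
    have hq1 : 1 ≤ q := (Nat.one_le_div_iff (by omega)).mpr hmd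
    set s : Fin m → ℕ := fun _ => q + 1 with hs
    have hs1 : ∀ i, 1 ≤ s i := fun i => by simp only [hs]; omega
    have hsum : ∑ i, (s i - 1) ≤ d := by
      simp only [hs]
      simp only [Nat.add_sub_cancel]
      rw [Finset.sum_const, Finset.card_univ, Fintype.card_fin, smul_eq_mul]
      calc m * q = q * m := Nat.mul_comm m q
        _ ≤ d := Nat.div_mul_le_self d m
    have hprod : ∏ i, s i = (q+1)^m := by
      simp only [hs]
      rw [Finset.prod_const, Finset.card_univ, Fintype.card_fin]
    obtain ⟨p, hnn, hpos, hneg⟩ := key m d U hm hd hU1 s hs1 hsum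
    refine ⟨p, hnn, ?_⟩
    simp only [Nat.add_sub_cancel]
    rw [hpos, hneg, hprod]
    have hq2 : 2 ≤ (q+1)^m := by
      calc (2:ℕ) = 2^1 := (pow_one 2).symm
        _ ≤ 2^m := Nat.pow_le_pow_right (by omega) hm
        _ ≤ (q+1)^m := Nat.pow_le_pow_left (by omega) m
    -- main ℕ inequality
    have hmain : d^m * (U+d)^m ≤ 2^((m+1) * m / 2) * ((q+1)^m * U^m - U^m) := by
      have h1 : d^m * (U+d)^m = (d*U + d*d)^m := by
        rw [← mul_pow]
        congr 1
        ring
      have h2 : d * d ≤ U := by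
        rw [hUdef]
        nlinarith
      have h3 : (d*U + d*d)^m ≤ ((d+1)*U)^m := by
        apply Nat.pow_le_pow_left
        have : (d+1)*U = d*U + U := by ring
        omega
      have h4 : (d+1) ≤ m*(q+1) := by
        have hdm := Nat.div_add_mod d m
        rw [← hq] at hdm
        have hmod : d % m < m := Nat.mod_lt d (by omega)
        have : m * (q+1) = m * q + m := by ring
        omega
      have h5 : ((d+1)*U)^m ≤ (m*(q+1))^m * U^m := by
        rw [← mul_pow]
        apply Nat.pow_le_pow_left
        exact Nat.mul_le_mul_right U h4
      have h6 : (m*(q+1))^m = m^m * (q+1)^m := mul_pow m (q+1) m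
      have h7 : (q+1)^m ≤ 2 * ((q+1)^m - 1) := by omega
      have h8 := two_mul_pow_le m hm
      calc d^m * (U+d)^m = (d*U + d*d)^m := h1
        _ ≤ ((d+1)*U)^m := h3
        _ ≤ (m*(q+1))^m * U^m := h5
        _ = m^m * ((q+1)^m * U^m) := by rw [h6]; ring
        _ ≤ m^m * ((2 * ((q+1)^m - 1)) * U^m) := by
            apply Nat.mul_le_mul_left
            exact Nat.mul_le_mul_right _ h7
        _ = (2 * m^m) * (((q+1)^m - 1) * U^m) := by ring
        _ ≤ 2^((m+1) * m / 2) * (((q+1)^m - 1) * U^m) := Nat.mul_le_mul_right _ h8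
        _ = 2^((m+1) * m / 2) * ((q+1)^m * U^m - U^m) := by
            congr 1
            rw [Nat.sub_mul, one_mul]
    rw [div_le_div_iff₀ h2pos hUpos]
    have hcast : (((q+1)^m * U^m - U^m : ℕ) : ℝ) * (2:ℝ)^((m+1) * m / 2) ≥ (d:ℝ)^m * (((U + d)^m : ℕ) : ℝ) := by
      have := hmain
      have hR : ((d^m * (U+d)^m : ℕ) : ℝ) ≤ ((2^((m+1) * m / 2) * ((q+1)^m * U^m - U^m) : ℕ) : ℝ) := by
        exact_mod_cast this
      push_cast [Nat.cast_sub (by nlinarith [hq2, Nat.one_le_pow m U (by omega)] :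
        U^m ≤ (q+1)^m * U^m)] at hR ⊢
      nlinarith [hR]
    linarith [hcast]
end Key
end

section
/- Let q_k(x) = x₁^k + x₂^k + x₂^{k−1}x₃ + ⋯ + x₂^{k−1}xₙ − ε x₁x₂^{k−1} in n ≥ 2 variables. For every d < k − 1 and every ε > 0, the polynomial q_k·(x₁+⋯+xₙ)^d has a negative coefficient (namely that of x₁^{d+1}x₂^{k−1}). -/
open MvPolynomial

lemma aux_sum_pow (n : ℕ) (j : Fin n) (d : ℕ) :
    coeff (Finsupp.single j d) ((∑ i : Fin n, X i) ^ d : MvPolynomial (Fin n) ℝ) = 1 := by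
  induction d with
  | zero => simp
  | succ d ih =>
    rw [pow_succ, Finset.mul_sum, coeff_sum]
    rw [Finset.sum_eq_single j]
    · rw [coeff_mul_X']
      have hsupp : j ∈ (Finsupp.single j (d + 1)).support := by
        simp [Finsupp.mem_support_iff]
      rw [if_pos hsupp]
      have : Finsupp.single j (d + 1) - Finsupp.single j 1 = Finsupp.single j d := by
        ext t
        simp [Finsupp.single_apply]
      rw [this, ih]
    · intro b _ hb
      rw [coeff_mul_X', if_neg]
      simp [Finsupp.mem_support_iff, Finsupp.single_apply, hb, Ne.symm hb]
    · simp

lemma aux_pow_mul_zero {n : ℕ} (s : Fin n) (c : ℕ) (m : Fin n →₀ ℕ)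
    (p : MvPolynomial (Fin n) ℝ) (h : m s < c) :
    coeff m (X s ^ c * p) = 0 := by
  rw [X_pow_eq_monomial, coeff_monomial_mul', if_neg]
  intro hle
  have := hle s
  simp [Finsupp.single_apply] at this
  omega

theorem stmt19 (n k d : ℕ) (hn : 2 ≤ n) (hd : d < k - 1) (hk : 2 ≤ k)
    (ε : ℝ) (hε : 0 < ε)
    (q : MvPolynomial (Fin n) ℝ)
    (hq : q = X (⟨0, by omega⟩ : Fin n) ^ k + X (⟨1, by omega⟩ : Fin n) ^ k +
      (∑ i ∈ Finset.univ.filter fun i : Fin n => 2 ≤ (i : ℕ),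
        X (⟨1, by omega⟩ : Fin n) ^ (k - 1) * X i) -
      C ε * X (⟨0, by omega⟩ : Fin n) * X (⟨1, by omega⟩ : Fin n) ^ (k - 1)) :
    (q * (∑ i, X i) ^ d).coeff
      (Finsupp.single (⟨0, by omega⟩ : Fin n) (d + 1) +
        Finsupp.single (⟨1, by omega⟩ : Fin n) (k - 1)) < 0 := by
  subst hq
  set i0 : Fin n := ⟨0, by omega⟩ with hi0
  set i1 : Fin n := ⟨1, by omega⟩ with hi1
  have hne : i0 ≠ i1 := by simp [hi0, hi1, Fin.ext_iff]
  set L : MvPolynomial (Fin n) ℝ := ∑ i, X i with hL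
  set m : Fin n →₀ ℕ := Finsupp.single i0 (d + 1) + Finsupp.single i1 (k - 1) with hm
  have hm0 : m i0 = d + 1 := by
    simp [hm, Finsupp.single_apply, hne, hne.symm]
  have hm1 : m i1 = k - 1 := by
    simp [hm, Finsupp.single_apply, hne, hne.symm]
  rw [sub_mul, add_mul, add_mul, Finset.sum_mul, coeff_sub, coeff_add, coeff_add, coeff_sum]
  have h1 : coeff m (X i0 ^ k * L ^ d) = 0 := aux_pow_mul_zero _ _ _ _ (by omega)
  have h2 : coeff m (X i1 ^ k * L ^ d) = 0 := aux_pow_mul_zero _ _ _ _ (by omega)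
  have h3 : ∀ i ∈ Finset.univ.filter fun i : Fin n => 2 ≤ (i : ℕ),
      coeff m (X i1 ^ (k - 1) * X i * L ^ d) = 0 := by
    intro i hi
    simp only [Finset.mem_filter] at hi
    have hmi : m i = 0 := by
      have h0 : i ≠ i0 := by simp [hi0, Fin.ext_iff]; omega
      have h1' : i ≠ i1 := by simp [hi1, Fin.ext_iff]; omega
      simp [hm, Finsupp.single_apply, Ne.symm h0, Ne.symm h1']
    have : X i1 ^ (k - 1) * X i * L ^ d = X i ^ 1 * (X i1 ^ (k - 1) * L ^ d) := by ring
    rw [this]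
    exact aux_pow_mul_zero _ _ _ _ (by omega)
  rw [Finset.sum_eq_zero h3, h1, h2]
  have h4 : coeff m (C ε * X i0 * X i1 ^ (k - 1) * L ^ d) = ε := by
    have he : C ε * X i0 * X i1 ^ (k - 1) * L ^ d
        = C ε * (X i0 * (X i1 ^ (k - 1) * L ^ d)) := by ring
    have hme : m = Finsupp.single i0 1 + (Finsupp.single i1 (k - 1) + Finsupp.single i0 d) := by
      ext t
      simp [hm, Finsupp.single_apply]
      split <;> split <;> omega
    rw [he, hme, coeff_C_mul, coeff_X_mul, X_pow_eq_monomial, coeff_monomial_mul,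
      aux_sum_pow]
    ring
  rw [h4]
  linarith
end
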